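/- arXiv:1503.02298 — 3 statements merged into one kernel-verified Lean document; each statement's English description precedes it below -/
import Mathlib

section
/- For every odd integer p ≥ 5, the biladder on 2p vertices topologically contains the Petersen graph. -/
open SimpleGraph

/-- A graph has a circuit if it contains a cycle. -/
def HasCircuit {V : Type} (G : SimpleGraph V) : Prop :=
  ∃ (v : V) (w : G.Walk v v), w.IsCycle

/-- `s` is the vertex set of a quadrangle (circuit of length four) of `G`. -/
def IsQuadSet {V : Type} (G : SimpleGraph V) (s : Set V) : Prop :=
  ∃ a b c d : V, s = {a, b, c, d} ∧ a ≠ b ∧ a ≠ c ∧ a ≠ d ∧ b ≠ c ∧ b ≠ d ∧ c ≠ d ∧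
    G.Adj a b ∧ G.Adj b c ∧ G.Adj c d ∧ G.Adj d a

def HasQuadrangle {V : Type} (G : SimpleGraph V) : Prop := ∃ s, IsQuadSet G s

def AtMostOneQuadrangle {V : Type} (G : SimpleGraph V) : Prop :=
  ∀ s t, IsQuadSet G s → IsQuadSet G t → s = t

/-- The edge cut `δA`: edges with one end in `A` and the other outside. -/
def cutEdges {V : Type} (G : SimpleGraph V) (A : Set V) : Set (Sym2 V) :=
  {e | ∃ a b, a ∈ A ∧ b ∉ A ∧ G.Adj a b ∧ e = s(a, b)}

/-- `G` is `k`-connected: more than `k` vertices and removing fewer than `k`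
vertices leaves a connected graph. -/
def IsKConnected {V : Type} [Fintype V] (G : SimpleGraph V) (k : ℕ) : Prop :=
  k < Fintype.card V ∧ ∀ S : Set V, S.ncard < k → (G.induce Sᶜ).Connected

/-- Every vertex has degree three. -/
def IsCubic {V : Type} (G : SimpleGraph V) : Prop :=
  ∀ v : V, (G.neighborSet v).ncard = 3

/-- Cyclically `k`-connected cubic graph: 3-connected, at least `2k` vertices, and
every edge-cut of cardinality less than `k` has a circuit-free side. -/
def CyclicallyKConnected {V : Type} [Fintype V] (G : SimpleGraph V) (k : ℕ) : Prop :=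
  IsKConnected G 3 ∧ 2 * k ≤ Fintype.card V ∧
    ∀ A : Set V, A.Nonempty → Aᶜ.Nonempty → (cutEdges G A).ncard < k →
      ¬ HasCircuit (G.induce A) ∨ ¬ HasCircuit (G.induce Aᶜ)

/-- The induced subgraph on `A` is (exactly) a quadrangle. -/
def IsQuadrangleGraphOn {V : Type} (G : SimpleGraph V) (A : Set V) : Prop :=
  ∃ a b c d : V, A = {a, b, c, d} ∧ a ≠ b ∧ a ≠ c ∧ a ≠ d ∧ b ≠ c ∧ b ≠ d ∧ c ≠ d ∧
    G.Adj a b ∧ G.Adj b c ∧ G.Adj c d ∧ G.Adj d a ∧ ¬ G.Adj a c ∧ ¬ G.Adj b d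

/-- Quad-connected cubic graph. -/
def QuadConnected {V : Type} [Fintype V] (G : SimpleGraph V) : Prop :=
  CyclicallyKConnected G 4 ∧ 10 ≤ Fintype.card V ∧
    ((∃ s t, IsQuadSet G s ∧ IsQuadSet G t ∧ s ≠ t) → 12 ≤ Fintype.card V) ∧
    ∀ A : Set V, A.Nonempty → Aᶜ.Nonempty → (cutEdges G A).ncard ≤ 4 →
      (¬ HasCircuit (G.induce A) ∨ IsQuadrangleGraphOn G A) ∨
      (¬ HasCircuit (G.induce Aᶜ) ∨ IsQuadrangleGraphOn G Aᶜ)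

/-- `G+(u,v,x,y)`: subdivide the edges `uv` and `xy` (new vertices `Sum.inr 0`
resp. `Sum.inr 1`) and join the two new vertices by an edge. -/
def onePlus {V : Type} (G : SimpleGraph V) (u v x y : V) : SimpleGraph (V ⊕ Fin 2) :=
  SimpleGraph.fromRel (fun a b =>
    match a, b with
    | Sum.inl a, Sum.inl b => G.Adj a b ∧ s(a, b) ≠ s(u, v) ∧ s(a, b) ≠ s(x, y)
    | Sum.inl a, Sum.inr i => (i = 0 ∧ (a = u ∨ a = v)) ∨ (i = 1 ∧ (a = x ∨ a = y))
    | Sum.inr _, Sum.inl _ => False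
    | Sum.inr i, Sum.inr j => i ≠ j)

/-- The data of a 1-extension `G+(u,v,x,y)`: `uv`, `xy` are edges and
`u,v,x,y` are pairwise distinct. -/
def OneExtData {V : Type} (G : SimpleGraph V) (u v x y : V) : Prop :=
  G.Adj u v ∧ G.Adj x y ∧ u ≠ x ∧ u ≠ y ∧ v ≠ x ∧ v ≠ y

/-- A long 1-extension: moreover neither `u` nor `v` is adjacent to `x` or `y`. -/
def LongOneExtData {V : Type} (G : SimpleGraph V) (u v x y : V) : Prop :=
  OneExtData G u v x y ∧ ¬ G.Adj u x ∧ ¬ G.Adj u y ∧ ¬ G.Adj v x ∧ ¬ G.Adj v y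

/-- A short 1-extension: a 1-extension that is not long. -/
def ShortOneExtData {V : Type} (G : SimpleGraph V) (u v x y : V) : Prop :=
  OneExtData G u v x y ∧ (G.Adj u x ∨ G.Adj u y ∨ G.Adj v x ∨ G.Adj v y)

/-- A homeomorphic embedding of `G` into `H`. -/
structure HomeoEmb {V W : Type} (G : SimpleGraph V) (H : SimpleGraph W) where
  vmap : V → W
  vinj : Function.Injective vmap
  emap : ∀ ⦃a b : V⦄, G.Adj a b → H.Walk (vmap a) (vmap b)
  emap_path : ∀ ⦃a b : V⦄ (h : G.Adj a b), (emap h).IsPath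
  emap_symm : ∀ ⦃a b : V⦄ (h : G.Adj a b), (emap h.symm).reverse = emap h
  internal : ∀ ⦃a b : V⦄ (h : G.Adj a b) (w : W), w ∈ (emap h).support →
      w ∈ Set.range vmap → w = vmap a ∨ w = vmap b
  edge_disjoint : ∀ ⦃a b c d : V⦄ (h₁ : G.Adj a b) (h₂ : G.Adj c d),
      s(a, b) ≠ s(c, d) → ∀ e, e ∈ (emap h₁).edges → e ∉ (emap h₂).edges
  meet_ends : ∀ ⦃a b c d : V⦄ (h₁ : G.Adj a b) (h₂ : G.Adj c d),
      s(a, b) ≠ s(c, d) → ∀ w, w ∈ (emap h₁).support → w ∈ (emap h₂).support →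
      (w = vmap a ∨ w = vmap b) ∧ (w = vmap c ∨ w = vmap d)

/-- Subdividing the edge `uv` of `G`: the new vertex is `Sum.inr ()`. -/
def subdivideEdge {V : Type} (G : SimpleGraph V) (u v : V) : SimpleGraph (V ⊕ Unit) :=
  SimpleGraph.fromRel (fun a b =>
    match a, b with
    | Sum.inl a, Sum.inl b => G.Adj a b ∧ s(a, b) ≠ s(u, v)
    | Sum.inl a, Sum.inr _ => a = u ∨ a = v
    | _, _ => False)

/-- `S` is obtained from `G` by repeatedly subdividing edges. -/
inductive IsSubdivision {V : Type} (G : SimpleGraph V) : {W : Type} → SimpleGraph W → Prop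
  | refl : IsSubdivision G G
  | step {W : Type} {S : SimpleGraph W} {u v : W} (h : S.Adj u v)
      (hS : IsSubdivision G S) : IsSubdivision G (subdivideEdge S u v)

/-- `H` topologically contains `G`: some graph obtained from `G` by repeatedly
subdividing edges is isomorphic to a subgraph of `H`. -/
def TopContains {W V : Type} (H : SimpleGraph W) (G : SimpleGraph V) : Prop :=
  ∃ (U : Type) (S : SimpleGraph U), IsSubdivision G S ∧
    ∃ f : U → W, Function.Injective f ∧ ∀ a b : U, S.Adj a b → H.Adj (f a) (f b)

/-- The biladder on `2p` vertices; `(false, i)` is `uᵢ` and `(true, i)` is `vᵢ`. -/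
def biladder (p : ℕ) : SimpleGraph (Bool × ZMod p) :=
  SimpleGraph.fromRel (fun a b =>
    (a.1 = false ∧ b.1 = false ∧ b.2 = a.2 + 1) ∨
    (a.1 = true ∧ b.1 = true ∧ b.2 = a.2 + 2) ∨
    (a.1 = false ∧ b.1 = true ∧ a.2 = b.2))

lemma subdivideEdge_adj_inl_inl {V : Type} (G : SimpleGraph V) (u v a b : V) :
    (subdivideEdge G u v).Adj (.inl a) (.inl b) ↔ G.Adj a b ∧ s(a,b) ≠ s(u,v) := by
  rw [subdivideEdge, SimpleGraph.fromRel_adj]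
  constructor
  · rintro ⟨-, h | h⟩
    · exact h
    · obtain ⟨h1, h2⟩ := h
      exact ⟨h1.symm, by rw [Sym2.eq_swap]; exact h2⟩
  · rintro h
    exact ⟨by simpa using h.1.ne, Or.inl h⟩

lemma subdivideEdge_adj_inl_inr {V : Type} (G : SimpleGraph V) (u v a : V) (t : Unit) :
    (subdivideEdge G u v).Adj (.inl a) (.inr t) ↔ a = u ∨ a = v := by
  rw [subdivideEdge, SimpleGraph.fromRel_adj]
  simp

lemma subdivideEdge_adj_inr_inr {V : Type} (G : SimpleGraph V) (u v : V) (s t : Unit) :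
    ¬ (subdivideEdge G u v).Adj (.inr s) (.inr t) := by
  rw [subdivideEdge, SimpleGraph.fromRel_adj]
  simp

lemma cast_ne_cast {p m n : ℕ} (hm : m < p) (hn : n < p) (hmn : m ≠ n) :
    (m : ZMod p) ≠ (n : ZMod p) := by
  intro h
  apply hmn
  have := congrArg ZMod.val h
  rwa [ZMod.val_natCast_of_lt hm, ZMod.val_natCast_of_lt hn] at this

lemma bl_adj_ff {p : ℕ} {m n : ℕ} (h : (n : ZMod p) = (m : ZMod p) + 1)
    (hne : (m : ZMod p) ≠ (n : ZMod p)) :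
    (biladder p).Adj (false, (m : ZMod p)) (false, (n : ZMod p)) := by
  rw [biladder, SimpleGraph.fromRel_adj]
  exact ⟨by simp [hne], Or.inl (Or.inl ⟨rfl, rfl, h⟩)⟩

lemma bl_adj_tt {p : ℕ} {m n : ℕ} (h : (n : ZMod p) = (m : ZMod p) + 2)
    (hne : (m : ZMod p) ≠ (n : ZMod p)) :
    (biladder p).Adj (true, (m : ZMod p)) (true, (n : ZMod p)) := by
  rw [biladder, SimpleGraph.fromRel_adj]
  exact ⟨by simp [hne], Or.inl (Or.inr (Or.inl ⟨rfl, rfl, h⟩))⟩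

lemma bl_adj_rung {p : ℕ} (i : ZMod p) :
    (biladder p).Adj (false, i) (true, i) := by
  rw [biladder, SimpleGraph.fromRel_adj]
  exact ⟨by simp, Or.inl (Or.inr (Or.inr ⟨rfl, rfl, rfl⟩))⟩

instance (p : ℕ) [NeZero p] : DecidableRel (biladder p).Adj := fun a b =>
  decidable_of_iff' _ (SimpleGraph.fromRel_adj _ a b)
lemma step_lemma {V U W : Type} {G : SimpleGraph V} {H : SimpleGraph W}
    {S : SimpleGraph U} (hS : IsSubdivision G S)
    {f : U → W} (hinj : Function.Injective f)
    {a x : U} (hax : S.Adj a x) (s2 s3 : Sym2 U)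
    (hedges : ∀ b c, S.Adj b c → s(b,c) = s(a,x) ∨ s(b,c) = s2 ∨ s(b,c) = s3 ∨ H.Adj (f b) (f c))
    {z : W} (hz : z ∉ Set.range f) (hza : H.Adj (f a) z) :
    IsSubdivision G (subdivideEdge S a x) ∧
    Function.Injective (Sum.elim f (fun _ : Unit => z)) ∧
    (∀ b c, (subdivideEdge S a x).Adj b c →
      s(b,c) = s(Sum.inr (), Sum.inl x) ∨ s(b,c) = s2.map Sum.inl ∨ s(b,c) = s3.map Sum.inl ∨
      H.Adj (Sum.elim f (fun _ => z) b) (Sum.elim f (fun _ => z) c)) := by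
  refine ⟨IsSubdivision.step hax hS, ?_, ?_⟩
  · rintro (b | b) (c | c) h
    · exact congrArg Sum.inl (hinj h)
    · exact absurd ⟨b, h⟩ hz
    · exact absurd ⟨c, h.symm⟩ hz
    · rfl
  · rintro (b | b) (c | c) h
    · rw [subdivideEdge_adj_inl_inl] at h
      rcases hedges b c h.1 with h1 | h1 | h1 | h1
      · exact absurd h1 h.2
      · exact Or.inr (Or.inl (by rw [← h1, Sym2.map_pair_eq]))
      · exact Or.inr (Or.inr (Or.inl (by rw [← h1, Sym2.map_pair_eq])))
      · exact Or.inr (Or.inr (Or.inr h1))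
    · rw [subdivideEdge_adj_inl_inr] at h
      rcases h with rfl | rfl
      · exact Or.inr (Or.inr (Or.inr hza))
      · exact Or.inl (by rw [Sym2.eq_swap])
    · rw [SimpleGraph.adj_comm, subdivideEdge_adj_inl_inr] at h
      rcases h with rfl | rfl
      · exact Or.inr (Or.inr (Or.inr hza.symm))
      · exact Or.inl rfl
    · exact absurd h (subdivideEdge_adj_inr_inr _ _ _ _ _)
lemma bl_adj_ff2 {p : ℕ} (hp : 5 ≤ p) {m n : ℕ} (hm : m < 5) (hn : n < 5) (h : n = m + 1) :
    (biladder p).Adj (false, (m : ZMod p)) (false, (n : ZMod p)) :=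
  bl_adj_ff (by rw [h]; push_cast; ring) (cast_ne_cast (by omega) (by omega) (by omega))

lemma bl_adj_tt2 {p : ℕ} (hp : 5 ≤ p) {m n : ℕ} (hm : m < 5) (hn : n < 5) (h : n = m + 2) :
    (biladder p).Adj (true, (m : ZMod p)) (true, (n : ZMod p)) :=
  bl_adj_tt (by rw [h]; push_cast; ring) (cast_ne_cast (by omega) (by omega) (by omega))

lemma fval {p : ℕ} (c : Bool) (i : ZMod 5) (m : ℕ) (h : i.val = m) :
    ((fun a : Bool × ZMod 5 => (a.1, ((a.2.val : ℕ) : ZMod p))) (c, i)) = (c, (m : ZMod p)) := by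
  subst h; rfl

def BLInv (p j : ℕ) : Prop :=
  ∃ (U : Type) (S : SimpleGraph U) (f : U → Bool × ZMod p) (au ae ao xu xe xo : U),
    IsSubdivision (biladder 5) S ∧ Function.Injective f ∧
    (∀ a, ∃ c m, m ≤ 4 + 2*j ∧ f a = (c, (m : ZMod p))) ∧
    f au = (false, ((4+2*j : ℕ) : ZMod p)) ∧
    f ae = (true, ((4+2*j : ℕ) : ZMod p)) ∧
    f ao = (true, ((3+2*j : ℕ) : ZMod p)) ∧
    f xu = (false, ((0:ℕ) : ZMod p)) ∧ f xe = (true, ((1:ℕ) : ZMod p)) ∧ f xo = (true, ((0:ℕ) : ZMod p)) ∧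
    S.Adj au xu ∧ S.Adj ae xe ∧ S.Adj ao xo ∧
    ∀ a b, S.Adj a b → s(a,b) = s(au,xu) ∨ s(a,b) = s(ae,xe) ∨ s(a,b) = s(ao,xo) ∨
      (biladder p).Adj (f a) (f b)

lemma blinv_zero {p : ℕ} (hp : 5 ≤ p) : BLInv p 0 := by
  refine ⟨Bool × ZMod 5, biladder 5, fun a => (a.1, ((a.2.val : ℕ) : ZMod p)),
    (false,4), (true,4), (true,3), (false,0), (true,1), (true,0),
    IsSubdivision.refl, ?_, ?_, fval _ _ _ (by decide), fval _ _ _ (by decide),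
    fval _ _ _ (by decide), fval _ _ _ (by decide), fval _ _ _ (by decide),
    fval _ _ _ (by decide), by decide, by decide, by decide, ?_⟩
  · rintro ⟨c, i⟩ ⟨d, j⟩ h
    simp only [Prod.mk.injEq] at h
    obtain ⟨rfl, h2⟩ := h
    have : i.val = j.val := by
      have := congrArg ZMod.val h2
      rwa [ZMod.val_natCast_of_lt (lt_of_lt_of_le i.val_lt hp),
        ZMod.val_natCast_of_lt (lt_of_lt_of_le j.val_lt hp)] at this
    have h4 : i = j := ZMod.val_injective 5 this
    rw [h4]
  · intro a
    exact ⟨a.1, a.2.val, by have := a.2.val_lt; omega, rfl⟩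
  · intro a b hab
    revert hab
    obtain ⟨c, i⟩ := a
    obtain ⟨d, j⟩ := b
    cases c <;> cases d <;> fin_cases i <;> fin_cases j <;> intro hab <;>
      first
        | exact absurd hab (by decide)
        | exact Or.inl (by decide)
        | exact Or.inr (Or.inl (by decide))
        | exact Or.inr (Or.inr (Or.inl (by decide)))
        | (refine Or.inr (Or.inr (Or.inr ?_))
           first
             | exact bl_adj_rung _
             | exact (bl_adj_rung _).symm
             | exact bl_adj_ff2 hp (by decide) (by decide) (by decide)
             | exact (bl_adj_ff2 hp (by decide) (by decide) (by decide)).symm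
             | exact bl_adj_tt2 hp (by decide) (by decide) (by decide)
             | exact (bl_adj_tt2 hp (by decide) (by decide) (by decide)).symm)
lemma sym2_ne {α : Type} {a b c d : α} (h1 : a ≠ c) (h2 : a ≠ d) : s(a,b) ≠ s(c,d) := by
  intro h
  rw [Sym2.eq_iff] at h
  rcases h with ⟨rfl, -⟩ | ⟨rfl, -⟩
  · exact h1 rfl
  · exact h2 rfl

lemma not_in_range {p : ℕ} {U : Type} {f : U → Bool × ZMod p} {Bf Bt : ℕ}
    (hrange : ∀ a, ∃ (c : Bool) (m : ℕ), m ≤ (if c then Bt else Bf) ∧ f a = (c, (m : ZMod p)))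
    (c : Bool) (n : ℕ) (hB : (if c then Bt else Bf) < n) (hn : n < p) :
    (c, (n : ZMod p)) ∉ Set.range f := by
  rintro ⟨a, ha⟩
  obtain ⟨c', m, hm, hfa⟩ := hrange a
  rw [hfa] at ha
  obtain ⟨hc, hmn⟩ := Prod.ext_iff.mp ha
  dsimp only at hc hmn
  subst hc
  cases c' <;> simp only [if_true, if_false, Bool.false_eq_true, ite_true, ite_false] at hm hB <;>
    exact cast_ne_cast (by omega) hn (by omega) hmn

lemma bl_adj_ff' {p m n : ℕ} (hm : m < p) (hn : n < p) (h : n = m + 1) :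
    (biladder p).Adj (false,(m:ZMod p)) (false,(n:ZMod p)) :=
  bl_adj_ff (by rw [h]; push_cast; ring) (cast_ne_cast hm hn (by omega))

lemma bl_adj_tt' {p m n : ℕ} (hm : m < p) (hn : n < p) (h : n = m + 2) :
    (biladder p).Adj (true,(m:ZMod p)) (true,(n:ZMod p)) :=
  bl_adj_tt (by rw [h]; push_cast; ring) (cast_ne_cast hm hn (by omega))

lemma blinv_step {p j : ℕ} (h6 : 6 + 2*j < p) (h : BLInv p j) : BLInv p (j+1) := by
  obtain ⟨U, S, f, au, ae, ao, xu, xe, xo, hS, hinj, hrange, hau, hae, hao,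
    hxu, hxe, hxo, aju, aje, ajo, hedges⟩ := h
  have key : ∀ {a b : U}, f a ≠ f b → a ≠ b := fun h hab => h (congrArg f hab)
  have bool_ne : ∀ {x y : ZMod p}, ((true, x) : Bool × ZMod p) ≠ (false, y) := by
    intro x y h; simpa using (Prod.ext_iff.mp h).1
  have val_ne : ∀ (m n : ℕ), m < p → n < p → m ≠ n →
      ((true, (m : ZMod p)) : Bool × ZMod p) ≠ (true, (n : ZMod p)) := by
    intro m n hm hn hmn h
    exact cast_ne_cast hm hn hmn (Prod.ext_iff.mp h).2
  have ne_ae_au : ae ≠ au := key (by rw [hae, hau]; exact bool_ne)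
  have ne_ae_xu : ae ≠ xu := key (by rw [hae, hxu]; exact bool_ne)
  have ne_ao_au : ao ≠ au := key (by rw [hao, hau]; exact bool_ne)
  have ne_ao_xu : ao ≠ xu := key (by rw [hao, hxu]; exact bool_ne)
  have ne_xu_ao : xu ≠ ao := ne_ao_xu.symm
  have ne_xu_ae : xu ≠ ae := ne_ae_xu.symm
  have ne_xu_xo : xu ≠ xo := key (by rw [hxu, hxo]; exact fun h => bool_ne h.symm)
  have ne_xu_xe : xu ≠ xe := key (by rw [hxu, hxe]; exact fun h => bool_ne h.symm)
  have ne_ae_ao : ae ≠ ao := key (by rw [hae, hao]; exact val_ne _ _ (by omega) (by omega) (by omega))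
  have ne_ae_xo : ae ≠ xo := key (by rw [hae, hxo]; exact val_ne _ _ (by omega) (by omega) (by omega))
  have ne_xe_ao : xe ≠ ao := key (by rw [hxe, hao]; exact val_ne _ _ (by omega) (by omega) (by omega))
  have ne_xe_xo : xe ≠ xo := key (by rw [hxe, hxo]; exact val_ne _ _ (by omega) (by omega) (by omega))
  have ne_xo_ae : xo ≠ ae := ne_ae_xo.symm
  have ne_xo_xe : xo ≠ xe := ne_xe_xo.symm
  -- step 1 : subdivide (au, xu), new vertex image (false, 5+2j)
  have hr0 : ∀ a, ∃ (c : Bool) (m : ℕ), m ≤ (if c then 4+2*j else 4+2*j) ∧ f a = (c, (m : ZMod p)) := by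
    intro a; obtain ⟨c, m, hm, hfa⟩ := hrange a
    exact ⟨c, m, by cases c <;> simp <;> omega, hfa⟩
  have hz1 := not_in_range hr0 false (5+2*j) (by simp) (by omega)
  have hza1 : (biladder p).Adj (f au) ((false, ((5+2*j:ℕ) : ZMod p))) := by
    rw [hau]; exact bl_adj_ff' (by omega) (by omega) (by omega)
  obtain ⟨hS1, hinj1, hedges1⟩ := step_lemma hS hinj aju s(ae,xe) s(ao,xo) hedges hz1 hza1
  simp only [Sym2.map_pair_eq] at hedges1
  have hr1 : ∀ a, ∃ (c : Bool) (m : ℕ), m ≤ (if c then 4+2*j else 5+2*j) ∧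
      Sum.elim f (fun _ : Unit => ((false, ((5+2*j:ℕ) : ZMod p)) : Bool × ZMod p)) a
        = (c, (m : ZMod p)) := by
    rintro (a | t)
    · obtain ⟨c, m, hm, hfa⟩ := hrange a
      exact ⟨c, m, by cases c <;> simp <;> omega, hfa⟩
    · exact ⟨false, 5+2*j, by simp, rfl⟩
  -- step 2 : subdivide (inr (), inl xu), new vertex image (false, 6+2j)
  have adj2 : (subdivideEdge S au xu).Adj (Sum.inr ()) (Sum.inl xu) :=
    ((subdivideEdge_adj_inl_inr S au xu xu ()).mpr (Or.inr rfl)).symm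
  have hz2 := not_in_range hr1 false (6+2*j) (by simp) (by omega)
  have hza2 : (biladder p).Adj
      (Sum.elim f (fun _ : Unit => ((false, ((5+2*j:ℕ) : ZMod p)) : Bool × ZMod p)) (Sum.inr ()))
      ((false, ((6+2*j:ℕ) : ZMod p))) := by
    exact bl_adj_ff' (by omega) (by omega) (by omega)
  obtain ⟨hS2, hinj2, hedges2⟩ := step_lemma hS1 hinj1 adj2
    s(Sum.inl ae, Sum.inl xe) s(Sum.inl ao, Sum.inl xo) hedges1 hz2 hza2
  simp only [Sym2.map_pair_eq] at hedges2
  set f2 := Sum.elim (Sum.elim f (fun _ : Unit => ((false, ((5+2*j:ℕ) : ZMod p)) : Bool × ZMod p)))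
      (fun _ : Unit => ((false, ((6+2*j:ℕ) : ZMod p)) : Bool × ZMod p)) with hf2
  have hr2 : ∀ a, ∃ (c : Bool) (m : ℕ), m ≤ (if c then 4+2*j else 6+2*j) ∧ f2 a = (c, (m : ZMod p)) := by
    rintro (a | t)
    · obtain ⟨c, m, hm, hfa⟩ := hr1 a
      exact ⟨c, m, by cases c <;> simp at hm ⊢ <;> omega, hfa⟩
    · exact ⟨false, 6+2*j, by simp, rfl⟩
  -- step 3 : subdivide (inl inl ao, inl inl xo), new vertex image (true, 5+2j)
  have adjo1 : (subdivideEdge S au xu).Adj (Sum.inl ao) (Sum.inl xo) :=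
    (subdivideEdge_adj_inl_inl _ _ _ _ _).mpr ⟨ajo, sym2_ne ne_ao_au ne_ao_xu⟩
  have adjo2 : (subdivideEdge (subdivideEdge S au xu) (Sum.inr ()) (Sum.inl xu)).Adj
      (Sum.inl (Sum.inl ao)) (Sum.inl (Sum.inl xo)) :=
    (subdivideEdge_adj_inl_inl _ _ _ _ _).mpr ⟨adjo1, sym2_ne (by simp) (by simp [ne_ao_xu])⟩
  have hedges2' : ∀ b c, (subdivideEdge (subdivideEdge S au xu) (Sum.inr ()) (Sum.inl xu)).Adj b c →
      s(b,c) = s(Sum.inl (Sum.inl ao), Sum.inl (Sum.inl xo)) ∨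
      s(b,c) = s(Sum.inr (), Sum.inl (Sum.inl xu)) ∨
      s(b,c) = s(Sum.inl (Sum.inl ae), Sum.inl (Sum.inl xe)) ∨
      (biladder p).Adj (f2 b) (f2 c) := by
    intro b c hbc
    rcases hedges2 b c hbc with h|h|h|h <;> tauto
  have hz3 := not_in_range hr2 true (5+2*j) (by simp) (by omega)
  have hza3 : (biladder p).Adj (f2 (Sum.inl (Sum.inl ao))) ((true, ((5+2*j:ℕ) : ZMod p))) := by
    rw [show f2 (Sum.inl (Sum.inl ao)) = f ao from rfl, hao]
    exact bl_adj_tt' (by omega) (by omega) (by omega)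
  obtain ⟨hS3, hinj3, hedges3⟩ := step_lemma hS2 hinj2 adjo2
    s(Sum.inr (), Sum.inl (Sum.inl xu)) s(Sum.inl (Sum.inl ae), Sum.inl (Sum.inl xe))
    hedges2' hz3 hza3
  simp only [Sym2.map_pair_eq] at hedges3
  set f3 := Sum.elim f2 (fun _ : Unit => ((true, ((5+2*j:ℕ) : ZMod p)) : Bool × ZMod p)) with hf3
  have hr3 : ∀ a, ∃ (c : Bool) (m : ℕ), m ≤ (if c then 5+2*j else 6+2*j) ∧ f3 a = (c, (m : ZMod p)) := by
    rintro (a | t)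
    · obtain ⟨c, m, hm, hfa⟩ := hr2 a
      exact ⟨c, m, by cases c <;> simp at hm ⊢ <;> omega, hfa⟩
    · exact ⟨true, 5+2*j, by simp, rfl⟩
  -- step 4 : subdivide (inl³ ae, inl³ xe), new vertex image (true, 6+2j)
  have adje1 : (subdivideEdge S au xu).Adj (Sum.inl ae) (Sum.inl xe) :=
    (subdivideEdge_adj_inl_inl _ _ _ _ _).mpr ⟨aje, sym2_ne ne_ae_au ne_ae_xu⟩
  have adje2 : (subdivideEdge (subdivideEdge S au xu) (Sum.inr ()) (Sum.inl xu)).Adj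
      (Sum.inl (Sum.inl ae)) (Sum.inl (Sum.inl xe)) :=
    (subdivideEdge_adj_inl_inl _ _ _ _ _).mpr ⟨adje1, sym2_ne (by simp) (by simp [ne_ae_xu])⟩
  have adje3 : (subdivideEdge (subdivideEdge (subdivideEdge S au xu) (Sum.inr ()) (Sum.inl xu))
      (Sum.inl (Sum.inl ao)) (Sum.inl (Sum.inl xo))).Adj
      (Sum.inl (Sum.inl (Sum.inl ae))) (Sum.inl (Sum.inl (Sum.inl xe))) :=
    (subdivideEdge_adj_inl_inl _ _ _ _ _).mpr
      ⟨adje2, sym2_ne (by simp [ne_ae_ao]) (by simp [ne_ae_xo])⟩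
  have hedges3' : ∀ b c, (subdivideEdge (subdivideEdge (subdivideEdge S au xu) (Sum.inr ())
      (Sum.inl xu)) (Sum.inl (Sum.inl ao)) (Sum.inl (Sum.inl xo))).Adj b c →
      s(b,c) = s(Sum.inl (Sum.inl (Sum.inl ae)), Sum.inl (Sum.inl (Sum.inl xe))) ∨
      s(b,c) = s(Sum.inl (Sum.inr ()), Sum.inl (Sum.inl (Sum.inl xu))) ∨
      s(b,c) = s(Sum.inr (), Sum.inl (Sum.inl (Sum.inl xo))) ∨
      (biladder p).Adj (f3 b) (f3 c) := by
    intro b c hbc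
    rcases hedges3 b c hbc with h|h|h|h <;> tauto
  have hz4 := not_in_range hr3 true (6+2*j) (by simp) (by omega)
  have hza4 : (biladder p).Adj (f3 (Sum.inl (Sum.inl (Sum.inl ae))))
      ((true, ((6+2*j:ℕ) : ZMod p))) := by
    rw [show f3 (Sum.inl (Sum.inl (Sum.inl ae))) = f ae from rfl, hae]
    exact bl_adj_tt' (by omega) (by omega) (by omega)
  obtain ⟨hS4, hinj4, hedges4⟩ := step_lemma hS3 hinj3 adje3
    s(Sum.inl (Sum.inr ()), Sum.inl (Sum.inl (Sum.inl xu)))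
    s(Sum.inr (), Sum.inl (Sum.inl (Sum.inl xo))) hedges3' hz4 hza4
  simp only [Sym2.map_pair_eq] at hedges4
  set f4 := Sum.elim f3 (fun _ : Unit => ((true, ((6+2*j:ℕ) : ZMod p)) : Bool × ZMod p)) with hf4
  -- assemble
  refine ⟨_, _, f4, Sum.inl (Sum.inl (Sum.inr ())), Sum.inr (), Sum.inl (Sum.inr ()),
    Sum.inl (Sum.inl (Sum.inl (Sum.inl xu))), Sum.inl (Sum.inl (Sum.inl (Sum.inl xe))),
    Sum.inl (Sum.inl (Sum.inl (Sum.inl xo))), hS4, hinj4, ?_, ?_, ?_, ?_, ?_, ?_, ?_, ?_, ?_, ?_, ?_⟩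
  · -- range
    rintro (a | t)
    · obtain ⟨c, m, hm, hfa⟩ := hr3 a
      exact ⟨c, m, by cases c <;> simp at hm <;> omega, hfa⟩
    · exact ⟨true, 6+2*j, by omega, rfl⟩
  · rw [show 4+2*(j+1) = 6+2*j from by ring]
    simp only [hf4, hf3, hf2, Sum.elim_inl, Sum.elim_inr]
  · rw [show 4+2*(j+1) = 6+2*j from by ring]
    simp only [hf4, Sum.elim_inr]
  · rw [show 3+2*(j+1) = 5+2*j from by ring]
    simp only [hf4, hf3, Sum.elim_inl, Sum.elim_inr]
  · simp only [hf4, hf3, hf2, Sum.elim_inl]; exact hxu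
  · simp only [hf4, hf3, hf2, Sum.elim_inl]; exact hxe
  · simp only [hf4, hf3, hf2, Sum.elim_inl]; exact hxo
  · -- S4.Adj au' xu'
    have adjw2 : (subdivideEdge (subdivideEdge S au xu) (Sum.inr ()) (Sum.inl xu)).Adj
        (Sum.inl (Sum.inl xu)) (Sum.inr ()) :=
      (subdivideEdge_adj_inl_inr _ _ _ _ _).mpr (Or.inr rfl)
    have adjw3 := (subdivideEdge_adj_inl_inl (subdivideEdge (subdivideEdge S au xu) (Sum.inr ())
        (Sum.inl xu)) (Sum.inl (Sum.inl ao)) (Sum.inl (Sum.inl xo)) _ _).mpr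
      ⟨adjw2, sym2_ne (by simp [ne_xu_ao]) (by simp [ne_xu_xo])⟩
    exact ((subdivideEdge_adj_inl_inl _ _ _ _ _).mpr
      ⟨adjw3, sym2_ne (by simp [ne_xu_ae]) (by simp [ne_xu_xe])⟩).symm
  · -- S4.Adj ae' xe'
    exact ((subdivideEdge_adj_inl_inr _ _ _ _ _).mpr (Or.inr rfl)).symm
  · -- S4.Adj ao' xo'
    have adjw3 : (subdivideEdge (subdivideEdge (subdivideEdge S au xu) (Sum.inr ()) (Sum.inl xu))
        (Sum.inl (Sum.inl ao)) (Sum.inl (Sum.inl xo))).Adj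
        (Sum.inl (Sum.inl (Sum.inl xo))) (Sum.inr ()) :=
      (subdivideEdge_adj_inl_inr _ _ _ _ _).mpr (Or.inr rfl)
    exact ((subdivideEdge_adj_inl_inl _ _ _ _ _).mpr
      ⟨adjw3, sym2_ne (by simp [ne_xo_ae]) (by simp [ne_xo_xe])⟩).symm
  · -- edges
    intro a b hab
    rcases hedges4 a b hab with h|h|h|h
    exacts [Or.inr (Or.inl h), Or.inl h, Or.inr (Or.inr (Or.inl h)), Or.inr (Or.inr (Or.inr h))]

/-- for odd p ≥ 5, the biladder on 2p vertices topologically contains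
the Petersen graph (the biladder on 10 vertices). -/
theorem biladder_topContains_petersen (p : ℕ) (hp : 5 ≤ p) (hodd : Odd p) :
    TopContains (biladder p) (biladder 5) := by
  obtain ⟨k, hk⟩ := hodd
  obtain ⟨k0, hk0⟩ : ∃ m, p = 2*m+5 := ⟨k-2, by omega⟩
  have main : ∀ j, 4 + 2*j < p → BLInv p j := by
    intro j
    induction j with
    | zero => intro _; exact blinv_zero hp
    | succ n ih => intro hj; exact blinv_step (by omega) (ih (by omega))
  obtain ⟨U, S, f, au, ae, ao, xu, xe, xo, hS, hinj, -, hau, hae, hao,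
    hxu, hxe, hxo, -, -, -, hedges⟩ := main k0 (by omega)
  have wrap : ∀ (m c n : ℕ), m + c = p + n → ((n:ℕ):ZMod p) = ((m:ℕ):ZMod p) + (c:ℕ) := by
    intro m c n h
    calc ((n:ℕ):ZMod p) = ((p + n : ℕ):ZMod p) := by
          rw [Nat.cast_add, ZMod.natCast_self, zero_add]
      _ = ((m + c : ℕ):ZMod p) := by rw [h]
      _ = _ := by push_cast; ring
  have adj_u : (biladder p).Adj (f au) (f xu) := by
    rw [hau, hxu]
    exact bl_adj_ff (by simpa using wrap (4+2*k0) 1 0 (by omega))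
      (cast_ne_cast (by omega) (by omega) (by omega))
  have adj_e : (biladder p).Adj (f ae) (f xe) := by
    rw [hae, hxe]
    exact bl_adj_tt (by simpa using wrap (4+2*k0) 2 1 (by omega))
      (cast_ne_cast (by omega) (by omega) (by omega))
  have adj_o : (biladder p).Adj (f ao) (f xo) := by
    rw [hao, hxo]
    exact bl_adj_tt (by simpa using wrap (3+2*k0) 2 0 (by omega))
      (cast_ne_cast (by omega) (by omega) (by omega))
  refine ⟨U, S, hS, f, hinj, ?_⟩
  intro a b hab
  rcases hedges a b hab with h|h|h|h
  · rw [Sym2.eq_iff] at h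
    rcases h with ⟨rfl, rfl⟩|⟨rfl, rfl⟩
    · exact adj_u
    · exact adj_u.symm
  · rw [Sym2.eq_iff] at h
    rcases h with ⟨rfl, rfl⟩|⟨rfl, rfl⟩
    · exact adj_e
    · exact adj_e.symm
  · rw [Sym2.eq_iff] at h
    rcases h with ⟨rfl, rfl⟩|⟨rfl, rfl⟩
    · exact adj_o
    · exact adj_o.symm
  · exact h
end

section
/- Every biladder on 2p vertices with p ≥ 5 (p ≥ 10 if p is even) is cyclically 5-connected. -/
open SimpleGraph

set_option linter.unusedSectionVars false
set_option linter.unusedVariables false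

namespace BL

variable {p : ℕ} [NeZero p]

lemma natCast_ne_zero (hp : 5 ≤ p) {n : ℕ} (h0 : 0 < n) (hn : n < p) : ((n : ℕ) : ZMod p) ≠ 0 := by
  intro h
  rw [ZMod.natCast_eq_zero_iff] at h
  exact absurd (Nat.le_of_dvd h0 h) (by omega)

lemma one_ne_zero' (hp : 5 ≤ p) : (1 : ZMod p) ≠ 0 := by
  have := natCast_ne_zero hp (n := 1) one_pos (by omega); simpa using this

lemma two_ne_zero' (hp : 5 ≤ p) : (2 : ZMod p) ≠ 0 := by
  have := natCast_ne_zero hp (n := 2) two_pos (by omega); simpa using this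

lemma adj_uu_iff (hp : 5 ≤ p) {i j : ZMod p} :
    (biladder p).Adj (false, i) (false, j) ↔ j = i + 1 ∨ i = j + 1 := by
  constructor
  · rintro ⟨hne, h | h⟩ <;> simp only at h
    · rcases h with ⟨_, _, h⟩ | ⟨h, _⟩ | ⟨_, h, _⟩ <;> simp_all
    · rcases h with ⟨_, _, h⟩ | ⟨h, _⟩ | ⟨_, h, _⟩ <;> simp_all
  · intro h
    constructor
    · intro hc
      rw [Prod.mk.injEq] at hc
      apply one_ne_zero' hp
      rcases h with h | h
      · rw [h] at hc; exact left_eq_add.mp hc.2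
      · rw [h] at hc; exact left_eq_add.mp hc.2.symm
    · rcases h with h | h
      · left; left; simp [h]
      · right; left; simp [h]

lemma adj_vv_iff (hp : 5 ≤ p) {i j : ZMod p} :
    (biladder p).Adj (true, i) (true, j) ↔ j = i + 2 ∨ i = j + 2 := by
  constructor
  · rintro ⟨hne, h | h⟩ <;> simp only at h
    · rcases h with ⟨h, _⟩ | ⟨_, _, h⟩ | ⟨_, h, _⟩ <;> simp_all
    · rcases h with ⟨h, _⟩ | ⟨_, _, h⟩ | ⟨_, h, _⟩ <;> simp_all
  · intro h
    constructor
    · intro hc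
      rw [Prod.mk.injEq] at hc
      apply two_ne_zero' hp
      rcases h with h | h
      · rw [h] at hc; exact left_eq_add.mp hc.2
      · rw [h] at hc; exact left_eq_add.mp hc.2.symm
    · rcases h with h | h
      · left; right; left; simp [h]
      · right; right; left; simp [h]

lemma adj_uv_iff {i j : ZMod p} :
    (biladder p).Adj (false, i) (true, j) ↔ i = j := by
  constructor
  · rintro ⟨hne, h | h⟩
    · rcases h with ⟨h1, h2, h3⟩ | ⟨h1, h2, h3⟩ | ⟨h1, h2, h3⟩ <;> simp_all
    · rcases h with ⟨h1, h2, h3⟩ | ⟨h1, h2, h3⟩ | ⟨h1, h2, h3⟩ <;> simp_all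
  · intro h
    exact ⟨by simp, Or.inl (Or.inr (Or.inr ⟨rfl, rfl, h⟩))⟩

lemma adj_vu_iff {i j : ZMod p} :
    (biladder p).Adj (true, i) (false, j) ↔ i = j := by
  rw [adj_comm, adj_uv_iff]; exact eq_comm

lemma not_adj_uu_self (hp : 5 ≤ p) {i j : ZMod p} (huu : (biladder p).Adj (false, i) (false, j)) :
    i ≠ j := fun h => (huu.ne (by rw [h]))

end BL
namespace BL

section walks
variable {V : Type} {G : SimpleGraph V}

lemma getVert_support_getElem :
    ∀ {u v : V} (w : G.Walk u v) (k : ℕ) (hk : k < w.support.length),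
      w.getVert k = w.support[k]
  | _, _, SimpleGraph.Walk.nil, 0, hk => rfl
  | _, _, SimpleGraph.Walk.cons h q, 0, hk => rfl
  | _, _, SimpleGraph.Walk.cons h q, (k+1), hk => by
      simp only [SimpleGraph.Walk.support_cons, SimpleGraph.Walk.getVert_cons_succ]
      have hk' : k < q.support.length := by
        simpa [SimpleGraph.Walk.support_cons] using hk
      rw [getVert_support_getElem q k hk']
      simp

lemma tail_length {u v : V} (w : G.Walk u v) : w.support.tail.length = w.length := by
  have := w.length_support
  simp [List.length_tail, this]

/-- The two cycle-neighbours of the base point are distinct. -/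
lemma cycle_neighbors_ne {v : V} {c : G.Walk v v} (hc : c.IsCycle) :
    c.getVert 1 ≠ c.getVert (c.length - 1) := by
  have h3 := hc.three_le_length
  have hlen : c.support.length = c.length + 1 := c.length_support
  have htail : c.support.tail.Nodup := hc.support_nodup
  have htl : c.support.tail.length = c.length := tail_length c
  have e1 : c.getVert 1 = c.support.tail[0]'(by omega) := by
    rw [getVert_support_getElem c 1 (by omega)]
    exact (List.getElem_tail (l := c.support) (i := 0) (by omega)).symm
  have e2 : c.getVert (c.length - 1) = c.support.tail[c.length - 2]'(by omega) := by
    rw [getVert_support_getElem c (c.length - 1) (by omega)]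
    have := List.getElem_tail (l := c.support) (i := c.length - 2) (by omega)

    rw [this]
    congr 1
    omega
  rw [e1, e2]
  intro h
  have := (htail.getElem_inj_iff).mp h
  omega

lemma support_rotate_subset [DecidableEq V] {u v : V} {c : G.Walk v v} (h : u ∈ c.support) :
    ∀ x ∈ (c.rotate u h).support, x ∈ c.support := by
  intro x hx
  rw [(c.rotate u h).support_eq_cons] at hx
  rcases List.mem_cons.mp hx with h' | h'
  · subst h'; exact h
  · have := ((SimpleGraph.Walk.support_rotate c u h).perm.mem_iff).mp h'
    exact List.mem_of_mem_tail this

/-- A cycle has at least three distinct support vertices: support can't fit in two. -/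
lemma no_cycle_in_pair {v x y : V} {c : G.Walk v v} (hc : c.IsCycle)
    (hs : ∀ z ∈ c.support, z = x ∨ z = y) : False := by
  have htail : c.support.tail.Nodup := hc.support_nodup
  have htl : c.support.tail.length = c.length := tail_length c
  have hsub : c.support.tail ⊆ [x, y] := by
    intro z hz
    rcases hs z (List.mem_of_mem_tail hz) with h | h <;> simp [h]
  have hle := (List.subperm_of_subset htail hsub).length_le
  have h3 := hc.three_le_length
  simp at hle
  omega

/-- If the support fits in three vertices, the cycle is a triangle. -/
lemma cycle_length_three_of_support_subset {v x y z : V} {c : G.Walk v v} (hc : c.IsCycle)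
    (hs : ∀ w ∈ c.support, w = x ∨ w = y ∨ w = z) : c.length = 3 := by
  have htail : c.support.tail.Nodup := hc.support_nodup
  have htl : c.support.tail.length = c.length := tail_length c
  have hsub : c.support.tail ⊆ [x, y, z] := by
    intro w hw
    rcases hs w (List.mem_of_mem_tail hw) with h | h | h <;> simp [h]
  have hle := (List.subperm_of_subset htail hsub).length_le
  have h3 := hc.three_le_length
  simp at hle
  omega

end walks
end BL
namespace BL

section walks2
variable {V : Type} {G : SimpleGraph V}

lemma getVert_mem_support' {u v : V} (w : G.Walk u v) (k : ℕ) (hk : k ≤ w.length) :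
    w.getVert k ∈ w.support := by
  have hk' : k < w.support.length := by rw [w.length_support]; omega
  rw [getVert_support_getElem w k hk']
  exact List.getElem_mem _

lemma hasCircuit_induce_elim {A : Set V} (h : HasCircuit (G.induce A)) :
    ∃ (v : V) (c : G.Walk v v), c.IsCycle ∧ ∀ x ∈ c.support, x ∈ A := by
  obtain ⟨v, w, hw⟩ := h
  let f : G.induce A →g G := ⟨Subtype.val, fun {a b} hab => hab⟩
  refine ⟨v.val, w.map f, (SimpleGraph.Walk.map_isCycle_iff_of_injective Subtype.val_injective).mpr hw, ?_⟩
  intro x hx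
  rw [SimpleGraph.Walk.support_map] at hx
  obtain ⟨a, _, rfl⟩ := List.mem_map.mp hx
  exact a.2

lemma reach_chain {A : Set V} (f : ℕ → V) (t : ℕ) (hmem : ∀ s ≤ t, f s ∈ A)
    (hadj : ∀ s < t, G.Adj (f s) (f (s + 1))) :
    (G.induce A).Reachable ⟨f 0, hmem 0 (by omega)⟩ ⟨f t, hmem t le_rfl⟩ := by
  induction t with
  | zero => exact SimpleGraph.Reachable.refl _
  | succ n ih =>
      have h1 := ih (fun s hs => hmem s (by omega)) (fun s hs => hadj s (by omega))
      have h2 : (G.induce A).Adj ⟨f n, hmem n (by omega)⟩ ⟨f (n + 1), hmem (n + 1) le_rfl⟩ :=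
        hadj n (by omega)
      exact h1.trans h2.reachable

/-- No cycle can live inside a "graded path" set. -/
lemma no_cycle_graded [DecidableEq V] {A : Set V} (f : V → ℕ)
    (hinj : ∀ x ∈ A, ∀ y ∈ A, f x = f y → x = y)
    (hgrade : ∀ x ∈ A, ∀ y ∈ A, G.Adj x y → f y = f x + 1 ∨ f x = f y + 1)
    {v : V} {c : G.Walk v v} (hc : c.IsCycle) (hs : ∀ x ∈ c.support, x ∈ A) : False := by
  obtain ⟨m, hmmem, hmmax⟩ := Finset.exists_max_image c.support.toFinset f
    (by simp [c.support_ne_nil])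
  rw [List.mem_toFinset] at hmmem
  have hmax : ∀ x ∈ c.support, f x ≤ f m := fun x hx => hmmax x (List.mem_toFinset.mpr hx)
  set c' := c.rotate m hmmem with hc'def
  have hc' : c'.IsCycle := hc.rotate hmmem
  have hsub : ∀ x ∈ c'.support, x ∈ c.support := support_rotate_subset hmmem
  have h3 := hc'.three_le_length
  have hx0 : c'.getVert 0 = m := c'.getVert_zero
  have hxl : c'.getVert c'.length = m := c'.getVert_length
  set x1 := c'.getVert 1 with hx1def
  set x2 := c'.getVert (c'.length - 1) with hx2def
  have hm1 : x1 ∈ c.support := hsub _ (getVert_mem_support' c' 1 (by omega))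
  have hm2 : x2 ∈ c.support := hsub _ (getVert_mem_support' c' (c'.length - 1) (by omega))
  have ha1 : G.Adj m x1 := by
    have := c'.adj_getVert_succ (i := 0) (by omega)
    rwa [hx0] at this
  have ha2 : G.Adj x2 m := by
    have := c'.adj_getVert_succ (i := c'.length - 1) (by omega)
    rw [show c'.length - 1 + 1 = c'.length by omega, hxl] at this
    exact this
  have hmA : m ∈ c.support → m ∈ A := hs m
  have hg1 := hgrade m (hs m hmmem) x1 (hs x1 hm1) ha1
  have hg2 := hgrade x2 (hs x2 hm2) m (hs m hmmem) ha2
  have hfx1 : f x1 + 1 = f m := by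
    rcases hg1 with h | h
    · exact absurd h (by have := hmax x1 hm1; omega)
    · omega
  have hfx2 : f x2 + 1 = f m := by
    rcases hg2 with h | h
    · omega
    · exact absurd h (by have := hmax x2 hm2; omega)
  have : x1 = x2 := hinj x1 (hs x1 hm1) x2 (hs x2 hm2) (by omega)
  exact cycle_neighbors_ne hc' this

end walks2
end BL
namespace BL

variable {p : ℕ} [NeZero p]

lemma cast_val_eq (i : ZMod p) : ((i.val : ℕ) : ZMod p) = i := by
  rw [ZMod.natCast_val, ZMod.cast_id]

lemma sub_val_cast {i j : ZMod p} : i + (((j - i).val : ℕ) : ZMod p) = j := by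
  rw [cast_val_eq]; ring

/-- `d`-switches of a set of residues. -/
def SW (d : ZMod p) (S : Set (ZMod p)) : Set (ZMod p) := {i | ¬ (i ∈ S ↔ i + d ∈ S)}

/-- The arc starting at `a` of length `L`. -/
def Arc (a : ZMod p) (L : ℕ) : Set (ZMod p) := {k | (k - a).val < L}

lemma mem_arc {a : ZMod p} {L : ℕ} {k : ZMod p} : k ∈ Arc a L ↔ (k - a).val < L := Iff.rfl

lemma add_mem_arc {a : ZMod p} {L t : ℕ} (ht : t < L) (hL : L ≤ p) :
    a + (t : ZMod p) ∈ Arc a L := by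
  rw [mem_arc]
  have h : a + (t : ZMod p) - a = (t : ZMod p) := by ring
  rw [h, ZMod.val_natCast_of_lt (by omega)]
  exact ht

lemma switch_step {d : ZMod p} {S : Set (ZMod p)} {i : ZMod p} (h : i ∉ SW d S) :
    (i ∈ S ↔ i + d ∈ S) := by
  rw [SW, Set.mem_setOf_eq, not_not] at h
  exact h

/-- Propagation: no switches along the way means the value is constant. -/
lemma prop_const (d : ZMod p) (S : Set (ZMod p)) (i : ZMod p) :
    ∀ t : ℕ, (∀ s : ℕ, s < t → i + d * (s : ZMod p) ∉ SW d S) →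
      (i ∈ S ↔ i + d * (t : ZMod p) ∈ S)
  | 0, _ => by simp
  | (t+1), h => by
      have ih := prop_const d S i t (fun s hs => h s (by omega))
      have hlast := switch_step (h t (by omega))
      rw [ih, show i + d * ((t+1 : ℕ) : ZMod p) = i + d * (t : ZMod p) + d by push_cast; ring]
      exact hlast

/-- Parity: the number of `d`-switches is even. -/
lemma even_ncard_SW (d : ZMod p) (S : Set (ZMod p)) : Even (SW d S).ncard := by
  classical
  have h1 : (SW d S).ncard = (Finset.univ.filter (fun i => i ∈ SW d S)).card := by
    rw [Set.ncard_eq_toFinset_card']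
    congr 1
    ext i
    simp
  set g : ZMod p → ZMod 2 := fun i => if i ∈ S then 1 else 0 with hg
  have key : ∀ i : ZMod p, (if i ∈ SW d S then (1 : ZMod 2) else 0) = g i + g (i + d) := by
    intro i
    by_cases h1 : i ∈ S <;> by_cases h2 : i + d ∈ S <;>
      simp only [hg, SW, Set.mem_setOf_eq, h1, h2] <;> decide
  have h2 : (((Finset.univ.filter (fun i => i ∈ SW d S)).card : ℕ) : ZMod 2) =
      ∑ i : ZMod p, (if i ∈ SW d S then (1 : ZMod 2) else 0) := by
    rw [Finset.card_filter, Nat.cast_sum]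
    exact Finset.sum_congr rfl (fun i _ => by split <;> simp)
  have h3 : ∑ i : ZMod p, (if i ∈ SW d S then (1 : ZMod 2) else 0) = 0 := by
    calc ∑ i : ZMod p, (if i ∈ SW d S then (1 : ZMod 2) else 0)
        = ∑ i : ZMod p, (g i + g (i + d)) := Finset.sum_congr rfl (fun i _ => key i)
      _ = ∑ i : ZMod p, g i + ∑ i : ZMod p, g (i + d) := Finset.sum_add_distrib
      _ = ∑ i : ZMod p, g i + ∑ i : ZMod p, g i := by
            congr 1
            exact Fintype.sum_equiv (Equiv.addRight d) _ _ (fun i => rfl)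
      _ = 2 * ∑ i : ZMod p, g i := by ring
      _ = 0 := by
            have h4 : (2 : ZMod 2) = 0 := by decide
            rw [h4, zero_mul]
  rw [h1]
  exact even_iff_two_dvd.mpr ((ZMod.natCast_eq_zero_iff _ 2).mp (h2.trans h3))

end BL
namespace BL

variable {p : ℕ} [NeZero p]

lemma cast_inj_of_lt {a b : ℕ} (ha : a < p) (hb : b < p) :
    ((a : ZMod p) = (b : ZMod p)) ↔ a = b := by
  constructor
  · intro h
    have := congrArg ZMod.val h
    rwa [ZMod.val_natCast_of_lt ha, ZMod.val_natCast_of_lt hb] at this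
  · rintro rfl; rfl

lemma cast_eq_zero_iff_dvd (a : ℕ) : ((a : ZMod p) = 0) ↔ p ∣ a :=
  ZMod.natCast_eq_zero_iff a p

lemma val_sub_ne_zero {i j : ZMod p} (h : i ≠ j) : (j - i).val ≠ 0 := by
  intro h0
  have : j - i = 0 := by rw [← cast_val_eq (j - i), h0]; simp
  exact h (by linear_combination -this : i = j)

lemma const_of_SW_one_empty {S : Set (ZMod p)} (h : SW 1 S = ∅) (i j : ZMod p) :
    (i ∈ S ↔ j ∈ S) := by
  have hfree : ∀ s : ℕ, s < (j - i).val → i + 1 * (s : ZMod p) ∉ SW 1 S := by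
    intro s _ hmem
    rw [h] at hmem
    exact hmem
  have hc := prop_const 1 S i ((j - i).val) hfree
  rwa [one_mul, sub_val_cast] at hc

/-- The value just left of switch `i` propagates to `j` along the arc. -/
lemma segment_iff {S : Set (ZMod p)} {i j : ZMod p} (hij : i ≠ j)
    (hsw : SW 1 S = {i, j}) : (i + 1 ∈ S ↔ j ∈ S) := by
  set d := (j - i).val with hd
  have hd0 : d ≠ 0 := val_sub_ne_zero hij
  have hdp : d < p := ZMod.val_lt _
  have hj : i + 1 + ((d - 1 : ℕ) : ZMod p) = j := by
    have : ((d : ℕ) : ZMod p) = j - i := cast_val_eq _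
    push_cast [Nat.cast_sub (by omega : 1 ≤ d)]
    linear_combination this
  have hfree : ∀ s : ℕ, s < d - 1 → i + 1 + 1 * (s : ZMod p) ∉ SW 1 S := by
    intro s hs hmem
    rw [hsw] at hmem
    rcases hmem with h | h
    · have h1 : ((s + 1 : ℕ) : ZMod p) = 0 := by push_cast; linear_combination h
      have := Nat.le_of_dvd (by omega) ((cast_eq_zero_iff_dvd _).mp h1)
      omega
    · rw [Set.mem_singleton_iff] at h
      have hdc : ((d : ℕ) : ZMod p) = j - i := cast_val_eq _
      have h1 : ((s + 1 : ℕ) : ZMod p) = ((d : ℕ) : ZMod p) := by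
        push_cast; linear_combination h - hdc
      have := (cast_inj_of_lt (by omega) hdp).mp h1
      omega
  have := prop_const 1 S (i + 1) (d - 1) hfree
  rwa [one_mul, hj] at this

lemma arc_of_two_switches_aux {S : Set (ZMod p)} {i j : ZMod p} (hij : i ≠ j)
    (hsw : SW 1 S = {i, j}) (hin : i + 1 ∈ S) : S = Arc (i + 1) ((j - i).val) := by
  set d := (j - i).val with hd
  have hd0 : d ≠ 0 := val_sub_ne_zero hij
  have hdp : d < p := ZMod.val_lt _
  have hdc : ((d : ℕ) : ZMod p) = j - i := cast_val_eq _
  have hSj : j ∈ S := (segment_iff hij hsw).mp hin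
  have hjsw : j ∈ SW 1 S := by rw [hsw]; right; rfl
  have hSj1 : j + 1 ∉ S := fun h => hjsw (iff_of_true hSj h)
  ext k
  rw [mem_arc]
  set t := (k - (i + 1)).val with htdef
  have hk : (i + 1) + ((t : ℕ) : ZMod p) = k := sub_val_cast
  have htp : t < p := ZMod.val_lt _
  by_cases hlt : t < d
  · have hfree2 : ∀ s : ℕ, s < t → i + 1 + 1 * (s : ZMod p) ∉ SW 1 S := by
      intro s hs hmem
      rw [hsw] at hmem
      rcases hmem with h | h
      · have h1 : ((s + 1 : ℕ) : ZMod p) = 0 := by push_cast; linear_combination h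
        have := Nat.le_of_dvd (by omega) ((cast_eq_zero_iff_dvd _).mp h1)
        omega
      · rw [Set.mem_singleton_iff] at h
        have h1 : ((s + 1 : ℕ) : ZMod p) = ((d : ℕ) : ZMod p) := by
          push_cast; linear_combination h - hdc
        have := (cast_inj_of_lt (by omega) hdp).mp h1
        omega
    have hiff : i + 1 ∈ S ↔ k ∈ S := by
      have := prop_const 1 S (i + 1) t hfree2
      rwa [one_mul, hk] at this
    exact iff_of_true (hiff.mp hin) hlt
  · have hk2 : j + 1 + ((t - d : ℕ) : ZMod p) = k := by
      rw [← hk]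
      push_cast [Nat.cast_sub (le_of_not_gt hlt)]
      linear_combination -hdc
    have hfree3 : ∀ s : ℕ, s < t - d → j + 1 + 1 * (s : ZMod p) ∉ SW 1 S := by
      intro s hs hmem
      rw [hsw] at hmem
      rcases hmem with h | h
      · have h1 : ((d + s + 1 : ℕ) : ZMod p) = 0 := by
          push_cast; linear_combination h + hdc
        have := Nat.le_of_dvd (by omega) ((cast_eq_zero_iff_dvd _).mp h1)
        omega
      · rw [Set.mem_singleton_iff] at h
        have h1 : ((s + 1 : ℕ) : ZMod p) = 0 := by push_cast; linear_combination h
        have := Nat.le_of_dvd (by omega) ((cast_eq_zero_iff_dvd _).mp h1)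
        omega
    have hiff : j + 1 ∈ S ↔ k ∈ S := by
      have := prop_const 1 S (j + 1) (t - d) hfree3
      rwa [one_mul, hk2] at this
    exact iff_of_false (fun h => hSj1 (hiff.mpr h)) (by omega)

lemma arc_of_two_switches {S : Set (ZMod p)} {i j : ZMod p} (hij : i ≠ j)
    (hsw : SW 1 S = {i, j}) :
    ∃ (a : ZMod p) (L : ℕ), 1 ≤ L ∧ L ≤ p - 1 ∧ S = Arc a L := by
  have hp1 : 1 ≤ p := Nat.one_le_iff_ne_zero.mpr (NeZero.ne p)
  by_cases hin : i + 1 ∈ S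
  · refine ⟨i + 1, (j - i).val, ?_, ?_, arc_of_two_switches_aux hij hsw hin⟩
    · have := val_sub_ne_zero hij; omega
    · have := ZMod.val_lt (j - i); omega
  · have hsw' : SW 1 S = {j, i} := by rw [hsw]; exact Set.pair_comm i j
    have hjS : j ∉ S := fun h => hin ((segment_iff hij hsw).mpr h)
    have hjsw : j ∈ SW 1 S := by rw [hsw]; right; rfl
    have hjn : j + 1 ∈ S := by
      by_contra h
      exact hjsw (iff_of_false hjS h)
    refine ⟨j + 1, (i - j).val, ?_, ?_, arc_of_two_switches_aux hij.symm hsw' hjn⟩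
    · have := val_sub_ne_zero hij.symm; omega
    · have := ZMod.val_lt (i - j); omega

end BL
namespace BL

variable {p : ℕ} [NeZero p]

def AU (A : Set (Bool × ZMod p)) : Set (ZMod p) := {i | (false, i) ∈ A}
def AV (A : Set (Bool × ZMod p)) : Set (ZMod p) := {i | (true, i) ∈ A}
def RM (A : Set (Bool × ZMod p)) : Set (ZMod p) := {i | ¬ ((false, i) ∈ A ↔ (true, i) ∈ A)}

def eU (i : ZMod p) : Sym2 (Bool × ZMod p) := s((false, i), (false, i + 1))
def eV (i : ZMod p) : Sym2 (Bool × ZMod p) := s((true, i), (true, i + 2))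
def eR (i : ZMod p) : Sym2 (Bool × ZMod p) := s((false, i), (true, i))

lemma four_ne_zero' (hp : 5 ≤ p) : ((4 : ℕ) : ZMod p) ≠ 0 := by
  intro h
  have := Nat.le_of_dvd (by norm_num) ((cast_eq_zero_iff_dvd 4).mp h)
  omega

lemma eU_inj (hp : 5 ≤ p) : Function.Injective (eU (p := p)) := by
  intro i j h
  rw [eU, eU, Sym2.eq_iff] at h
  rcases h with ⟨h1, h2⟩ | ⟨h1, h2⟩
  · exact (Prod.mk.injEq _ _ _ _ ▸ h1).2
  · rw [Prod.mk.injEq] at h1 h2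
    exfalso
    apply two_ne_zero' hp
    have h1' := h1.2
    have h2' := h2.2
    have : i = i + 1 + 1 := by rw [h2']; rw [h1']
    linear_combination -this
  
lemma eV_inj (hp : 5 ≤ p) : Function.Injective (eV (p := p)) := by
  intro i j h
  rw [eV, eV, Sym2.eq_iff] at h
  rcases h with ⟨h1, h2⟩ | ⟨h1, h2⟩
  · exact (Prod.mk.injEq _ _ _ _ ▸ h1).2
  · rw [Prod.mk.injEq] at h1 h2
    exfalso
    apply four_ne_zero' hp
    have : i = i + 2 + 2 := by rw [h2.2]; rw [h1.2]
    push_cast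
    linear_combination -this

lemma eR_inj : Function.Injective (eR (p := p)) := by
  intro i j h
  rw [eR, eR, Sym2.eq_iff] at h
  rcases h with ⟨h1, h2⟩ | ⟨h1, h2⟩
  · exact (Prod.mk.injEq _ _ _ _ ▸ h1).2
  · rw [Prod.mk.injEq] at h1
    exact absurd h1.1 (by simp)

lemma eU_ne_eV {i j : ZMod p} : eU i ≠ eV j := by
  intro h
  rw [eU, eV, Sym2.eq_iff] at h
  rcases h with ⟨h1, _⟩ | ⟨h1, _⟩ <;> · rw [Prod.mk.injEq] at h1; exact absurd h1.1 (by simp)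

lemma eU_ne_eR {i j : ZMod p} (hp : 5 ≤ p) : eU i ≠ eR j := by
  intro h
  rw [eU, eR, Sym2.eq_iff] at h
  rcases h with ⟨_, h2⟩ | ⟨h1, _⟩
  · rw [Prod.mk.injEq] at h2; exact absurd h2.1 (by simp)
  · rw [Prod.mk.injEq] at h1; exact absurd h1.1 (by simp)

lemma eV_ne_eR {i j : ZMod p} : eV i ≠ eR j := by
  intro h
  rw [eV, eR, Sym2.eq_iff] at h
  rcases h with ⟨h1, _⟩ | ⟨_, h2⟩
  · rw [Prod.mk.injEq] at h1; exact absurd h1.1 (by simp)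
  · rw [Prod.mk.injEq] at h2; exact absurd h2.1 (by simp)

lemma eU_mem_cut (hp : 5 ≤ p) {A : Set (Bool × ZMod p)} {i : ZMod p}
    (h : i ∈ SW 1 (AU A)) : eU i ∈ cutEdges (biladder p) A := by
  have hadj : (biladder p).Adj (false, i) (false, i + 1) := (adj_uu_iff hp).mpr (Or.inl rfl)
  rw [SW, Set.mem_setOf_eq] at h
  by_cases hA : (false, i) ∈ A
  · have hA' : (false, i + 1) ∉ A := fun h' => h (iff_of_true hA h')
    exact ⟨(false, i), (false, i + 1), hA, hA', hadj, rfl⟩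
  · have hA' : (false, i + 1) ∈ A := by
      by_contra h'
      exact h (iff_of_false hA h')
    exact ⟨(false, i + 1), (false, i), hA', hA, hadj.symm, Sym2.eq_swap⟩

lemma eV_mem_cut (hp : 5 ≤ p) {A : Set (Bool × ZMod p)} {i : ZMod p}
    (h : i ∈ SW 2 (AV A)) : eV i ∈ cutEdges (biladder p) A := by
  have hadj : (biladder p).Adj (true, i) (true, i + 2) := (adj_vv_iff hp).mpr (Or.inl rfl)
  rw [SW, Set.mem_setOf_eq] at h
  by_cases hA : (true, i) ∈ A
  · have hA' : (true, i + 2) ∉ A := fun h' => h (iff_of_true hA h')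
    exact ⟨(true, i), (true, i + 2), hA, hA', hadj, rfl⟩
  · have hA' : (true, i + 2) ∈ A := by
      by_contra h'
      exact h (iff_of_false hA h')
    exact ⟨(true, i + 2), (true, i), hA', hA, hadj.symm, Sym2.eq_swap⟩

lemma eR_mem_cut {A : Set (Bool × ZMod p)} {i : ZMod p}
    (h : i ∈ RM A) : eR i ∈ cutEdges (biladder p) A := by
  have hadj : (biladder p).Adj (false, i) (true, i) := adj_uv_iff.mpr rfl
  rw [RM, Set.mem_setOf_eq] at h
  by_cases hA : (false, i) ∈ A
  · have hA' : (true, i) ∉ A := fun h' => h (iff_of_true hA h')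
    exact ⟨(false, i), (true, i), hA, hA', hadj, rfl⟩
  · have hA' : (true, i) ∈ A := by
      by_contra h'
      exact h (iff_of_false hA h')
    exact ⟨(true, i), (false, i), hA', hA, hadj.symm, Sym2.eq_swap⟩

lemma count_cut (hp : 5 ≤ p) (A : Set (Bool × ZMod p)) :
    (SW 1 (AU A)).ncard + (SW 2 (AV A)).ncard + (RM A).ncard
      ≤ (cutEdges (biladder p) A).ncard := by
  classical
  set E1 := eU '' (SW 1 (AU A)) with hE1
  set E2 := eV '' (SW 2 (AV A)) with hE2
  set E3 := eR '' (RM A) with hE3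
  have hc1 : E1.ncard = (SW 1 (AU A)).ncard := Set.ncard_image_of_injective _ (eU_inj hp)
  have hc2 : E2.ncard = (SW 2 (AV A)).ncard := Set.ncard_image_of_injective _ (eV_inj hp)
  have hc3 : E3.ncard = (RM A).ncard := Set.ncard_image_of_injective _ eR_inj
  have hd12 : Disjoint E1 E2 := by
    rw [Set.disjoint_left]
    rintro e ⟨i, _, rfl⟩ ⟨j, _, hj⟩
    exact eU_ne_eV hj.symm
  have hd13 : Disjoint E1 E3 := by
    rw [Set.disjoint_left]
    rintro e ⟨i, _, rfl⟩ ⟨j, _, hj⟩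
    exact eU_ne_eR hp hj.symm
  have hd23 : Disjoint E2 E3 := by
    rw [Set.disjoint_left]
    rintro e ⟨i, _, rfl⟩ ⟨j, _, hj⟩
    exact eV_ne_eR hj.symm
  have hsub : E1 ∪ E2 ∪ E3 ⊆ cutEdges (biladder p) A := by
    rintro e ((⟨i, hi, rfl⟩ | ⟨i, hi, rfl⟩) | ⟨i, hi, rfl⟩)
    · exact eU_mem_cut hp hi
    · exact eV_mem_cut hp hi
    · exact eR_mem_cut hi
  have h1 : (E1 ∪ E2 ∪ E3).ncard = E1.ncard + E2.ncard + E3.ncard := by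
    rw [Set.ncard_union_eq (by
        rw [Set.disjoint_union_left]; exact ⟨hd13, hd23⟩) (Set.toFinite _) (Set.toFinite _),
      Set.ncard_union_eq hd12 (Set.toFinite _) (Set.toFinite _)]
  calc (SW 1 (AU A)).ncard + (SW 2 (AV A)).ncard + (RM A).ncard
      = (E1 ∪ E2 ∪ E3).ncard := by rw [h1, hc1, hc2, hc3]
    _ ≤ (cutEdges (biladder p) A).ncard := Set.ncard_le_ncard hsub (Set.toFinite _)

end BL
namespace BL

section cyclefree
variable {V : Type} {G : SimpleGraph V}

lemma cycle_length_le_ncard {v : V} {c : G.Walk v v} (hc : c.IsCycle) {A : Set V}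
    (hA : ∀ x ∈ c.support, x ∈ A) (hfin : A.Finite) : c.length ≤ A.ncard := by
  classical
  have htail : c.support.tail.Nodup := hc.support_nodup
  have htl : c.support.tail.length = c.length := tail_length c
  have h1 : c.support.tail.toFinset.card = c.length := by
    rw [List.toFinset_card_of_nodup htail, htl]
  have h2 : c.support.tail.toFinset ⊆ hfin.toFinset := by
    intro z hz
    rw [List.mem_toFinset] at hz
    rw [Set.Finite.mem_toFinset]
    exact hA z (List.mem_of_mem_tail hz)
  have := Finset.card_le_card h2
  rw [h1, ← Set.ncard_eq_toFinset_card _ hfin] at this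
  exact this

lemma noCircuit_small {A : Set V} {x y : V} (hA : ∀ z ∈ A, z = x ∨ z = y) :
    ¬ HasCircuit (G.induce A) := by
  intro h
  obtain ⟨v, c, hc, hsupp⟩ := hasCircuit_induce_elim h
  exact no_cycle_in_pair hc (fun z hz => hA z (hsupp z hz))

end cyclefree

variable {p : ℕ} [NeZero p]

lemma noCircuit_trueSide (hp : 5 ≤ p) (htwo : (2 : ZMod p) ≠ 0) (h6 : (6 : ZMod p) ≠ 0)
    {A : Set (Bool × ZMod p)} (hA : ∀ z ∈ A, z.1 = true) (hcard : A.ncard ≤ 3) :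
    ¬ HasCircuit ((biladder p).induce A) := by
  intro h
  obtain ⟨v, c, hc, hsupp⟩ := hasCircuit_induce_elim h
  have hlen : c.length = 3 := by
    have := cycle_length_le_ncard hc hsupp (Set.toFinite A)
    have := hc.three_le_length
    omega
  set w0 := c.getVert 0 with hw0
  set w1 := c.getVert 1 with hw1
  set w2 := c.getVert 2 with hw2
  have hm0 : w0 ∈ A := hsupp _ (getVert_mem_support' c 0 (by omega))
  have hm1 : w1 ∈ A := hsupp _ (getVert_mem_support' c 1 (by omega))
  have hm2 : w2 ∈ A := hsupp _ (getVert_mem_support' c 2 (by omega))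
  have hb0 : w0 = (true, w0.2) := by
    have := hA _ hm0; exact Prod.ext this rfl
  have hb1 : w1 = (true, w1.2) := by
    have := hA _ hm1; exact Prod.ext this rfl
  have hb2 : w2 = (true, w2.2) := by
    have := hA _ hm2; exact Prod.ext this rfl
  have a01 : (biladder p).Adj w0 w1 := c.adj_getVert_succ (by omega)
  have a12 : (biladder p).Adj w1 w2 := c.adj_getVert_succ (by omega)
  have a20 : (biladder p).Adj w2 w0 := by
    have h := c.adj_getVert_succ (i := 2) (by omega)
    have : c.getVert 3 = w0 := by rw [← hlen, c.getVert_length, hw0, c.getVert_zero]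
    rwa [this] at h
  rw [hb0, hb1] at a01
  rw [hb1, hb2] at a12
  rw [hb2, hb0] at a20
  rw [adj_vv_iff hp] at a01 a12 a20
  have hd1 : w1.2 - w0.2 = 2 ∨ w1.2 - w0.2 = -2 := by
    rcases a01 with h | h
    · left; linear_combination h
    · right; linear_combination -h
  have hd2 : w2.2 - w1.2 = 2 ∨ w2.2 - w1.2 = -2 := by
    rcases a12 with h | h
    · left; linear_combination h
    · right; linear_combination -h
  have hd3 : w0.2 - w2.2 = 2 ∨ w0.2 - w2.2 = -2 := by
    rcases a20 with h | h
    · left; linear_combination h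
    · right; linear_combination -h
  rcases hd1 with h1 | h1 <;> rcases hd2 with h2 | h2 <;> rcases hd3 with h3 | h3 <;>
    first
      | exact h6 (by linear_combination -h1 - h2 - h3)
      | exact h6 (by linear_combination h1 + h2 + h3)
      | exact htwo (by linear_combination -h1 - h2 - h3)
      | exact htwo (by linear_combination h1 + h2 + h3)

lemma noCircuit_falseArc (hp : 5 ≤ p) {α : ZMod p} {L : ℕ} (hL : L ≤ p - 1)
    {A : Set (Bool × ZMod p)} (hA : ∀ z, z ∈ A ↔ (z.1 = false ∧ z.2 ∈ Arc α L)) :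
    ¬ HasCircuit ((biladder p).induce A) := by
  classical
  intro h
  obtain ⟨v, c, hc, hsupp⟩ := hasCircuit_induce_elim h
  haveI : Fact (1 < p) := ⟨by omega⟩
  apply no_cycle_graded (G := biladder p) (A := A) (fun x => (x.2 - α).val) ?_ ?_ hc hsupp
  · intro x hx y hy hf
    have hx' := (hA x).mp hx
    have hy' := (hA y).mp hy
    have : x.2 - α = y.2 - α := ZMod.val_injective p hf
    have h2 : x.2 = y.2 := by linear_combination this
    exact Prod.ext (hx'.1.trans hy'.1.symm) h2
  · intro x hx y hy hadj
    have hx' := (hA x).mp hx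
    have hy' := (hA y).mp hy
    have hxe : x = (false, x.2) := Prod.ext hx'.1 rfl
    have hye : y = (false, y.2) := Prod.ext hy'.1 rfl
    rw [hxe, hye, adj_uu_iff hp] at hadj
    have hxa : (x.2 - α).val < L := hx'.2
    have hya : (y.2 - α).val < L := hy'.2
    have hv1 : (1 : ZMod p).val = 1 := ZMod.val_one p
    rcases hadj with h | h
    · left
      show (y.2 - α).val = (x.2 - α).val + 1
      have he : y.2 - α = (x.2 - α) + 1 := by rw [h]; ring
      rw [he, ZMod.val_add_of_lt (by omega), hv1]
    · right
      show (x.2 - α).val = (y.2 - α).val + 1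
      have he : x.2 - α = (y.2 - α) + 1 := by rw [h]; ring
      rw [he, ZMod.val_add_of_lt (by omega), hv1]

end BL
namespace BL

variable {p : ℕ} [NeZero p]

lemma three_le_ncard {X : Type} {T : Set X} {x y z : X} (hx : x ∈ T) (hy : y ∈ T) (hz : z ∈ T)
    (hxy : x ≠ y) (hxz : x ≠ z) (hyz : y ≠ z) (hfin : T.Finite) : 3 ≤ T.ncard := by
  have hsub : ({x, y, z} : Set X) ⊆ T := by
    intro w hw
    rcases hw with h | h | h
    · exact h ▸ hx
    · exact h ▸ hy
    · exact (Set.mem_singleton_iff.mp h) ▸ hz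
  have h3 : ({x, y, z} : Set X).ncard = 3 := Set.ncard_eq_three.mpr ⟨x, y, z, hxy, hxz, hyz, rfl⟩
  rw [← h3]
  exact Set.ncard_le_ncard hsub hfin

lemma four_le_ncard {X : Type} {T : Set X} {x y z w : X} (hx : x ∈ T) (hy : y ∈ T) (hz : z ∈ T)
    (hw : w ∈ T) (hxy : x ≠ y) (hxz : x ≠ z) (hxw : x ≠ w) (hyz : y ≠ z) (hyw : y ≠ w)
    (hzw : z ≠ w) (hfin : T.Finite) : 4 ≤ T.ncard := by
  classical
  have hsub : ({x, y, z, w} : Set X) ⊆ T := by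
    intro u hu
    rcases hu with h | h | h | h
    · exact h ▸ hx
    · exact h ▸ hy
    · exact h ▸ hz
    · exact (Set.mem_singleton_iff.mp h) ▸ hw
  have h4 : ({x, y, z, w} : Set X).ncard = 4 := by
    rw [Set.ncard_insert_of_notMem (by simp [hxy, hxz, hxw]) (Set.toFinite _),
      Set.ncard_insert_of_notMem (by simp [hyz, hyw]) (Set.toFinite _),
      Set.ncard_insert_of_notMem (by simp [hzw]) (Set.toFinite _), Set.ncard_singleton]
  rw [← h4]
  exact Set.ncard_le_ncard hsub hfin

lemma arc_off {α : ZMod p} {L c : ℕ} (hc : c < p) : (α + (c : ZMod p) ∈ Arc α L) ↔ c < L := by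
  rw [mem_arc, show α + (c : ZMod p) - α = (c : ZMod p) by ring, ZMod.val_natCast_of_lt hc]

lemma arc_compl {α : ZMod p} {L : ℕ} (hL : L ≤ p) :
    (Arc α L)ᶜ = Arc (α + (L : ZMod p)) (p - L) := by
  ext k
  rw [Set.mem_compl_iff, mem_arc, mem_arc, not_lt]
  set m := (k - α).val with hm
  have hmp : m < p := ZMod.val_lt _
  have hk : k = α + ((m : ℕ) : ZMod p) := by rw [hm, sub_val_cast]  -- careful
  constructor
  · intro h
    have he : k - (α + (L : ZMod p)) = (((m - L : ℕ)) : ZMod p) := by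
      rw [hk]; push_cast [Nat.cast_sub h]; ring
    rw [he, ZMod.val_natCast_of_lt (by omega)]
    omega
  · intro h
    by_contra hlt
    push_neg at hlt
    have he : k - (α + (L : ZMod p)) = (((p + m - L : ℕ)) : ZMod p) := by
      rw [hk]
      push_cast [Nat.cast_sub (by omega : L ≤ p + m)]
      rw [ZMod.natCast_self]
      ring
    rw [he, ZMod.val_natCast_of_lt (by omega)] at h
    omega

lemma exists_parity_off (hpe : p % 2 = 0) (α : ZMod p) (c : ℕ) (hc : c + 1 < p) (δ : ℕ)
    (hδ : δ < 2) : ∃ t : ℕ, (t = c ∨ t = c + 1) ∧ (α + (t : ZMod p)).val % 2 = δ := by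
  have hval : ∀ t : ℕ, t < p → (α + (t : ZMod p)).val % 2 = (α.val + t) % 2 := by
    intro t ht
    rw [ZMod.val_add, ZMod.val_natCast_of_lt ht]
    exact Nat.mod_mod_of_dvd _ (by omega)
  by_cases h : (α.val + c) % 2 = δ
  · exact ⟨c, Or.inl rfl, by rw [hval c (by omega)]; exact h⟩
  · exact ⟨c + 1, Or.inr rfl, by rw [hval (c+1) hc]; omega⟩

lemma step2_reach {S : Set (ZMod p)} (hb : SW 2 S = ∅) (i : ZMod p) (t : ℕ) :
    (i ∈ S ↔ i + 2 * (t : ZMod p) ∈ S) :=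
  prop_const 2 S i t (fun s _ hmem => by rw [hb] at hmem; exact hmem)

lemma step2_const_of_odd (hodd : p % 2 = 1) {S : Set (ZMod p)} (hb : SW 2 S = ∅)
    (i j : ZMod p) : i ∈ S ↔ j ∈ S := by
  set t := (j - i).val * ((p + 1) / 2) with ht
  have := step2_reach hb i t
  have he : i + 2 * (t : ZMod p) = j := by
    have h2 : ((2 * t : ℕ) : ZMod p) = (((j - i).val * (p + 1) : ℕ) : ZMod p) := by
      congr 1
      have hh : 2 * ((p + 1) / 2) = p + 1 := by omega
      rw [ht, show 2 * ((j - i).val * ((p + 1) / 2)) = (j - i).val * (2 * ((p + 1) / 2)) by ring,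
        hh]
    have h3 : (((j - i).val * (p + 1) : ℕ) : ZMod p) = j - i := by
      push_cast
      rw [ZMod.natCast_self, cast_val_eq]
      ring
    calc i + 2 * (t : ZMod p) = i + ((2 * t : ℕ) : ZMod p) := by push_cast; ring
      _ = i + (j - i) := by rw [h2, h3]
      _ = j := by ring
  rwa [he] at this

lemma four_switches_of_midarc (hp : 5 ≤ p) {α : ZMod p} {L : ℕ} (h2L : 2 ≤ L)
    (hL2 : L ≤ p - 2) : 4 ≤ (SW 2 (Arc α L)).ncard := by
  have hp0 : 0 < p := by omega
  have hmem : ∀ c : ℕ, c < p → (α + (c : ZMod p) ∈ Arc α L ↔ c < L) := fun c hc => arc_off hc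
  -- the four switch points, as offsets
  have k1 : α + ((p - 2 : ℕ) : ZMod p) ∈ SW 2 (Arc α L) := by
    rw [SW, Set.mem_setOf_eq]
    have h1 : α + ((p - 2 : ℕ) : ZMod p) ∉ Arc α L := by
      rw [hmem _ (by omega)]; omega
    have he : α + ((p - 2 : ℕ) : ZMod p) + 2 = α + ((0 : ℕ) : ZMod p) := by
      push_cast [Nat.cast_sub (by omega : 2 ≤ p)]
      rw [ZMod.natCast_self]
      ring
    have h2 : α + ((p - 2 : ℕ) : ZMod p) + 2 ∈ Arc α L := by
      rw [he, hmem _ (by omega)]; omega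
    exact fun h => h1 (h.mpr h2)
  have k2 : α + ((p - 1 : ℕ) : ZMod p) ∈ SW 2 (Arc α L) := by
    rw [SW, Set.mem_setOf_eq]
    have h1 : α + ((p - 1 : ℕ) : ZMod p) ∉ Arc α L := by
      rw [hmem _ (by omega)]; omega
    have he : α + ((p - 1 : ℕ) : ZMod p) + 2 = α + ((1 : ℕ) : ZMod p) := by
      push_cast [Nat.cast_sub (by omega : 1 ≤ p)]
      rw [ZMod.natCast_self]
      ring
    have h2 : α + ((p - 1 : ℕ) : ZMod p) + 2 ∈ Arc α L := by
      rw [he, hmem _ (by omega)]; omega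
    exact fun h => h1 (h.mpr h2)
  have k3 : α + ((L - 2 : ℕ) : ZMod p) ∈ SW 2 (Arc α L) := by
    rw [SW, Set.mem_setOf_eq]
    have h1 : α + ((L - 2 : ℕ) : ZMod p) ∈ Arc α L := by
      rw [hmem _ (by omega)]; omega
    have he : α + ((L - 2 : ℕ) : ZMod p) + 2 = α + ((L : ℕ) : ZMod p) := by
      push_cast [Nat.cast_sub (by omega : 2 ≤ L)]
      ring
    have h2 : α + ((L - 2 : ℕ) : ZMod p) + 2 ∉ Arc α L := by
      rw [he, hmem _ (by omega)]; omega
    exact fun h => h2 (h.mp h1)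
  have k4 : α + ((L - 1 : ℕ) : ZMod p) ∈ SW 2 (Arc α L) := by
    rw [SW, Set.mem_setOf_eq]
    have h1 : α + ((L - 1 : ℕ) : ZMod p) ∈ Arc α L := by
      rw [hmem _ (by omega)]; omega
    have he : α + ((L - 1 : ℕ) : ZMod p) + 2 = α + ((L + 1 : ℕ) : ZMod p) := by
      push_cast [Nat.cast_sub (by omega : 1 ≤ L)]
      ring
    have h2 : α + ((L - 1 : ℕ) : ZMod p) + 2 ∉ Arc α L := by
      rw [he, hmem _ (by omega)]; omega
    exact fun h => h2 (h.mp h1)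
  have hne : ∀ c d : ℕ, c < p → d < p → c ≠ d →
      α + ((c : ℕ) : ZMod p) ≠ α + ((d : ℕ) : ZMod p) := by
    intro c d hc hd hcd h
    have : ((c : ℕ) : ZMod p) = ((d : ℕ) : ZMod p) := by linear_combination h
    exact hcd ((cast_inj_of_lt hc hd).mp this)
  exact four_le_ncard k1 k2 k3 k4
    (hne _ _ (by omega) (by omega) (by omega)) (hne _ _ (by omega) (by omega) (by omega))
    (hne _ _ (by omega) (by omega) (by omega)) (hne _ _ (by omega) (by omega) (by omega))
    (hne _ _ (by omega) (by omega) (by omega)) (hne _ _ (by omega) (by omega) (by omega))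
    (Set.toFinite _)

end BL
namespace BL

variable {p : ℕ} [NeZero p]

lemma mem_AU {A : Set (Bool × ZMod p)} {i : ZMod p} : i ∈ AU A ↔ (false, i) ∈ A := Iff.rfl
lemma mem_AV {A : Set (Bool × ZMod p)} {i : ZMod p} : i ∈ AV A ↔ (true, i) ∈ A := Iff.rfl
lemma mem_RM {A : Set (Bool × ZMod p)} {i : ZMod p} :
    i ∈ RM A ↔ ¬ ((false, i) ∈ A ↔ (true, i) ∈ A) := Iff.rfl

lemma add_cast_ne {α : ZMod p} {c d : ℕ} (hc : c < p) (hd : d < p) (hcd : c ≠ d) :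
    α + (c : ZMod p) ≠ α + (d : ZMod p) := by
  intro h
  have : ((c : ℕ) : ZMod p) = ((d : ℕ) : ZMod p) := by linear_combination h
  exact hcd ((cast_inj_of_lt hc hd).mp this)

lemma five_le_ncard {X : Type} {T : Set X} {x y z w u : X} (hx : x ∈ T) (hy : y ∈ T)
    (hz : z ∈ T) (hw : w ∈ T) (hu : u ∈ T)
    (h1 : x ≠ y) (h2 : x ≠ z) (h3 : x ≠ w) (h4 : x ≠ u) (h5 : y ≠ z) (h6 : y ≠ w)
    (h7 : y ≠ u) (h8 : z ≠ w) (h9 : z ≠ u) (h10 : w ≠ u) (hfin : T.Finite) : 5 ≤ T.ncard := by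
  classical
  have hsub : ({x, y, z, w, u} : Set X) ⊆ T := by
    intro v hv
    rcases hv with h | h | h | h | h
    · exact h ▸ hx
    · exact h ▸ hy
    · exact h ▸ hz
    · exact h ▸ hw
    · exact (Set.mem_singleton_iff.mp h) ▸ hu
  have h5' : ({x, y, z, w, u} : Set X).ncard = 5 := by
    rw [Set.ncard_insert_of_notMem (by simp [h1, h2, h3, h4]) (Set.toFinite _),
      Set.ncard_insert_of_notMem (by simp [h5, h6, h7]) (Set.toFinite _),
      Set.ncard_insert_of_notMem (by simp [h8, h9]) (Set.toFinite _),
      Set.ncard_insert_of_notMem (by simp [h10]) (Set.toFinite _), Set.ncard_singleton]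
  rw [← h5']
  exact Set.ncard_le_ncard hsub hfin

lemma six_ne_zero' (hp : 5 ≤ p) (he : Even p → 10 ≤ p) : (6 : ZMod p) ≠ 0 := by
  intro h
  have h' : ((6 : ℕ) : ZMod p) = 0 := by push_cast; exact h
  have hdvd := (cast_eq_zero_iff_dvd 6).mp h'
  have hle := Nat.le_of_dvd (by norm_num) hdvd
  have hp6 : p = 5 ∨ p = 6 := by omega
  rcases hp6 with h5 | h6'
  · subst h5; revert hdvd; decide
  · have := he (Nat.even_iff.mpr (by omega))
    omega

lemma small_even_ne_zero (hp : 5 ≤ p) (he : Even p → 10 ≤ p) {n : ℕ} (h1 : 0 < n)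
    (h2 : n ≤ 8) (h3 : n % 2 = 0) : ((n : ℕ) : ZMod p) ≠ 0 := by
  intro h
  have hdvd := (cast_eq_zero_iff_dvd n).mp h
  have hle := Nat.le_of_dvd h1 hdvd
  have hpo : p % 2 = 1 := by
    by_contra hpo
    have := he (Nat.even_iff.mpr (by omega))
    omega
  obtain ⟨k, hk⟩ := hdvd
  have hk1 : k = 0 ∨ k = 1 := by
    by_contra hc
    push_neg at hc
    have h2k : 2 ≤ k := by omega
    have := Nat.mul_le_mul_left p h2k
    omega
  rcases hk1 with rfl | rfl <;> omega

/-- In the even case, a mixed (parity-determined) `V`-side forces ≥ 3 rung mismatches. -/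
lemma mixed_contra (hpe : p % 2 = 0) (hp10 : 10 ≤ p) {A : Set (Bool × ZMod p)}
    {α : ZMod p} {L : ℕ} (hL1 : 1 ≤ L) (hL2 : L ≤ p - 1)
    (hU : ∀ i, i ∈ AU A ↔ i ∈ Arc α L) {ε : ℕ} (hε : ε < 2)
    (hAVp : ∀ i, i ∈ AV A ↔ i.val % 2 = ε) : 3 ≤ (RM A).ncard := by
  have harc : ∀ c : ℕ, c + 1 < L → ∃ t : ℕ, (t = c ∨ t = c + 1) ∧ α + (t : ZMod p) ∈ RM A := by
    intro c hc
    obtain ⟨t, ht, hpar⟩ := exists_parity_off hpe α c (by omega) (1 - ε) (by omega)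
    refine ⟨t, ht, ?_⟩
    rw [mem_RM]
    have hU' : (false, α + (t : ZMod p)) ∈ A := by
      rw [← mem_AU, hU, arc_off (by omega)]
      omega
    have hV' : (true, α + (t : ZMod p)) ∉ A := by
      rw [← mem_AV, hAVp]
      omega
    exact fun h => hV' (h.mp hU')
  have hcoarc : ∀ c : ℕ, L ≤ c → c + 1 ≤ p - 1 →
      ∃ t : ℕ, (t = c ∨ t = c + 1) ∧ α + (t : ZMod p) ∈ RM A := by
    intro c hcL hc
    obtain ⟨t, ht, hpar⟩ := exists_parity_off hpe α c (by omega) ε (by omega)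
    refine ⟨t, ht, ?_⟩
    rw [mem_RM]
    have hU' : (false, α + (t : ZMod p)) ∉ A := by
      rw [← mem_AU, hU, arc_off (by omega)]
      omega
    have hV' : (true, α + (t : ZMod p)) ∈ A := by
      rw [← mem_AV, hAVp]
      omega
    exact fun h => hU' (h.mpr hV')
  by_cases h6L : 6 ≤ L
  · obtain ⟨t1, ht1, hm1⟩ := harc 0 (by omega)
    obtain ⟨t2, ht2, hm2⟩ := harc 2 (by omega)
    obtain ⟨t3, ht3, hm3⟩ := harc 4 (by omega)
    exact three_le_ncard hm1 hm2 hm3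
      (add_cast_ne (by omega) (by omega) (by omega))
      (add_cast_ne (by omega) (by omega) (by omega))
      (add_cast_ne (by omega) (by omega) (by omega)) (Set.toFinite _)
  · by_cases h4L : L ≤ 4
    · obtain ⟨t1, ht1, hm1⟩ := hcoarc L (le_refl L) (by omega)
      obtain ⟨t2, ht2, hm2⟩ := hcoarc (L + 2) (by omega) (by omega)
      obtain ⟨t3, ht3, hm3⟩ := hcoarc (L + 4) (by omega) (by omega)
      exact three_le_ncard hm1 hm2 hm3
        (add_cast_ne (by omega) (by omega) (by omega))
        (add_cast_ne (by omega) (by omega) (by omega))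
        (add_cast_ne (by omega) (by omega) (by omega)) (Set.toFinite _)
    · have hL5 : L = 5 := by omega
      obtain ⟨t1, ht1, hm1⟩ := harc 0 (by omega)
      obtain ⟨t2, ht2, hm2⟩ := harc 2 (by omega)
      obtain ⟨t3, ht3, hm3⟩ := hcoarc 5 (by omega) (by omega)
      exact three_le_ncard hm1 hm2 hm3
        (add_cast_ne (by omega) (by omega) (by omega))
        (add_cast_ne (by omega) (by omega) (by omega))
        (add_cast_ne (by omega) (by omega) (by omega)) (Set.toFinite _)

end BL
namespace BL

variable {p : ℕ} [NeZero p]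

lemma arc_one_eq {α iz : ZMod p} (hmem : iz ∈ Arc α 1) : iz = α := by
  rw [mem_arc] at hmem
  have h0 : (iz - α).val = 0 := by omega
  have h1 : iz - α = 0 := by rw [← cast_val_eq (iz - α), h0]; simp
  linear_combination h1

lemma cut_side (hp : 5 ≤ p) (he : Even p → 10 ≤ p) (A : Set (Bool × ZMod p))
    (hA : A.Nonempty) (hAc : Aᶜ.Nonempty) (hcut : (cutEdges (biladder p) A).ncard < 5) :
    ¬ HasCircuit ((biladder p).induce A) ∨ ¬ HasCircuit ((biladder p).induce Aᶜ) := by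
  classical
  have htwo : (2 : ZMod p) ≠ 0 := two_ne_zero' hp
  have hsix : (6 : ZMod p) ≠ 0 := six_ne_zero' hp he
  have hsum := count_cut hp A
  set a := (SW 1 (AU A)).ncard with ha
  set b := (SW 2 (AV A)).ncard with hb
  set r := (RM A).ncard with hr
  have hbound : a + b + r ≤ 4 := by omega
  have haeven : Even a := even_ncard_SW 1 (AU A)
  have ha04 : a = 0 ∨ a = 2 ∨ a = 4 := by
    rcases haeven with ⟨k, hk⟩
    omega
  rcases ha04 with ha0 | ha2 | ha4
  -- ==================== CASE a = 0 ====================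
  · have hSWU : SW 1 (AU A) = ∅ := by
      rw [← Set.ncard_eq_zero (Set.toFinite _)]
      omega
    have hconst := const_of_SW_one_empty hSWU
    by_cases h0 : (0 : ZMod p) ∈ AU A
    · -- all of the `u` side is in `A`
      have hall : ∀ i, (false, i) ∈ A := fun i => (hconst 0 i).mp h0
      have hR : ∀ i, i ∈ RM A ↔ (true, i) ∉ A := by
        intro i
        rw [mem_RM]
        constructor
        · intro h hv; exact h (iff_of_true (hall i) hv)
        · intro h hiff; exact h (hiff.mp (hall i))
      by_cases hb0 : SW 2 (AV A) = ∅
      · exfalso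
        obtain ⟨z, hz⟩ := hAc
        obtain ⟨bz, iz⟩ := z
        cases bz
        · exact hz (hall iz)
        · have hstep : ∀ t : ℕ, (true, iz + 2 * (t : ZMod p)) ∉ A := by
            intro t hmem
            have hst := step2_reach hb0 iz t
            rw [mem_AV, mem_AV] at hst
            exact hz (hst.mpr hmem)
          have hmm : ∀ t : ℕ, iz + 2 * (t : ZMod p) ∈ RM A := by
            intro t
            exact (hR _).mpr (hstep t)
          have hne2 : ∀ t s : ℕ, t < s → s ≤ 4 →
              iz + 2 * (t : ZMod p) ≠ iz + 2 * (s : ZMod p) := by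
            intro t s hts hs4 hconteq
            have hcast : ((2 * s - 2 * t : ℕ) : ZMod p) = 0 := by
              push_cast [Nat.cast_sub (by omega : 2 * t ≤ 2 * s)]
              linear_combination -hconteq
            exact small_even_ne_zero hp he (n := 2 * s - 2 * t) (by omega) (by omega)
              (by omega) hcast
          have h5 := five_le_ncard (hmm 0) (hmm 1) (hmm 2) (hmm 3) (hmm 4)
            (hne2 0 1 (by omega) (by omega)) (hne2 0 2 (by omega) (by omega))
            (hne2 0 3 (by omega) (by omega)) (hne2 0 4 (by omega) (by omega))
            (hne2 1 2 (by omega) (by omega)) (hne2 1 3 (by omega) (by omega))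
            (hne2 1 4 (by omega) (by omega)) (hne2 2 3 (by omega) (by omega))
            (hne2 2 4 (by omega) (by omega)) (hne2 3 4 (by omega) (by omega))
            (Set.toFinite _)
          omega
      · have hb1 : 1 ≤ b := by
          rw [hb]
          exact (Set.ncard_pos (Set.toFinite _)).mpr (Set.nonempty_iff_ne_empty.mpr hb0)
        right
        apply noCircuit_trueSide hp htwo hsix
        · intro z hz
          obtain ⟨bz, iz⟩ := z
          cases bz
          · exact absurd (hall iz) hz
          · rfl
        · have hsubm : Aᶜ ⊆ (fun i => ((true : Bool), i)) '' (RM A) := by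
            rintro ⟨bz, iz⟩ hz
            cases bz
            · exact absurd (hall iz) hz
            · exact ⟨iz, (hR iz).mpr hz, rfl⟩
          calc Aᶜ.ncard ≤ ((fun i => ((true : Bool), i)) '' (RM A)).ncard :=
                Set.ncard_le_ncard hsubm (Set.toFinite _)
            _ ≤ (RM A).ncard := Set.ncard_image_le (Set.toFinite _)
            _ ≤ 3 := by omega
    · -- none of the `u` side is in `A`
      have hnone : ∀ i, (false, i) ∉ A := fun i h => h0 ((hconst i 0).mp h)
      have hR : ∀ i, i ∈ RM A ↔ (true, i) ∈ A := by
        intro i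
        rw [mem_RM]
        constructor
        · intro h
          by_contra hv
          exact h (iff_of_false (hnone i) hv)
        · intro h hiff; exact (hnone i) (hiff.mpr h)
      by_cases hb0 : SW 2 (AV A) = ∅
      · exfalso
        obtain ⟨z, hz⟩ := hA
        obtain ⟨bz, iz⟩ := z
        cases bz
        · exact hnone iz hz
        · have hstep : ∀ t : ℕ, (true, iz + 2 * (t : ZMod p)) ∈ A := by
            intro t
            have hst := step2_reach hb0 iz t
            rw [mem_AV, mem_AV] at hst
            exact hst.mp hz
          have hmm : ∀ t : ℕ, iz + 2 * (t : ZMod p) ∈ RM A := fun t => (hR _).mpr (hstep t)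
          have hne2 : ∀ t s : ℕ, t < s → s ≤ 4 →
              iz + 2 * (t : ZMod p) ≠ iz + 2 * (s : ZMod p) := by
            intro t s hts hs4 hconteq
            have hcast : ((2 * s - 2 * t : ℕ) : ZMod p) = 0 := by
              push_cast [Nat.cast_sub (by omega : 2 * t ≤ 2 * s)]
              linear_combination -hconteq
            exact small_even_ne_zero hp he (n := 2 * s - 2 * t) (by omega) (by omega)
              (by omega) hcast
          have h5 := five_le_ncard (hmm 0) (hmm 1) (hmm 2) (hmm 3) (hmm 4)
            (hne2 0 1 (by omega) (by omega)) (hne2 0 2 (by omega) (by omega))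
            (hne2 0 3 (by omega) (by omega)) (hne2 0 4 (by omega) (by omega))
            (hne2 1 2 (by omega) (by omega)) (hne2 1 3 (by omega) (by omega))
            (hne2 1 4 (by omega) (by omega)) (hne2 2 3 (by omega) (by omega))
            (hne2 2 4 (by omega) (by omega)) (hne2 3 4 (by omega) (by omega))
            (Set.toFinite _)
          omega
      · have hb1 : 1 ≤ b := by
          rw [hb]
          exact (Set.ncard_pos (Set.toFinite _)).mpr (Set.nonempty_iff_ne_empty.mpr hb0)
        left
        apply noCircuit_trueSide hp htwo hsix
        · intro z hz
          obtain ⟨bz, iz⟩ := z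
          cases bz
          · exact absurd hz (hnone iz)
          · rfl
        · have hsubm : A ⊆ (fun i => ((true : Bool), i)) '' (RM A) := by
            rintro ⟨bz, iz⟩ hz
            cases bz
            · exact absurd hz (hnone iz)
            · exact ⟨iz, (hR iz).mpr hz, rfl⟩
          calc A.ncard ≤ ((fun i => ((true : Bool), i)) '' (RM A)).ncard :=
                Set.ncard_le_ncard hsubm (Set.toFinite _)
            _ ≤ (RM A).ncard := Set.ncard_image_le (Set.toFinite _)
            _ ≤ 3 := by omega
  -- ==================== CASE a = 2 ====================
  · obtain ⟨i, j, hij, hswij⟩ := Set.ncard_eq_two.mp (by rw [← ha]; exact ha2 : (SW 1 (AU A)).ncard = 2)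
    obtain ⟨α, L, hL1, hL2, hUarc⟩ := arc_of_two_switches hij hswij
    have hUiff : ∀ i', (false, i') ∈ A ↔ i' ∈ Arc α L := by
      intro i'
      rw [← mem_AU, hUarc]
    have hconcl_empty : (∀ i', (true, i') ∉ A) →
        (¬ HasCircuit ((biladder p).induce A) ∨ ¬ HasCircuit ((biladder p).induce Aᶜ)) := by
      intro hVe
      left
      apply noCircuit_falseArc hp (α := α) (L := L) (by omega)
      rintro ⟨bz, iz⟩
      cases bz
      · constructor
        · intro h; exact ⟨rfl, (hUiff iz).mp h⟩
        · intro h; exact (hUiff iz).mpr h.2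
      · constructor
        · intro h; exact absurd h (hVe iz)
        · intro h; exact absurd h.1 (by simp)
    have hconcl_univ : (∀ i', (true, i') ∈ A) →
        (¬ HasCircuit ((biladder p).induce A) ∨ ¬ HasCircuit ((biladder p).induce Aᶜ)) := by
      intro hVa
      right
      have hcompl := arc_compl (α := α) (L := L) (by omega)
      apply noCircuit_falseArc hp (α := α + ((L : ℕ) : ZMod p)) (L := p - L) (by omega)
      rintro ⟨bz, iz⟩
      cases bz
      · constructor
        · intro h
          refine ⟨rfl, ?_⟩
          rw [← hcompl]
          exact fun hmem => (h : (false, iz) ∉ A) ((hUiff iz).mpr hmem)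
        · intro h
          have : iz ∈ (Arc α L)ᶜ := by rw [hcompl]; exact h.2
          exact fun hmem => this ((hUiff iz).mp hmem)
      · constructor
        · intro h; exact absurd (hVa iz) h
        · intro h; exact absurd h.1 (by simp)
    by_cases hb0 : SW 2 (AV A) = ∅
    · by_cases hodd : p % 2 = 1
      · by_cases hv0 : (0 : ZMod p) ∈ AV A
        · exact hconcl_univ (fun i' => mem_AV.mp ((step2_const_of_odd hodd hb0 0 i').mp hv0))
        · exact hconcl_empty (fun i' h =>
            hv0 ((step2_const_of_odd hodd hb0 i' 0).mp (mem_AV.mpr h)))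
      · have hpe : p % 2 = 0 := by omega
        have hp10 : 10 ≤ p := he (Nat.even_iff.mpr hpe)
        have hpar0 : ∀ k : ZMod p, k.val % 2 = 0 → ((0 : ZMod p) ∈ AV A ↔ k ∈ AV A) := by
          intro k hk
          have hst := step2_reach hb0 0 (k.val / 2)
          have he2 : (0 : ZMod p) + 2 * ((k.val / 2 : ℕ) : ZMod p) = k := by
            have hc : ((2 * (k.val / 2) : ℕ) : ZMod p) = ((k.val : ℕ) : ZMod p) := by
              congr 1
              omega
            push_cast at hc
            rw [cast_val_eq] at hc
            linear_combination hc
          rwa [he2] at hst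
        have hpar1 : ∀ k : ZMod p, k.val % 2 = 1 → ((1 : ZMod p) ∈ AV A ↔ k ∈ AV A) := by
          intro k hk
          have hst := step2_reach hb0 1 ((k.val - 1) / 2)
          have he2 : (1 : ZMod p) + 2 * (((k.val - 1) / 2 : ℕ) : ZMod p) = k := by
            have hc : ((2 * ((k.val - 1) / 2) : ℕ) : ZMod p) = ((k.val - 1 : ℕ) : ZMod p) := by
              congr 1
              omega
            rw [Nat.cast_sub (by omega : 1 ≤ k.val), cast_val_eq] at hc
            push_cast at hc
            linear_combination hc
          rwa [he2] at hst
        by_cases hv0 : (0 : ZMod p) ∈ AV A <;> by_cases hv1 : (1 : ZMod p) ∈ AV A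
        · apply hconcl_univ
          intro i'
          rcases (by omega : i'.val % 2 = 0 ∨ i'.val % 2 = 1) with hpar | hpar
          · exact mem_AV.mp ((hpar0 i' hpar).mp hv0)
          · exact mem_AV.mp ((hpar1 i' hpar).mp hv1)
        · exfalso
          have hAVp : ∀ i'', i'' ∈ AV A ↔ i''.val % 2 = 0 := by
            intro i''
            constructor
            · intro hmem
              by_contra hodd'
              exact hv1 ((hpar1 i'' (by omega)).mpr hmem)
            · intro heven
              exact (hpar0 i'' heven).mp hv0
          have h3r := mixed_contra hpe hp10 hL1 hL2
            (fun i' => by rw [hUarc]) (ε := 0) (by omega) hAVp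
          omega
        · exfalso
          have hAVp : ∀ i'', i'' ∈ AV A ↔ i''.val % 2 = 1 := by
            intro i''
            constructor
            · intro hmem
              by_contra hodd'
              exact hv0 ((hpar0 i'' (by omega)).mpr hmem)
            · intro hoddv
              exact (hpar1 i'' hoddv).mp hv1
          have h3r := mixed_contra hpe hp10 hL1 hL2
            (fun i' => by rw [hUarc]) (ε := 1) (by omega) hAVp
          omega
        · apply hconcl_empty
          intro i' h
          rcases (by omega : i'.val % 2 = 0 ∨ i'.val % 2 = 1) with hpar | hpar
          · exact hv0 ((hpar0 i' hpar).mpr (mem_AV.mpr h))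
          · exact hv1 ((hpar1 i' hpar).mpr (mem_AV.mpr h))
    · -- b = 2, r = 0
      have hbeven : Even b := even_ncard_SW 2 (AV A)
      have hb1 : 1 ≤ b := by
        rw [hb]
        exact (Set.ncard_pos (Set.toFinite _)).mpr (Set.nonempty_iff_ne_empty.mpr hb0)
      have hb2 : b = 2 := by
        rcases hbeven with ⟨k, hk⟩
        omega
      have hr0 : RM A = ∅ := by
        rw [← Set.ncard_eq_zero (Set.toFinite _)]
        omega
      have hRMiff : ∀ i', ((false, i') ∈ A ↔ (true, i') ∈ A) := by
        intro i'
        by_contra hc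
        have : i' ∈ RM A := mem_RM.mpr hc
        rw [hr0] at this
        exact Set.notMem_empty _ this
      have hAVarc : AV A = Arc α L := by
        ext i'
        rw [mem_AV, ← hRMiff i', ← mem_AU, hUarc]
      have hL1p : L = 1 ∨ L = p - 1 := by
        by_contra hc
        push_neg at hc
        have h4 := four_switches_of_midarc hp (α := α) (L := L) (by omega) (by omega)
        rw [← hAVarc] at h4
        omega
      rcases hL1p with hL1' | hLp1
      · subst hL1'
        left
        apply noCircuit_small (x := ((false : Bool), α)) (y := ((true : Bool), α))
        rintro ⟨bz, iz⟩ hz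
        cases bz
        · left
          have : iz = α := arc_one_eq ((hUiff iz).mp hz)
          rw [this]
        · right
          have hAViff : (true, iz) ∈ A ↔ iz ∈ Arc α 1 := by
            rw [← mem_AV, hAVarc]
          have : iz = α := arc_one_eq (hAViff.mp hz)
          rw [this]
      · subst hLp1
        right
        have hcompl := arc_compl (α := α) (L := p - 1) (by omega)
        have harc1 : ∀ iz : ZMod p, iz ∉ Arc α (p - 1) → iz = α + ((p - 1 : ℕ) : ZMod p) := by
          intro iz hmem
          have h1 : iz ∈ Arc (α + ((p - 1 : ℕ) : ZMod p)) (p - (p - 1)) := by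
            rw [← hcompl]
            exact hmem
          rw [show p - (p - 1) = 1 by omega] at h1
          exact arc_one_eq h1
        apply noCircuit_small (x := ((false : Bool), α + ((p - 1 : ℕ) : ZMod p)))
          (y := ((true : Bool), α + ((p - 1 : ℕ) : ZMod p)))
        rintro ⟨bz, iz⟩ hz
        cases bz
        · left
          have : iz = α + ((p - 1 : ℕ) : ZMod p) :=
            harc1 iz (fun hmem => hz ((hUiff iz).mpr hmem))
          rw [this]
        · right
          have hAViff : (true, iz) ∈ A ↔ iz ∈ Arc α (p - 1) := by
            rw [← mem_AV, hAVarc]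
          have : iz = α + ((p - 1 : ℕ) : ZMod p) :=
            harc1 iz (fun hmem => hz (hAViff.mpr hmem))
          rw [this]
  -- ==================== CASE a = 4 ====================
  · exfalso
    have hb0 : SW 2 (AV A) = ∅ := by
      rw [← Set.ncard_eq_zero (Set.toFinite _)]
      omega
    have hr0 : RM A = ∅ := by
      rw [← Set.ncard_eq_zero (Set.toFinite _)]
      omega
    have hRMiff : ∀ i', ((false, i') ∈ A ↔ (true, i') ∈ A) := by
      intro i'
      by_contra hc
      have : i' ∈ RM A := mem_RM.mpr hc
      rw [hr0] at this
      exact Set.notMem_empty _ this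
    have hUstep : ∀ i', ((false, i') ∈ A ↔ (false, i' + 2) ∈ A) := by
      intro i'
      rw [hRMiff i', hRMiff (i' + 2)]
      have hst := step2_reach hb0 i' 1
      rw [mem_AV, mem_AV] at hst
      have : i' + 2 * ((1 : ℕ) : ZMod p) = i' + 2 := by push_cast; ring
      rwa [this] at hst
    have hclosed : ∀ k, k ∈ SW 1 (AU A) → k + 1 ∈ SW 1 (AU A) := by
      intro k hk
      rw [SW, Set.mem_setOf_eq] at hk ⊢
      intro hiff
      apply hk
      rw [mem_AU, mem_AU] at hiff ⊢
      have h2' := hUstep k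
      rw [show k + 1 + 1 = k + 2 by ring] at hiff
      exact h2'.trans hiff.symm
    have hne : (SW 1 (AU A)).Nonempty := by
      have hpos : 0 < (SW 1 (AU A)).ncard := by omega
      exact (Set.ncard_pos (Set.toFinite _)).mp hpos
    obtain ⟨k0, hk0⟩ := hne
    have hallsw : ∀ t : ℕ, k0 + (t : ZMod p) ∈ SW 1 (AU A) := by
      intro t
      induction t with
      | zero => simpa using hk0
      | succ n ih =>
          have := hclosed _ ih
          rwa [show k0 + (n : ZMod p) + 1 = k0 + ((n + 1 : ℕ) : ZMod p) by push_cast; ring]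
            at this
    have huniv : SW 1 (AU A) = Set.univ := by
      ext k
      simp only [Set.mem_univ, iff_true]
      have := hallsw ((k - k0).val)
      rwa [sub_val_cast] at this
    have hap : a = p := by
      rw [ha, huniv, Set.ncard_univ, Nat.card_zmod]
    omega

end BL
namespace BL

variable {p : ℕ} [NeZero p]

lemma dvd_between {n : ℕ} (hd : p ∣ n) (h1 : 0 < n) (h2 : n < 2 * p) : n = p := by
  obtain ⟨k, hk⟩ := hd
  rcases Nat.lt_or_ge k 1 with h | h
  · have hk0 : k = 0 := by omega
    subst hk0
    simp at hk
    omega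
  · rcases Nat.lt_or_ge k 2 with h' | h'
    · have hk0 : k = 1 := by omega
      subst hk0
      omega
    · have hmm := Nat.mul_le_mul_left p h'
      omega

lemma reach_u_line {T : Set (Bool × ZMod p)} (hp : 5 ≤ p) (x : ZMod p) (t : ℕ)
    (hfree : ∀ s, s ≤ t → ((false : Bool), x + (s : ZMod p)) ∈ T)
    {z1 z2 : ↥T} (hz1 : (z1 : Bool × ZMod p) = (false, x))
    (hz2 : (z2 : Bool × ZMod p) = (false, x + (t : ZMod p))) :
    ((biladder p).induce T).Reachable z1 z2 := by
  have hadj : ∀ s, s < t → (biladder p).Adj ((false : Bool), x + (s : ZMod p))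
      ((false : Bool), x + ((s + 1 : ℕ) : ZMod p)) := by
    intro s hs
    apply (adj_uu_iff hp).mpr
    left
    push_cast
    ring
  have h := reach_chain (G := biladder p) (A := T)
    (fun s => ((false : Bool), x + (s : ZMod p))) t (fun s hs => hfree s hs) hadj
  have e1 : z1 = ⟨((false : Bool), x + ((0 : ℕ) : ZMod p)), hfree 0 (by omega)⟩ := by
    apply Subtype.ext
    rw [hz1]
    simp
  have e2 : z2 = ⟨((false : Bool), x + ((t : ℕ) : ZMod p)), hfree t le_rfl⟩ := by
    apply Subtype.ext
    rw [hz2]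
  rw [e1, e2]
  exact h

lemma reach_v_line {T : Set (Bool × ZMod p)} (hp : 5 ≤ p) (x : ZMod p) (t : ℕ)
    (hfree : ∀ s, s ≤ t → ((true : Bool), x + 2 * (s : ZMod p)) ∈ T)
    {z1 z2 : ↥T} (hz1 : (z1 : Bool × ZMod p) = (true, x))
    (hz2 : (z2 : Bool × ZMod p) = (true, x + 2 * (t : ZMod p))) :
    ((biladder p).induce T).Reachable z1 z2 := by
  have hadj : ∀ s, s < t → (biladder p).Adj ((true : Bool), x + 2 * (s : ZMod p))
      ((true : Bool), x + 2 * ((s + 1 : ℕ) : ZMod p)) := by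
    intro s hs
    apply (adj_vv_iff hp).mpr
    left
    push_cast
    ring
  have h := reach_chain (G := biladder p) (A := T)
    (fun s => ((true : Bool), x + 2 * (s : ZMod p))) t (fun s hs => hfree s hs) hadj
  have e1 : z1 = ⟨((true : Bool), x + 2 * ((0 : ℕ) : ZMod p)), hfree 0 (by omega)⟩ := by
    apply Subtype.ext
    rw [hz1]
    simp
  have e2 : z2 = ⟨((true : Bool), x + 2 * ((t : ℕ) : ZMod p)), hfree t le_rfl⟩ := by
    apply Subtype.ext
    rw [hz2]
  rw [e1, e2]
  exact h

lemma reach_rung {T : Set (Bool × ZMod p)} {i : ZMod p} (h1 : ((false : Bool), i) ∈ T)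
    (h2 : ((true : Bool), i) ∈ T) :
    ((biladder p).induce T).Reachable ⟨((false : Bool), i), h1⟩ ⟨((true : Bool), i), h2⟩ := by
  have hadj : ((biladder p).induce T).Adj ⟨((false : Bool), i), h1⟩ ⟨((true : Bool), i), h2⟩ :=
    adj_uv_iff.mpr rfl
  exact hadj.reachable

lemma reach_uu (hp : 5 ≤ p) {T : Set (Bool × ZMod p)}
    (hone : ∀ k1 k2 : ZMod p, ((false : Bool), k1) ∉ T → ((false : Bool), k2) ∉ T → k1 = k2)
    {x y : ZMod p} (hx : ((false : Bool), x) ∈ T) (hy : ((false : Bool), y) ∈ T)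
    {z1 z2 : ↥T} (hz1 : (z1 : Bool × ZMod p) = (false, x))
    (hz2 : (z2 : Bool × ZMod p) = (false, y)) :
    ((biladder p).induce T).Reachable z1 z2 := by
  by_cases hxy : x = y
  · have : z1 = z2 := Subtype.ext (by rw [hz1, hz2, hxy])
    rw [this]
  · set t := (y - x).val with htdef
    have ht1 : t ≠ 0 := val_sub_ne_zero hxy
    have htp : t < p := ZMod.val_lt _
    have hxt : x + (t : ZMod p) = y := sub_val_cast
    by_cases hfwd : ∀ s, s ≤ t → ((false : Bool), x + (s : ZMod p)) ∈ T
    · exact reach_u_line hp x t hfwd hz1 (by rw [hz2, hxt])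
    · push_neg at hfwd
      obtain ⟨s0, hs0t, hbad⟩ := hfwd
      have hs01 : 1 ≤ s0 := by
        rcases Nat.eq_zero_or_pos s0 with h | h
        · exfalso
          apply hbad
          rw [h]
          simpa using hx
        · exact h
      have hs0t' : s0 < t := by
        rcases Nat.lt_or_ge s0 t with h | h
        · exact h
        · exfalso
          apply hbad
          have : s0 = t := by omega
          rw [this, hxt]
          exact hy
      set t' := (x - y).val with ht'def
      have ht'1 : t' ≠ 0 := val_sub_ne_zero (Ne.symm hxy)
      have ht'p : t' < p := ZMod.val_lt _
      have hyt : y + (t' : ZMod p) = x := sub_val_cast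
      have hsum : t + t' = p := by
        apply dvd_between _ (by omega) (by omega)
        apply (cast_eq_zero_iff_dvd _).mp
        push_cast
        rw [show ((t : ℕ) : ZMod p) = y - x from cast_val_eq _,
          show ((t' : ℕ) : ZMod p) = x - y from cast_val_eq _]
        ring
      have hbwd : ∀ s, s ≤ t' → ((false : Bool), y + (s : ZMod p)) ∈ T := by
        intro s hs
        by_contra hbad2
        have heq := hone _ _ hbad2 hbad
        have hc : ((t + s : ℕ) : ZMod p) = ((s0 : ℕ) : ZMod p) := by
          push_cast
          rw [show ((t : ℕ) : ZMod p) = y - x from cast_val_eq _]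
          linear_combination heq
        rcases Nat.lt_or_ge (t + s) p with hlt | hge
        · have := (cast_inj_of_lt hlt (by omega : s0 < p)).mp hc
          omega
        · have hts : t + s = p := by omega
          rw [hts, ZMod.natCast_self] at hc
          have hdv := (cast_eq_zero_iff_dvd s0).mp hc.symm
          have hge2 := Nat.le_of_dvd (by omega) hdv
          omega
      exact (reach_u_line hp y t' hbwd hz2 (by rw [hz1, hyt])).symm

lemma double_solve (hodd : p % 2 = 1) (i j : ZMod p) :
    i + 2 * (((j - i).val * ((p + 1) / 2) : ℕ) : ZMod p) = j := by
  have h2 : ((2 * ((j - i).val * ((p + 1) / 2)) : ℕ) : ZMod p) = (((j - i).val * (p + 1) : ℕ) : ZMod p) := by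
    congr 1
    have hh : 2 * ((p + 1) / 2) = p + 1 := by omega
    rw [show 2 * ((j - i).val * ((p + 1) / 2)) = (j - i).val * (2 * ((p + 1) / 2)) by ring, hh]
  have h3 : (((j - i).val * (p + 1) : ℕ) : ZMod p) = j - i := by
    push_cast
    rw [ZMod.natCast_self, cast_val_eq]
    ring
  calc i + 2 * (((j - i).val * ((p + 1) / 2) : ℕ) : ZMod p)
      = i + ((2 * ((j - i).val * ((p + 1) / 2)) : ℕ) : ZMod p) := by push_cast; ring
    _ = i + (j - i) := by rw [h2, h3]
    _ = j := by ring

lemma val_add_parity (hpe : p % 2 = 0) (x y : ZMod p) :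
    (x + y).val % 2 = (x.val + y.val) % 2 := by
  rw [ZMod.val_add]
  exact Nat.mod_mod_of_dvd _ (by omega)

end BL
namespace BL

variable {p : ℕ} [NeZero p]

lemma induce_connected (hp : 5 ≤ p) (he : Even p → 10 ≤ p) (S : Set (Bool × ZMod p))
    (hS : S.ncard < 3) : ((biladder p).induce Sᶜ).Connected := by
  classical
  have hone' : (1 : ZMod p) ≠ 0 := one_ne_zero' hp
  have htwo : (2 : ZMod p) ≠ 0 := two_ne_zero' hp
  haveI : Fact (1 < p) := ⟨by omega⟩
  have hS2 : ∀ x y z : Bool × ZMod p, x ∈ S → y ∈ S → z ∈ S → (x = y ∨ x = z ∨ y = z) := by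
    intro x y z hx hy hz
    by_contra hc
    push_neg at hc
    have := three_le_ncard hx hy hz hc.1 hc.2.1 hc.2.2 (Set.toFinite _)
    omega
  have hTne : (Sᶜ).Nonempty := by
    by_contra hc
    rw [Set.not_nonempty_iff_eq_empty, Set.compl_empty_iff] at hc
    have h1 : ((false : Bool), (0 : ZMod p)) ∈ S := by rw [hc]; trivial
    have h2 : ((false : Bool), (1 : ZMod p)) ∈ S := by rw [hc]; trivial
    have h3 : ((true : Bool), (0 : ZMod p)) ∈ S := by rw [hc]; trivial
    rcases hS2 _ _ _ h1 h2 h3 with h | h | h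
    · rw [Prod.mk.injEq] at h
      exact hone' h.2.symm
    · simp at h
    · simp at h
  rw [SimpleGraph.connected_iff]
  refine ⟨?_, hTne.to_subtype⟩
  intro z1 z2
  by_cases hv : ∀ i : ZMod p, ((true : Bool), i) ∉ S
  · -- ======= no vertex of the v-cycle removed =======
    have hvT : ∀ i : ZMod p, ((true : Bool), i) ∈ Sᶜ := fun i => hv i
    have hToV : ∀ z : ↥(Sᶜ), ∃ i : ZMod p,
        ((biladder p).induce Sᶜ).Reachable z ⟨((true : Bool), i), hvT i⟩ := by
      rintro ⟨⟨bz, iz⟩, hz⟩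
      cases bz
      · exact ⟨iz, reach_rung hz (hvT iz)⟩
      · exact ⟨iz, SimpleGraph.Reachable.refl _⟩
    have hVVeven : ∀ i j : ZMod p, ∀ t : ℕ, i + 2 * (t : ZMod p) = j →
        ((biladder p).induce Sᶜ).Reachable ⟨((true : Bool), i), hvT i⟩
          ⟨((true : Bool), j), hvT j⟩ := by
      intro i j t hij
      exact reach_v_line hp i t (fun s _ => hvT _) rfl (by rw [hij])
    have hVV : ∀ i j : ZMod p,
        ((biladder p).induce Sᶜ).Reachable ⟨((true : Bool), i), hvT i⟩
          ⟨((true : Bool), j), hvT j⟩ := by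
      by_cases hodd : p % 2 = 1
      · intro i j
        exact hVVeven i j _ (double_solve hodd i j)
      · have hpe : p % 2 = 0 := by omega
        have hp10 : 10 ≤ p := he (Nat.even_iff.mpr hpe)
        obtain ⟨k, hk1, hk2⟩ : ∃ k : ZMod p, ((false : Bool), k) ∉ S ∧
            ((false : Bool), k + 1) ∉ S := by
          by_contra hc
          push_neg at hc
          have hget : ∀ c : ℕ, ∃ c' : ℕ, (c' = c ∨ c' = c + 1) ∧
              ((false : Bool), ((c' : ℕ) : ZMod p)) ∈ S := by
            intro c
            by_cases h : ((false : Bool), ((c : ℕ) : ZMod p)) ∈ S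
            · exact ⟨c, Or.inl rfl, h⟩
            · have h' := hc ((c : ℕ) : ZMod p) h
              refine ⟨c + 1, Or.inr rfl, ?_⟩
              have hee : ((c : ℕ) : ZMod p) + 1 = (((c + 1 : ℕ)) : ZMod p) := by push_cast; ring
              rwa [hee] at h'
          obtain ⟨c0, hc0r, hc0⟩ := hget 0
          obtain ⟨c1, hc1r, hc1⟩ := hget 2
          obtain ⟨c2, hc2r, hc2⟩ := hget 4
          have hdiff : ∀ c d : ℕ, c < p → d < p → c ≠ d →
              ((false : Bool), ((c : ℕ) : ZMod p)) ≠ ((false : Bool), ((d : ℕ) : ZMod p)) := by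
            intro c d hcp hdp hcd hconeq
            rw [Prod.mk.injEq] at hconeq
            exact hcd ((cast_inj_of_lt hcp hdp).mp hconeq.2)
          rcases hS2 _ _ _ hc0 hc1 hc2 with h | h | h
          · exact hdiff c0 c1 (by omega) (by omega) (by omega) h
          · exact hdiff c0 c2 (by omega) (by omega) (by omega) h
          · exact hdiff c1 c2 (by omega) (by omega) (by omega) h
        have heven : ∀ i j : ZMod p, (j - i).val % 2 = 0 →
            ((biladder p).induce Sᶜ).Reachable ⟨((true : Bool), i), hvT i⟩
              ⟨((true : Bool), j), hvT j⟩ := by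
          intro i j hpar
          apply hVVeven i j ((j - i).val / 2)
          have hcc : ((2 * ((j - i).val / 2) : ℕ) : ZMod p) = (((j - i).val : ℕ) : ZMod p) := by
            congr 1
            omega
          calc i + 2 * (((j - i).val / 2 : ℕ) : ZMod p)
              = i + ((2 * ((j - i).val / 2) : ℕ) : ZMod p) := by push_cast; ring
            _ = i + (((j - i).val : ℕ) : ZMod p) := by rw [hcc]
            _ = j := sub_val_cast
        have hcross : ((biladder p).induce Sᶜ).Reachable ⟨((true : Bool), k), hvT k⟩
            ⟨((true : Bool), k + 1), hvT (k + 1)⟩ := by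
          have r1 := reach_rung (T := Sᶜ) hk1 (hvT k)
          have r2 := reach_rung (T := Sᶜ) hk2 (hvT (k + 1))
          have hadj : ((biladder p).induce Sᶜ).Adj ⟨((false : Bool), k), hk1⟩
              ⟨((false : Bool), k + 1), hk2⟩ := (adj_uu_iff hp).mpr (Or.inl rfl)
          exact (r1.symm.trans hadj.reachable).trans r2
        intro i j
        have h1v : (1 : ZMod p).val = 1 := ZMod.val_one p
        rcases (by omega : (j - i).val % 2 = 0 ∨ (j - i).val % 2 = 1) with hpar | hpar
        · exact heven i j hpar
        · have hsplit := val_add_parity hpe (k - i) (j - k)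
          rw [show (k - i) + (j - k) = j - i by ring] at hsplit
          rcases (by omega : (k - i).val % 2 = 0 ∨ (k - i).val % 2 = 1) with hki | hki
          · have hjk : (j - k).val % 2 = 1 := by omega
            have hsplit2 := val_add_parity hpe (j - (k + 1)) 1
            rw [show (j - (k + 1)) + 1 = j - k by ring, h1v] at hsplit2
            have hjk1 : (j - (k + 1)).val % 2 = 0 := by omega
            exact (heven i k hki).trans (hcross.trans (heven (k + 1) j hjk1))
          · have hsplit2 := val_add_parity hpe (k - i) 1
            rw [show (k - i) + 1 = (k + 1) - i by ring, h1v] at hsplit2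
            have hki1 : ((k + 1) - i).val % 2 = 0 := by omega
            have hjk : (j - k).val % 2 = 0 := by omega
            exact (heven i (k + 1) hki1).trans (hcross.symm.trans (heven k j hjk))
    obtain ⟨i1, hr1⟩ := hToV z1
    obtain ⟨i2, hr2⟩ := hToV z2
    exact hr1.trans ((hVV i1 i2).trans hr2.symm)
  · -- ======= some v-vertex removed: at most one u-vertex removed =======
    push_neg at hv
    obtain ⟨m, hm⟩ := hv
    have honeu : ∀ k1 k2 : ZMod p, ((false : Bool), k1) ∈ S → ((false : Bool), k2) ∈ S →
        k1 = k2 := by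
      intro k1 k2 h1 h2
      rcases hS2 _ _ _ h1 h2 hm with h | h | h
      · rw [Prod.mk.injEq] at h
        exact h.2
      · simp at h
      · simp at h
    have hToU : ∀ z : ↥(Sᶜ), ∃ (c : ZMod p) (hc : ((false : Bool), c) ∈ Sᶜ),
        ((biladder p).induce Sᶜ).Reachable z ⟨((false : Bool), c), hc⟩ := by
      rintro ⟨⟨bz, iz⟩, hz⟩
      cases bz
      · exact ⟨iz, hz, SimpleGraph.Reachable.refl _⟩
      · by_cases hui : ((false : Bool), iz) ∈ S
        · have hexact : ∀ w, w ∈ S → w = ((false : Bool), iz) ∨ w = ((true : Bool), m) := by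
            intro w hw
            rcases hS2 _ _ _ hw hui hm with h | h | h
            · exact Or.inl h
            · exact Or.inr h
            · simp at h
          have h4 : ((4 : ℕ) : ZMod p) ≠ 0 := four_ne_zero' hp
          by_cases him : iz + 2 = m
          · have hu' : ((false : Bool), iz - 2) ∈ Sᶜ := by
              intro hmem
              rcases hexact _ hmem with h | h <;> rw [Prod.mk.injEq] at h
              · exact htwo (by linear_combination -h.2)
              · simp at h
            have hv' : ((true : Bool), iz - 2) ∈ Sᶜ := by
              intro hmem
              rcases hexact _ hmem with h | h <;> rw [Prod.mk.injEq] at h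
              · simp at h
              · apply h4
                push_cast
                linear_combination him - h.2
            have hadj1 : ((biladder p).induce Sᶜ).Adj ⟨((true : Bool), iz), hz⟩
                ⟨((true : Bool), iz - 2), hv'⟩ := (adj_vv_iff hp).mpr (Or.inr (by ring))
            exact ⟨iz - 2, hu', hadj1.reachable.trans (reach_rung hu' hv').symm⟩
          · have hu' : ((false : Bool), iz + 2) ∈ Sᶜ := by
              intro hmem
              rcases hexact _ hmem with h | h <;> rw [Prod.mk.injEq] at h
              · exact htwo (by linear_combination h.2)
              · simp at h
            have hv' : ((true : Bool), iz + 2) ∈ Sᶜ := by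
              intro hmem
              rcases hexact _ hmem with h | h <;> rw [Prod.mk.injEq] at h
              · simp at h
              · exact him h.2
            have hadj1 : ((biladder p).induce Sᶜ).Adj ⟨((true : Bool), iz), hz⟩
                ⟨((true : Bool), iz + 2), hv'⟩ := (adj_vv_iff hp).mpr (Or.inl rfl)
            exact ⟨iz + 2, hu', hadj1.reachable.trans (reach_rung hu' hv').symm⟩
        · exact ⟨iz, hui, (reach_rung (T := Sᶜ) hui hz).symm⟩
    obtain ⟨c1, hc1, hr1⟩ := hToU z1
    obtain ⟨c2, hc2, hr2⟩ := hToU z2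
    have honeT : ∀ k1 k2 : ZMod p, ((false : Bool), k1) ∉ Sᶜ → ((false : Bool), k2) ∉ Sᶜ →
        k1 = k2 := by
      intro k1 k2 h1 h2
      rw [Set.notMem_compl_iff] at h1 h2
      exact honeu _ _ h1 h2
    exact hr1.trans ((reach_uu hp honeT hc1 hc2 rfl rfl).trans hr2.symm)

end BL

/-- every biladder on 2p vertices (p ≥ 5, and p ≥ 10 if p even)
is cyclically 5-connected. -/
theorem biladder_cyclically5Connected (p : ℕ) [NeZero p] (hp : 5 ≤ p)
    (he : Even p → 10 ≤ p) :
    CyclicallyKConnected (biladder p) 5 := by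
  have hcard : Fintype.card (Bool × ZMod p) = 2 * p := by
    rw [Fintype.card_prod, Fintype.card_bool, ZMod.card]
  refine ⟨⟨?_, ?_⟩, ?_, ?_⟩
  · rw [hcard]; omega
  · intro S hS
    exact BL.induce_connected hp he S hS
  · rw [hcard]; omega
  · intro A hA hAc hcut
    exact BL.cut_side hp he A hA hAc hcut
end

section
/- Let G be a cyclically 5-connected cubic graph, let e and f be distinct edges of G with no common end and such that no edge of G is adjacent to both e and f, and let G' be obtained from G by subdividing e and f and joining the two new vertices by an edge (a handle expansion). Then G' is cyclically 5-connected. -/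
open SimpleGraph

section HandleExpansionAux

lemma supp_get {W : Type*} {H : SimpleGraph W} {a b : W} (w : H.Walk a b) :
    ∀ (i : ℕ) (h : i < w.support.length), w.support[i] = w.getVert i := by
  induction w with
  | nil =>
    intro i h
    simp only [SimpleGraph.Walk.support_nil, List.length_cons, List.length_nil] at h
    interval_cases i
    · simp [SimpleGraph.Walk.getVert_zero]
  | cons hadj p ih =>
    intro i h
    cases i with
    | zero => simp [SimpleGraph.Walk.support_cons, SimpleGraph.Walk.getVert_zero]
    | succ n =>
      simp only [SimpleGraph.Walk.support_cons, List.getElem_cons_succ,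
        SimpleGraph.Walk.getVert_cons_succ]
      exact ih n (by simpa [SimpleGraph.Walk.support_cons] using h)

lemma cyc_getVert_inj {W : Type*} {H : SimpleGraph W} {s : W} {w : H.Walk s s}
    (hw : w.IsCycle) {i j : ℕ} (hi1 : 1 ≤ i) (hin : i ≤ w.length)
    (hj1 : 1 ≤ j) (hjn : j ≤ w.length) (hij : w.getVert i = w.getVert j) : i = j := by
  have hnd := hw.support_nodup
  have hlen : w.support.tail.length = w.length := by
    simp [SimpleGraph.Walk.length_support]
  have hti : i - 1 < w.support.tail.length := by omega
  have htj : j - 1 < w.support.tail.length := by omega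
  have hgi : w.support.tail[i-1] = w.getVert i := by
    have := List.getElem_tail (l := w.support) (i := i - 1)
      (by simp [SimpleGraph.Walk.length_support]; omega)
    rw [this, supp_get]
    congr 1; omega
  have hgj : w.support.tail[j-1] = w.getVert j := by
    have := List.getElem_tail (l := w.support) (i := j - 1)
      (by simp [SimpleGraph.Walk.length_support]; omega)
    rw [this, supp_get]
    congr 1; omega
  have := (hnd.getElem_inj_iff (hi := hti) (hj := htj)).mp (by rw [hgi, hgj, hij])
  omega

lemma cycle_two_nbrs {W : Type*} {H : SimpleGraph W} {s : W} {w : H.Walk s s}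
    (hw : w.IsCycle) {t : W} (ht : t ∈ w.support) :
    ∃ p q : W, p ≠ q ∧ p ∈ w.support ∧ q ∈ w.support ∧ H.Adj t p ∧ H.Adj t q := by
  have h3 := hw.three_le_length
  obtain ⟨j, hjt, hjle⟩ := SimpleGraph.Walk.mem_support_iff_exists_getVert.mp ht
  -- normalize to 1 ≤ i ≤ n
  obtain ⟨i, hi1, hin, hit⟩ : ∃ i, 1 ≤ i ∧ i ≤ w.length ∧ w.getVert i = t := by
    rcases Nat.eq_zero_or_pos j with h0 | hpos
    · exact ⟨w.length, by omega, le_refl _, by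
        rw [SimpleGraph.Walk.getVert_length]; rw [h0, SimpleGraph.Walk.getVert_zero] at hjt
        exact hjt⟩
    · exact ⟨j, hpos, hjle, hjt⟩
  have memgv : ∀ k, k ≤ w.length → w.getVert k ∈ w.support := fun k hk =>
    SimpleGraph.Walk.mem_support_iff_exists_getVert.mpr ⟨k, rfl, hk⟩
  have hadjp : H.Adj t (w.getVert (i-1)) := by
    have := w.adj_getVert_succ (i := i - 1) (by omega)
    rw [show i - 1 + 1 = i by omega, hit] at this
    exact this.symm
  rcases lt_or_eq_of_le hin with hlt | heq
  · refine ⟨w.getVert (i-1), w.getVert (i+1), ?_, memgv _ (by omega), memgv _ (by omega), hadjp, ?_⟩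
    · intro hcon
      rcases Nat.eq_or_lt_of_le hi1 with h1 | h2
      · -- i = 1 : p = getVert 0 = getVert n
        have h0n : w.getVert 0 = w.getVert w.length := by
          rw [SimpleGraph.Walk.getVert_zero, SimpleGraph.Walk.getVert_length]
        rw [show i - 1 = 0 by omega, h0n] at hcon
        have := cyc_getVert_inj hw (i := w.length) (j := i+1) (by omega) (le_refl _)
          (by omega) (by omega) hcon
        omega
      · have := cyc_getVert_inj hw (i := i-1) (j := i+1) (by omega) (by omega)
          (by omega) (by omega) hcon
        omega
    · have := w.adj_getVert_succ (i := i) hlt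
      rw [hit] at this; exact this
  · -- i = n
    refine ⟨w.getVert (i-1), w.getVert 1, ?_, memgv _ (by omega), memgv _ (by omega), hadjp, ?_⟩
    · intro hcon
      have := cyc_getVert_inj hw (i := i-1) (j := 1) (by omega) (by omega)
        (by omega) (by omega) hcon
      omega
    · have := w.adj_getVert_succ (i := 0) (by omega)
      rw [SimpleGraph.Walk.getVert_zero] at this
      have hts : t = s := by rw [← hit, heq, SimpleGraph.Walk.getVert_length]
      rw [hts]; simpa using this

lemma cycle_three_distinct {W : Type*} {H : SimpleGraph W} {s : W} {w : H.Walk s s}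
    (hw : w.IsCycle) :
    ∃ a b c : W, a ≠ b ∧ a ≠ c ∧ b ≠ c ∧ a ∈ w.support ∧ b ∈ w.support ∧ c ∈ w.support := by
  have h3 := hw.three_le_length
  have memgv : ∀ k, k ≤ w.length → w.getVert k ∈ w.support := fun k hk =>
    SimpleGraph.Walk.mem_support_iff_exists_getVert.mpr ⟨k, rfl, hk⟩
  refine ⟨w.getVert 1, w.getVert 2, w.getVert 3, ?_, ?_, ?_,
    memgv _ (by omega), memgv _ (by omega), memgv _ (by omega)⟩ <;>
  · intro hcon
    have := cyc_getVert_inj hw (by omega) (by omega) (by omega) (by omega) hcon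
    omega

lemma forest_edge_bound {W : Type} [Fintype W] [Nonempty W] {H : SimpleGraph W}
    [DecidableRel H.Adj] [Fintype H.edgeSet]
    (hac : H.IsAcyclic) : H.edgeFinset.card + 1 ≤ Fintype.card W := by
  classical
  set root : W → W := fun w => (H.connectedComponentMk w).out with hroot
  have hreach : ∀ w, H.Reachable w (root w) := by
    intro w
    apply SimpleGraph.ConnectedComponent.exact
    rw [hroot]
    exact (Quot.out_eq _).symm
  have hrootadj : ∀ {a b : W}, H.Adj a b → root a = root b := by
    intro a b hab
    simp only [hroot]
    rw [SimpleGraph.ConnectedComponent.sound hab.reachable]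
  set d : W → ℕ := fun w => H.dist w (root w) with hd
  have factA : ∀ {a c : W} (p : H.Walk a c), p.IsPath → p.length = H.dist a c := by
    intro a c p hp
    obtain ⟨q, hq, hql⟩ := (SimpleGraph.Reachable.exists_path_of_dist ⟨p⟩)
    have : (⟨p, hp⟩ : H.Path a c) = ⟨q, hq⟩ := hac.path_unique _ _
    rw [← hql]
    exact congrArg (fun r : H.Path a c => r.val.length) this
  have hpw : ∀ w, ∃ p : H.Walk w (root w), p.IsPath ∧ p.length = d w := fun w =>
    (hreach w).exists_path_of_dist
  choose pw pwpath pwlen using hpw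
  have hdle : ∀ {a b : W}, H.Adj a b → d b ≤ d a + 1 := by
    intro a b hab
    have hQ : H.dist b (root a) ≤ (pw a).length + 1 := by
      simpa using SimpleGraph.dist_le (SimpleGraph.Walk.cons hab.symm (pw a))
    rw [pwlen a] at hQ
    have hdb : d b = H.dist b (root a) := by
      simp only [hd]
      rw [hrootadj hab]
    rw [hdb]
    exact hQ
  have factC : ∀ {a b : W}, H.Adj a b → d b = d a + 1 ∨ d a = d b + 1 := by
    intro a b hab
    by_cases hmem : a ∈ (pw b).support
    · left
      have htake := ((pwpath b).takeUntil hmem)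
      have htklen : ((pw b).takeUntil a hmem).length = 1 := by
        rw [factA _ htake]
        exact SimpleGraph.dist_eq_one_iff_adj.mpr hab.symm
      have hsplit := congrArg SimpleGraph.Walk.length ((pw b).take_spec hmem)
      rw [SimpleGraph.Walk.length_append, htklen, pwlen b] at hsplit
      have hdrople : H.dist a (root b) ≤ ((pw b).dropUntil a hmem).length :=
        SimpleGraph.dist_le _
      have hda : d a = H.dist a (root b) := by
        simp only [hd]
        rw [hrootadj hab]
      have h1 : d a ≤ ((pw b).dropUntil a hmem).length := by rw [hda]; exact hdrople
      have h2 := hdle hab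
      omega
    · right
      have hq : (SimpleGraph.Walk.cons hab ((pw b).copy rfl (hrootadj hab).symm)).IsPath := by
        apply SimpleGraph.Walk.IsPath.cons
        · rw [SimpleGraph.Walk.isPath_copy]; exact pwpath b
        · rw [SimpleGraph.Walk.support_copy]; exact hmem
      have := factA _ hq
      simp only [SimpleGraph.Walk.length_cons, SimpleGraph.Walk.length_copy] at this
      rw [pwlen b] at this
      simp only [hd]
      rw [← this]
  have hkey : ∀ {a b : W}, H.Adj a b → d a < d b → (pw b).getVert 1 = a := by
    intro a b hab hlt
    have hbns : b ∉ (pw a).support := by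
      intro hmem
      have hsplit := congrArg SimpleGraph.Walk.length ((pw a).take_spec hmem)
      rw [SimpleGraph.Walk.length_append] at hsplit
      have hlen : ((pw a).dropUntil b hmem).length ≤ (pw a).length := by omega
      have hle : H.dist b (root a) ≤ (pw a).length :=
        le_trans (SimpleGraph.dist_le _) hlen
      rw [pwlen a] at hle
      have hdb : d b = H.dist b (root a) := by
        simp only [hd]
        rw [hrootadj hab]
      have : d b ≤ d a := by rw [hdb]; exact hle
      omega
    have hre : root a = root b := hrootadj hab
    have hq : ((SimpleGraph.Walk.cons hab.symm (pw a)).copy rfl hre).IsPath := by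
      rw [SimpleGraph.Walk.isPath_copy]
      exact (pwpath a).cons hbns
    have heqp : (⟨pw b, pwpath b⟩ : H.Path b (root b)) =
        ⟨(SimpleGraph.Walk.cons hab.symm (pw a)).copy rfl hre, hq⟩ := hac.path_unique _ _
    have hval : pw b = (SimpleGraph.Walk.cons hab.symm (pw a)).copy rfl hre :=
      congrArg Subtype.val heqp
    rw [hval]
    have : ((SimpleGraph.Walk.cons hab.symm (pw a)).copy rfl hre).getVert 1
        = (SimpleGraph.Walk.cons hab.symm (pw a)).getVert 1 := by
      simp
    rw [this, SimpleGraph.Walk.getVert_cons_succ, SimpleGraph.Walk.getVert_zero]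
  have spec : ∀ e ∈ H.edgeFinset, ∃ b a : W, e = s(a, b) ∧ H.Adj a b ∧ d a < d b := by
    intro e he
    rw [SimpleGraph.mem_edgeFinset] at he
    induction e with
    | _ a b =>
      have hab : H.Adj a b := he
      rcases factC hab with h | h
      · exact ⟨b, a, rfl, hab, by omega⟩
      · exact ⟨a, b, Sym2.eq_swap, hab.symm, by omega⟩
  classical
  set f : Sym2 W → W := fun e => if h : e ∈ H.edgeFinset then (spec e h).choose else
    Classical.arbitrary W with hf
  have hfspec : ∀ e (h : e ∈ H.edgeFinset), ∃ a, e = s(a, f e) ∧ H.Adj a (f e) ∧ d a < d (f e) := by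
    intro e h
    obtain ⟨a, h1, h2, h3⟩ := (spec e h).choose_spec
    refine ⟨a, ?_, ?_, ?_⟩ <;> simp only [hf, dif_pos h] <;> assumption
  obtain ⟨w₀⟩ := (inferInstance : Nonempty W)
  have hcard : H.edgeFinset.card ≤ (Finset.univ.erase (root w₀)).card := by
    apply Finset.card_le_card_of_injOn f
    · intro e he
      obtain ⟨a, _, _, hlt⟩ := hfspec e he
      apply Finset.mem_erase_of_ne_of_mem _ (Finset.mem_univ _)
      intro hcon
      have hroot2 : root (root w₀) = root w₀ := by
        simp only [hroot]
        exact congrArg Quot.out (Quot.out_eq (H.connectedComponentMk w₀))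
      have : d (root w₀) = 0 := by
        simp only [hd, hroot2, SimpleGraph.dist_self]
      rw [hcon] at hlt
      omega
    · intro e1 he1 e2 he2 hfe
      simp only [Finset.mem_coe] at he1 he2
      obtain ⟨a1, ha1e, ha1adj, ha1lt⟩ := hfspec e1 he1
      obtain ⟨a2, ha2e, ha2adj, ha2lt⟩ := hfspec e2 he2
      have h1 := hkey ha1adj ha1lt
      have h2 := hkey ha2adj ha2lt
      have ha : a1 = a2 := by
        rw [← h1, ← h2]
        exact congrArg (fun t => (pw t).getVert 1) hfe
      rw [ha1e, ha2e, ha, hfe]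
  have : (Finset.univ.erase (root w₀)).card = Fintype.card W - 1 := by
    rw [Finset.card_erase_of_mem (Finset.mem_univ _), Finset.card_univ]
  rw [this] at hcard
  have : 1 ≤ Fintype.card W := Fintype.card_pos
  omega


variable {V : Type} {G : SimpleGraph V} {u v x y : V}

lemma fin2_cases (i : Fin 2) : i = 0 ∨ i = 1 := by
  match i with
  | 0 => exact Or.inl rfl
  | 1 => exact Or.inr rfl

lemma op_adj_inl_inl {a b : V} :
    (onePlus G u v x y).Adj (Sum.inl a) (Sum.inl b) ↔
      G.Adj a b ∧ s(a, b) ≠ s(u, v) ∧ s(a, b) ≠ s(x, y) := by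
  unfold onePlus
  rw [SimpleGraph.fromRel_adj]
  constructor
  · rintro ⟨hne, h | h⟩
    · exact h
    · exact ⟨h.1.symm, by rw [Sym2.eq_swap]; exact h.2.1, by rw [Sym2.eq_swap]; exact h.2.2⟩
  · intro h
    exact ⟨by simp [h.1.ne], Or.inl h⟩

lemma op_adj_inl_inr {a : V} {i : Fin 2} :
    (onePlus G u v x y).Adj (Sum.inl a) (Sum.inr i) ↔
      (i = 0 ∧ (a = u ∨ a = v)) ∨ (i = 1 ∧ (a = x ∨ a = y)) := by
  unfold onePlus
  rw [SimpleGraph.fromRel_adj]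
  constructor
  · rintro ⟨hne, h | h⟩
    · exact h
    · exact h.elim
  · intro h
    exact ⟨by simp, Or.inl h⟩

lemma op_adj_inr_inr {i j : Fin 2} :
    (onePlus G u v x y).Adj (Sum.inr i) (Sum.inr j) ↔ i ≠ j := by
  unfold onePlus
  rw [SimpleGraph.fromRel_adj]
  constructor
  · rintro ⟨hne, h | h⟩
    · exact h
    · exact h.symm
  · intro h
    exact ⟨by simp [h], Or.inl h⟩

lemma op_adj_inr_inl {a : V} {i : Fin 2} :
    (onePlus G u v x y).Adj (Sum.inr i) (Sum.inl a) ↔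
      (i = 0 ∧ (a = u ∨ a = v)) ∨ (i = 1 ∧ (a = x ∨ a = y)) := by
  rw [SimpleGraph.adj_comm]
  exact op_adj_inl_inr

lemma op_adj_z0 {r : V ⊕ Fin 2} :
    (onePlus G u v x y).Adj (Sum.inr 0) r ↔ r = Sum.inl u ∨ r = Sum.inl v ∨ r = Sum.inr 1 := by
  rcases r with a | i
  · rw [op_adj_inr_inl]
    constructor
    · rintro (⟨_, h⟩ | ⟨h0, _⟩)
      · rcases h with h | h
        · exact Or.inl (by rw [h])
        · exact Or.inr (Or.inl (by rw [h]))
      · exact absurd h0 (by decide)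
    · rintro (h | h | h) <;> simp_all
  · rw [op_adj_inr_inr]
    rcases fin2_cases i with h | h <;> subst h <;> simp

lemma op_adj_z1 {r : V ⊕ Fin 2} :
    (onePlus G u v x y).Adj (Sum.inr 1) r ↔ r = Sum.inl x ∨ r = Sum.inl y ∨ r = Sum.inr 0 := by
  rcases r with a | i
  · rw [op_adj_inr_inl]
    constructor
    · rintro (⟨h0, _⟩ | ⟨_, h⟩)
      · exact absurd h0 (by decide)
      · rcases h with h | h
        · exact Or.inl (by rw [h])
        · exact Or.inr (Or.inl (by rw [h]))
    · rintro (h | h | h) <;> simp_all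
  · rw [op_adj_inr_inr]
    rcases fin2_cases i with h | h <;> subst h <;> simp

lemma op_adj_inl_any {a : V} {r : V ⊕ Fin 2} (h : (onePlus G u v x y).Adj (Sum.inl a) r) :
    (∃ b, r = Sum.inl b ∧ G.Adj a b ∧ s(a, b) ≠ s(u, v) ∧ s(a, b) ≠ s(x, y)) ∨
      (r = Sum.inr 0 ∧ (a = u ∨ a = v)) ∨ (r = Sum.inr 1 ∧ (a = x ∨ a = y)) := by
  rcases r with b | i
  · rw [op_adj_inl_inl] at h
    exact Or.inl ⟨b, rfl, h⟩
  · rw [op_adj_inl_inr] at h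
    rcases h with ⟨h0, h⟩ | ⟨h1, h⟩
    · subst h0; exact Or.inr (Or.inl ⟨rfl, h⟩)
    · subst h1; exact Or.inr (Or.inr ⟨rfl, h⟩)


lemma triple_ncard_le {α : Type} {r1 r2 r3 : α} {s : Set α} (hfin : s.Finite)
    (h12 : r1 ≠ r2) (h13 : r1 ≠ r3) (h23 : r2 ≠ r3)
    (hsub : {r1, r2, r3} ⊆ s) : 3 ≤ s.ncard := by
  have h3 : ({r1, r2, r3} : Set α).ncard = 3 :=
    Set.ncard_eq_three.mpr ⟨r1, r2, r3, h12, h13, h23, rfl⟩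
  rw [← h3]
  exact Set.ncard_le_ncard hsub hfin

lemma sym2_ne_uv_of_ne {a b : V} (hab : a ≠ u ∨ b ≠ v) (h2 : a ≠ v ∨ b ≠ u) :
    s(a, b) ≠ s(u, v) := by
  intro hc
  rcases Sym2.eq_iff.mp hc with ⟨rfl, rfl⟩ | ⟨rfl, rfl⟩ <;> tauto

lemma op_connectivity [Fintype V] (hcub : IsCubic G) (hG3 : IsKConnected G 3)
    (hcard : 10 ≤ Fintype.card V)
    (huv : G.Adj u v) (hxy : G.Adj x y)
    (hux : u ≠ x) (huy : u ≠ y) (hvx : v ≠ x) (hvy : v ≠ y)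
    (hnoadj : ∀ a b : V, G.Adj a b → s(a, b) ≠ s(u, v) → s(a, b) ≠ s(x, y) →
      ¬ ((a = u ∨ a = v ∨ b = u ∨ b = v) ∧ (a = x ∨ a = y ∨ b = x ∨ b = y)))
    (S : Set (V ⊕ Fin 2)) (hS : S.ncard < 3) :
    ((onePlus G u v x y).induce Sᶜ).Connected := by
  classical
  have hGux : ¬ G.Adj u x := by
    intro h
    refine hnoadj u x h ?_ ?_ ⟨Or.inl rfl, Or.inr (Or.inr (Or.inl rfl))⟩
    · exact sym2_ne_uv_of_ne (Or.inr hvx.symm) (Or.inl huv.ne)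
    · intro hc
      rcases Sym2.eq_iff.mp hc with ⟨h1, _⟩ | ⟨h1, _⟩
      · exact hux h1
      · exact huy h1
  have hGxu : ¬ G.Adj x u := fun h => hGux h.symm
  set G' := onePlus G u v x y with hG'
  set S₀ : Set V := {a | Sum.inl a ∈ S} ∪ (if Sum.inr 0 ∈ S then {u} else ∅) ∪
      (if Sum.inr 1 ∈ S then {x} else ∅) with hS₀
  -- basic membership facts
  have hmemS₀ : ∀ a : V, a ∈ S₀ →
      Sum.inl a ∈ S ∨ (Sum.inr 0 ∈ S ∧ a = u) ∨ (Sum.inr 1 ∈ S ∧ a = x) := by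
    intro a ha
    rw [hS₀] at ha
    rcases ha with (h | h) | h
    · exact Or.inl h
    · split_ifs at h with h0
      · exact Or.inr (Or.inl ⟨h0, h⟩)
      · exact absurd h (Set.notMem_empty a)
    · split_ifs at h with h1
      · exact Or.inr (Or.inr ⟨h1, h⟩)
      · exact absurd h (Set.notMem_empty a)
  have hinS₀ : ∀ a : V, Sum.inl a ∈ S → a ∈ S₀ := by
    intro a ha
    rw [hS₀]
    exact Or.inl (Or.inl ha)
  have huS₀ : Sum.inr 0 ∈ S → u ∈ S₀ := by
    intro h0
    rw [hS₀]
    refine Or.inl (Or.inr ?_)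
    rw [if_pos h0]
    rfl
  have hxS₀ : Sum.inr 1 ∈ S → x ∈ S₀ := by
    intro h1
    rw [hS₀]
    refine Or.inr ?_
    rw [if_pos h1]
    rfl
  -- S₀ is small
  have hS₀card : S₀.ncard < 3 := by
    have hle : S₀.ncard ≤ S.ncard := by
      apply Set.ncard_le_ncard_of_injOn
        (fun a => if Sum.inl a ∈ S then Sum.inl a else
          if a = u then Sum.inr 0 else Sum.inr 1)
      · intro a ha
        rcases hmemS₀ a ha with h | ⟨h0, hau⟩ | ⟨h1, hax⟩
        · simp only [if_pos h]; exact h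
        · by_cases hin : Sum.inl a ∈ S
          · simp only [if_pos hin]; exact hin
          · simp only [if_neg hin, if_pos hau]; exact h0
        · by_cases hin : Sum.inl a ∈ S
          · simp only [if_pos hin]; exact hin
          · have hanu : ¬ a = u := by
              rw [hax]; exact fun hc => hux hc.symm
            simp only [if_neg hin, if_neg hanu]; exact h1
      · intro a ha b hb hab
        simp only at hab
        by_cases ha' : Sum.inl a ∈ S <;> by_cases hb' : Sum.inl b ∈ S
        · rw [if_pos ha', if_pos hb'] at hab
          exact Sum.inl.inj hab
        · rw [if_pos ha', if_neg hb'] at hab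
          split_ifs at hab
        · rw [if_neg ha', if_pos hb'] at hab
          split_ifs at hab
        · rw [if_neg ha', if_neg hb'] at hab
          by_cases hau : a = u
          · by_cases hbu : b = u
            · rw [hau, hbu]
            · rw [if_pos hau, if_neg hbu] at hab
              exact absurd (Sum.inr.inj hab) (by decide)
          · by_cases hbu : b = u
            · rw [if_neg hau, if_pos hbu] at hab
              exact absurd (Sum.inr.inj hab) (by decide)
            · have hax : a = x := by
                rcases hmemS₀ a ha with h | ⟨_, h⟩ | ⟨_, h⟩
                · exact absurd h ha'
                · exact absurd h hau
                · exact h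
              have hbx : b = x := by
                rcases hmemS₀ b hb with h | ⟨_, h⟩ | ⟨_, h⟩
                · exact absurd h hb'
                · exact absurd h hbu
                · exact h
              exact hax.trans hbx.symm
    omega
  have hconn0 : (G.induce S₀ᶜ).Connected := hG3.2 S₀ hS₀card
  -- membership transfer
  have hSc : ∀ a : V, a ∈ S₀ᶜ → Sum.inl a ∈ Sᶜ := by
    intro a ha hc
    exact ha (hinS₀ a hc)
  -- one lifted step
  have hstep : ∀ (c d : V) (hc : c ∈ S₀ᶜ) (hd : d ∈ S₀ᶜ), G.Adj c d →
      (G'.induce Sᶜ).Reachable ⟨Sum.inl c, hSc c hc⟩ ⟨Sum.inl d, hSc d hd⟩ := by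
    intro c d hc hd hadj
    by_cases h1 : s(c, d) = s(u, v)
    · have hz0 : Sum.inr 0 ∈ Sᶜ := by
        intro hz
        rcases Sym2.eq_iff.mp h1 with ⟨rfl, rfl⟩ | ⟨rfl, rfl⟩
        · exact hc (huS₀ hz)
        · exact hd (huS₀ hz)
      have hcadj : G'.Adj (Sum.inl c) (Sum.inr 0) := by
        rw [hG']
        apply SimpleGraph.Adj.symm
        rw [op_adj_z0]
        rcases Sym2.eq_iff.mp h1 with ⟨rfl, _⟩ | ⟨rfl, _⟩
        · exact Or.inl rfl
        · exact Or.inr (Or.inl rfl)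
      have hdadj : G'.Adj (Sum.inr 0) (Sum.inl d) := by
        rw [hG', op_adj_z0]
        rcases Sym2.eq_iff.mp h1 with ⟨_, rfl⟩ | ⟨_, rfl⟩
        · exact Or.inr (Or.inl rfl)
        · exact Or.inl rfl
      have r1 : (G'.induce Sᶜ).Adj ⟨Sum.inl c, hSc c hc⟩ ⟨Sum.inr 0, hz0⟩ := hcadj
      have r2 : (G'.induce Sᶜ).Adj ⟨Sum.inr 0, hz0⟩ ⟨Sum.inl d, hSc d hd⟩ := hdadj
      exact r1.reachable.trans r2.reachable
    · by_cases h2 : s(c, d) = s(x, y)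
      · have hz1 : Sum.inr 1 ∈ Sᶜ := by
          intro hz
          rcases Sym2.eq_iff.mp h2 with ⟨rfl, rfl⟩ | ⟨rfl, rfl⟩
          · exact hc (hxS₀ hz)
          · exact hd (hxS₀ hz)
        have hcadj : G'.Adj (Sum.inl c) (Sum.inr 1) := by
          rw [hG']
          apply SimpleGraph.Adj.symm
          rw [op_adj_z1]
          rcases Sym2.eq_iff.mp h2 with ⟨rfl, _⟩ | ⟨rfl, _⟩
          · exact Or.inl rfl
          · exact Or.inr (Or.inl rfl)
        have hdadj : G'.Adj (Sum.inr 1) (Sum.inl d) := by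
          rw [hG', op_adj_z1]
          rcases Sym2.eq_iff.mp h2 with ⟨_, rfl⟩ | ⟨_, rfl⟩
          · exact Or.inr (Or.inl rfl)
          · exact Or.inl rfl
        have r1 : (G'.induce Sᶜ).Adj ⟨Sum.inl c, hSc c hc⟩ ⟨Sum.inr 1, hz1⟩ := hcadj
        have r2 : (G'.induce Sᶜ).Adj ⟨Sum.inr 1, hz1⟩ ⟨Sum.inl d, hSc d hd⟩ := hdadj
        exact r1.reachable.trans r2.reachable
      · have hadj' : G'.Adj (Sum.inl c) (Sum.inl d) := by
          rw [hG', op_adj_inl_inl]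
          exact ⟨hadj, h1, h2⟩
        have : (G'.induce Sᶜ).Adj ⟨Sum.inl c, hSc c hc⟩ ⟨Sum.inl d, hSc d hd⟩ := hadj'
        exact this.reachable
  -- reachability between lifted vertices
  have hreachinl : ∀ (c d : V) (hc : c ∈ S₀ᶜ) (hd : d ∈ S₀ᶜ),
      (G'.induce Sᶜ).Reachable ⟨Sum.inl c, hSc c hc⟩ ⟨Sum.inl d, hSc d hd⟩ := by
    have main : ∀ (t1 t2 : ↥S₀ᶜ) (w : (G.induce S₀ᶜ).Walk t1 t2),
        (G'.induce Sᶜ).Reachable ⟨Sum.inl ↑t1, hSc _ t1.2⟩ ⟨Sum.inl ↑t2, hSc _ t2.2⟩ := by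
      intro t1 t2 w
      induction w with
      | nil => exact SimpleGraph.Reachable.refl _
      | @cons s1 s2 s3 h p ih =>
        exact (hstep ↑s1 ↑s2 s1.2 s2.2 h).trans ih
    intro c d hc hd
    obtain ⟨w⟩ := hconn0.preconnected ⟨c, hc⟩ ⟨d, hd⟩
    exact main _ _ w
  -- other-neighbor existence
  have hnbru : Sum.inr 0 ∈ S → ∃ w : V, G.Adj u w ∧ w ≠ v ∧ w ∈ S₀ᶜ := by
    intro hz0S
    obtain ⟨a, b, c, hab, hac, hbc, hN⟩ := Set.ncard_eq_three.mp (hcub u)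
    have hvN : v ∈ G.neighborSet u := huv
    have hgen : ∀ w : V, w ∈ G.neighborSet u → w ≠ v → w ∈ S₀ → Sum.inl w ∈ S := by
      intro w hw hwv hwS₀
      rcases hmemS₀ w hwS₀ with h | ⟨_, rfl⟩ | ⟨_, rfl⟩
      · exact h
      · exact absurd (SimpleGraph.irrefl G hw) not_false
      · exact absurd hw hGux
    -- extract two neighbors different from v
    obtain ⟨w1, w2, hw12, hw1, hw2, hw1v, hw2v⟩ : ∃ w1 w2 : V, w1 ≠ w2 ∧
        w1 ∈ G.neighborSet u ∧ w2 ∈ G.neighborSet u ∧ w1 ≠ v ∧ w2 ≠ v := by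
      rw [hN] at hvN
      rw [hN]
      rcases hvN with rfl | rfl | rfl
      · exact ⟨b, c, hbc, Or.inr (Or.inl rfl), Or.inr (Or.inr rfl), hab.symm, hac.symm⟩
      · exact ⟨a, c, hac, Or.inl rfl, Or.inr (Or.inr rfl), hab, hbc.symm⟩
      · exact ⟨a, b, hab, Or.inl rfl, Or.inr (Or.inl rfl), hac, hbc⟩
    by_cases h1 : w1 ∈ S₀
    · by_cases h2 : w2 ∈ S₀
      · exfalso
        have hs1 : Sum.inl w1 ∈ S := hgen w1 hw1 hw1v h1
        have hs2 : Sum.inl w2 ∈ S := hgen w2 hw2 hw2v h2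
        have : (3 : ℕ) ≤ S.ncard := by
          apply triple_ncard_le (Set.toFinite S)
            (r1 := Sum.inl w1) (r2 := Sum.inl w2) (r3 := Sum.inr 0)
          · simp [hw12]
          · simp
          · simp
          · intro r hr
            rcases hr with rfl | rfl | rfl
            · exact hs1
            · exact hs2
            · exact hz0S
        omega
      · exact ⟨w2, hw2, hw2v, h2⟩
    · exact ⟨w1, hw1, hw1v, h1⟩
  have hnbrx : Sum.inr 1 ∈ S → ∃ w : V, G.Adj x w ∧ w ≠ y ∧ w ∈ S₀ᶜ := by
    intro hz1S
    obtain ⟨a, b, c, hab, hac, hbc, hN⟩ := Set.ncard_eq_three.mp (hcub x)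
    have hvN : y ∈ G.neighborSet x := hxy
    have hgen : ∀ w : V, w ∈ G.neighborSet x → w ≠ y → w ∈ S₀ → Sum.inl w ∈ S := by
      intro w hw hwv hwS₀
      rcases hmemS₀ w hwS₀ with h | ⟨_, rfl⟩ | ⟨_, rfl⟩
      · exact h
      · exact absurd hw hGxu
      · exact absurd (SimpleGraph.irrefl G hw) not_false
    obtain ⟨w1, w2, hw12, hw1, hw2, hw1v, hw2v⟩ : ∃ w1 w2 : V, w1 ≠ w2 ∧
        w1 ∈ G.neighborSet x ∧ w2 ∈ G.neighborSet x ∧ w1 ≠ y ∧ w2 ≠ y := by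
      rw [hN] at hvN
      rw [hN]
      rcases hvN with rfl | rfl | rfl
      · exact ⟨b, c, hbc, Or.inr (Or.inl rfl), Or.inr (Or.inr rfl), hab.symm, hac.symm⟩
      · exact ⟨a, c, hac, Or.inl rfl, Or.inr (Or.inr rfl), hab, hbc.symm⟩
      · exact ⟨a, b, hab, Or.inl rfl, Or.inr (Or.inl rfl), hac, hbc⟩
    by_cases h1 : w1 ∈ S₀
    · by_cases h2 : w2 ∈ S₀
      · exfalso
        have hs1 : Sum.inl w1 ∈ S := hgen w1 hw1 hw1v h1
        have hs2 : Sum.inl w2 ∈ S := hgen w2 hw2 hw2v h2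
        have : (3 : ℕ) ≤ S.ncard := by
          apply triple_ncard_le (Set.toFinite S)
            (r1 := Sum.inl w1) (r2 := Sum.inl w2) (r3 := Sum.inr 1)
          · simp [hw12]
          · simp
          · simp
          · intro r hr
            rcases hr with rfl | rfl | rfl
            · exact hs1
            · exact hs2
            · exact hz1S
        omega
      · exact ⟨w2, hw2, hw2v, h2⟩
    · exact ⟨w1, hw1, hw1v, h1⟩
  -- anchor: every vertex reaches a lifted S₀ᶜ vertex
  have hanchor : ∀ t : ↥(Sᶜ), ∃ (a : V) (ha : a ∈ S₀ᶜ),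
      (G'.induce Sᶜ).Reachable t ⟨Sum.inl a, hSc a ha⟩ := by
    rintro ⟨r, hr⟩
    rcases r with a | i
    · by_cases haS₀ : a ∈ S₀
      · rcases hmemS₀ a haS₀ with h | ⟨hz0, hau⟩ | ⟨hz1, hax⟩
        · exact absurd h hr
        · replace hau := hau.symm
          subst hau
          obtain ⟨w, hw, hwv, hwS₀c⟩ := hnbru hz0
          refine ⟨w, hwS₀c, ?_⟩
          have hadj' : G'.Adj (Sum.inl u) (Sum.inl w) := by
            rw [hG', op_adj_inl_inl]
            refine ⟨hw, ?_, ?_⟩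
            · exact sym2_ne_uv_of_ne (Or.inr hwv) (Or.inl huv.ne)
            · intro hc
              rcases Sym2.eq_iff.mp hc with ⟨h1, _⟩ | ⟨h1, _⟩
              · exact hux h1
              · exact huy h1
          have : (G'.induce Sᶜ).Adj ⟨Sum.inl u, hr⟩ ⟨Sum.inl w, hSc w hwS₀c⟩ := hadj'
          exact this.reachable
        · replace hax := hax.symm
          subst hax
          obtain ⟨w, hw, hwy, hwS₀c⟩ := hnbrx hz1
          refine ⟨w, hwS₀c, ?_⟩
          have hadj' : G'.Adj (Sum.inl x) (Sum.inl w) := by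
            rw [hG', op_adj_inl_inl]
            refine ⟨hw, ?_, ?_⟩
            · intro hc
              rcases Sym2.eq_iff.mp hc with ⟨h1, _⟩ | ⟨h1, _⟩
              · exact hux h1.symm
              · exact hvx h1.symm
            · intro hc
              rcases Sym2.eq_iff.mp hc with ⟨_, hc2⟩ | ⟨hc1, _⟩
              · exact hwy hc2
              · exact hxy.ne hc1
          have : (G'.induce Sᶜ).Adj ⟨Sum.inl x, hr⟩ ⟨Sum.inl w, hSc w hwS₀c⟩ := hadj'
          exact this.reachable
      · exact ⟨a, haS₀, SimpleGraph.Reachable.refl _⟩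
    · -- r = inr i
      rcases (show i = 0 ∨ i = 1 from by omega) with rfl | rfl
      · -- z0 case
        by_cases huin : Sum.inl u ∈ S
        · by_cases hvin : Sum.inl v ∈ S
          · -- route through z1 to x
            have hz1 : Sum.inr 1 ∈ Sᶜ := by
              intro hz
              have : (3 : ℕ) ≤ S.ncard := by
                apply triple_ncard_le (Set.toFinite S)
                  (r1 := Sum.inl u) (r2 := Sum.inl v) (r3 := Sum.inr 1)
                · simp [huv.ne]
                · simp
                · simp
                · intro r hrr
                  rcases hrr with rfl | rfl | rfl
                  · exact huin
                  · exact hvin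
                  · exact hz
              omega
            have hxS₀c : x ∈ S₀ᶜ := by
              intro hxc
              rcases hmemS₀ x hxc with h | ⟨h0, rfl⟩ | ⟨h1, _⟩
              · have : (3 : ℕ) ≤ S.ncard := by
                  apply triple_ncard_le (Set.toFinite S)
                    (r1 := Sum.inl u) (r2 := Sum.inl v) (r3 := Sum.inl x)
                  · simp [huv.ne]
                  · simp [hux]
                  · simp [hvx]
                  · intro r hrr
                    rcases hrr with rfl | rfl | rfl
                    · exact huin
                    · exact hvin
                    · exact h
                omega
              · exact hr h0
              · exact hz1 h1
            refine ⟨x, hxS₀c, ?_⟩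
            have hadj_r1 : G'.Adj (Sum.inr 0) (Sum.inr 1) := by
              rw [hG', op_adj_z0]
              exact Or.inr (Or.inr rfl)
            have r1 : (G'.induce Sᶜ).Adj ⟨Sum.inr 0, hr⟩ ⟨Sum.inr 1, hz1⟩ := hadj_r1
            have hadj_r2 : G'.Adj (Sum.inr 1) (Sum.inl x) := by
              rw [hG', op_adj_z1]
              exact Or.inl rfl
            have r2 : (G'.induce Sᶜ).Adj ⟨Sum.inr 1, hz1⟩ ⟨Sum.inl x, hSc x hxS₀c⟩ := hadj_r2
            exact r1.reachable.trans r2.reachable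
          · -- v available
            have hvS₀c : v ∈ S₀ᶜ := by
              intro hvc
              rcases hmemS₀ v hvc with h | ⟨_, h⟩ | ⟨h1, rfl⟩
              · exact hvin h
              · exact huv.ne' h
              · exact hvx rfl
            refine ⟨v, hvS₀c, ?_⟩
            have hadjt : G'.Adj (Sum.inr 0) (Sum.inl v) := by
              rw [hG', op_adj_z0]
              exact Or.inr (Or.inl rfl)
            have : (G'.induce Sᶜ).Adj ⟨Sum.inr 0, hr⟩ ⟨Sum.inl v, hSc v hvS₀c⟩ := hadjt
            exact this.reachable
        · have huS₀c : u ∈ S₀ᶜ := by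
            intro huc
            rcases hmemS₀ u huc with h | ⟨h0, _⟩ | ⟨h1, rfl⟩
            · exact huin h
            · exact hr h0
            · exact hux rfl
          refine ⟨u, huS₀c, ?_⟩
          have hadjt : G'.Adj (Sum.inr 0) (Sum.inl u) := by
            rw [hG', op_adj_z0]
            exact Or.inl rfl
          have : (G'.induce Sᶜ).Adj ⟨Sum.inr 0, hr⟩ ⟨Sum.inl u, hSc u huS₀c⟩ := hadjt
          exact this.reachable
      · -- z1 case
        by_cases hxin : Sum.inl x ∈ S
        · by_cases hyin : Sum.inl y ∈ S
          · have hz0 : Sum.inr 0 ∈ Sᶜ := by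
              intro hz
              have : (3 : ℕ) ≤ S.ncard := by
                apply triple_ncard_le (Set.toFinite S)
                  (r1 := Sum.inl x) (r2 := Sum.inl y) (r3 := Sum.inr 0)
                · simp [hxy.ne]
                · simp
                · simp
                · intro r hrr
                  rcases hrr with rfl | rfl | rfl
                  · exact hxin
                  · exact hyin
                  · exact hz
              omega
            have huS₀c : u ∈ S₀ᶜ := by
              intro huc
              rcases hmemS₀ u huc with h | ⟨h0, _⟩ | ⟨h1, rfl⟩
              · have : (3 : ℕ) ≤ S.ncard := by
                  apply triple_ncard_le (Set.toFinite S)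
                    (r1 := Sum.inl x) (r2 := Sum.inl y) (r3 := Sum.inl u)
                  · simp [hxy.ne]
                  · simp [hux.symm]
                  · simp [huy.symm]
                  · intro r hrr
                    rcases hrr with rfl | rfl | rfl
                    · exact hxin
                    · exact hyin
                    · exact h
                omega
              · exact hz0 h0
              · exact hux rfl
            refine ⟨u, huS₀c, ?_⟩
            have hadj_r1 : G'.Adj (Sum.inr 1) (Sum.inr 0) := by
              rw [hG', op_adj_z1]
              exact Or.inr (Or.inr rfl)
            have r1 : (G'.induce Sᶜ).Adj ⟨Sum.inr 1, hr⟩ ⟨Sum.inr 0, hz0⟩ := hadj_r1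
            have hadj_r2 : G'.Adj (Sum.inr 0) (Sum.inl u) := by
              rw [hG', op_adj_z0]
              exact Or.inl rfl
            have r2 : (G'.induce Sᶜ).Adj ⟨Sum.inr 0, hz0⟩ ⟨Sum.inl u, hSc u huS₀c⟩ := hadj_r2
            exact r1.reachable.trans r2.reachable
          · have hyS₀c : y ∈ S₀ᶜ := by
              intro hyc
              rcases hmemS₀ y hyc with h | ⟨_, h⟩ | ⟨_, h⟩
              · exact hyin h
              · exact huy (h.symm)
              · exact hxy.ne' h
            refine ⟨y, hyS₀c, ?_⟩
            have hadjt : G'.Adj (Sum.inr 1) (Sum.inl y) := by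
              rw [hG', op_adj_z1]
              exact Or.inr (Or.inl rfl)
            have : (G'.induce Sᶜ).Adj ⟨Sum.inr 1, hr⟩ ⟨Sum.inl y, hSc y hyS₀c⟩ := hadjt
            exact this.reachable
        · have hxS₀c : x ∈ S₀ᶜ := by
            intro hxc
            rcases hmemS₀ x hxc with h | ⟨_, h⟩ | ⟨h1, _⟩
            · exact hxin h
            · exact hux (h.symm)
            · exact hr h1
          refine ⟨x, hxS₀c, ?_⟩
          have hadjt : G'.Adj (Sum.inr 1) (Sum.inl x) := by
            rw [hG', op_adj_z1]
            exact Or.inl rfl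
          have : (G'.induce Sᶜ).Adj ⟨Sum.inr 1, hr⟩ ⟨Sum.inl x, hSc x hxS₀c⟩ := hadjt
          exact this.reachable
  rw [SimpleGraph.connected_iff]
  constructor
  · intro t1 t2
    obtain ⟨a1, ha1, hr1⟩ := hanchor t1
    obtain ⟨a2, ha2, hr2⟩ := hanchor t2
    exact (hr1.trans (hreachinl a1 a2 ha1 ha2)).trans hr2.symm
  · by_contra hne
    rw [not_nonempty_iff] at hne
    have : Sᶜ = ∅ := by
      ext r
      simp only [Set.mem_empty_iff_false, iff_false]
      intro hrc
      exact hne.false ⟨r, hrc⟩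
    have hSuniv : S = Set.univ := by
      rw [← compl_compl S, this, Set.compl_empty]
    have : S.ncard = Fintype.card (V ⊕ Fin 2) := by
      rw [hSuniv, Set.ncard_univ, Nat.card_eq_fintype_card]
    rw [Fintype.card_sum] at this
    simp at this
    omega

lemma circuit_three_inl
    (huv : G.Adj u v) (hxy : G.Adj x y)
    (hux : u ≠ x) (huy : u ≠ y) (hvx : v ≠ x) (hvy : v ≠ y)
    (hnoadj : ∀ a b : V, G.Adj a b → s(a, b) ≠ s(u, v) → s(a, b) ≠ s(x, y) →
      ¬ ((a = u ∨ a = v ∨ b = u ∨ b = v) ∧ (a = x ∨ a = y ∨ b = x ∨ b = y)))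
    {A : Set (V ⊕ Fin 2)} (hA : HasCircuit ((onePlus G u v x y).induce A)) :
    ∃ a₁ a₂ a₃ : V, a₁ ≠ a₂ ∧ a₁ ≠ a₃ ∧ a₂ ≠ a₃ ∧
      Sum.inl a₁ ∈ A ∧ Sum.inl a₂ ∈ A ∧ Sum.inl a₃ ∈ A := by
  obtain ⟨c, w, hw⟩ := hA
  set S : Set (V ⊕ Fin 2) := {r | ∃ t ∈ w.support, (t : V ⊕ Fin 2) = r} with hS
  have hSA : ∀ r ∈ S, r ∈ A := by
    rintro r ⟨t, _, rfl⟩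
    exact t.2
  have P1 : ∀ r ∈ S, ∃ p q, p ≠ q ∧ p ∈ S ∧ q ∈ S ∧
      (onePlus G u v x y).Adj r p ∧ (onePlus G u v x y).Adj r q := by
    rintro r ⟨t, ht, rfl⟩
    obtain ⟨p, q, hpq, hp, hq, hap, haq⟩ := cycle_two_nbrs hw ht
    refine ⟨↑p, ↑q, fun hc => hpq (Subtype.ext hc), ⟨p, hp, rfl⟩, ⟨q, hq, rfl⟩, ?_, ?_⟩
    · exact hap
    · exact haq
  by_contra hcon
  push_neg at hcon
  -- among any three inl-members of S, two are equal
  have h2 : ∀ a₁ a₂ a₃ : V, Sum.inl a₁ ∈ S → Sum.inl a₂ ∈ S → Sum.inl a₃ ∈ S →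
      a₁ = a₂ ∨ a₁ = a₃ ∨ a₂ = a₃ := by
    intro a₁ a₂ a₃ h₁ h₂ h₃
    by_contra hc
    push_neg at hc
    obtain ⟨hc1, hc2, hc3⟩ := hc
    obtain h := hcon a₁ a₂ a₃ hc1 hc2 hc3 (hSA _ h₁) (hSA _ h₂)
    exact h (hSA _ h₃)
  have htri : ∀ a b c' : V, Sum.inl a ∈ S → Sum.inl b ∈ S → Sum.inl c' ∈ S →
      a ≠ b → a ≠ c' → b ≠ c' → False := by
    intro a b c' ha hb hc' hab hac hbc
    rcases h2 a b c' ha hb hc' with h | h | h <;> contradiction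
  by_cases hz0 : Sum.inr 0 ∈ S
  · obtain ⟨p, q, hpq, hpS, hqS, hap, haq⟩ := P1 _ hz0
    rw [op_adj_z0] at hap haq
    have inluv_case : Sum.inl u ∈ S → Sum.inl v ∈ S → False := by
      intro huS hvS
      by_cases hz1 : Sum.inr 1 ∈ S
      · obtain ⟨p', q', hpq', hpS', hqS', hap', haq'⟩ := P1 _ hz1
        rw [op_adj_z1] at hap' haq'
        have hforce : ∀ r, r ∈ S → r = Sum.inl x ∨ r = Sum.inl y ∨ r = Sum.inr 0 →
            r = Sum.inr 0 := by
          rintro r hrS (rfl | rfl | rfl)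
          · exact absurd (htri u v x huS hvS hrS huv.ne hux hvx) not_false
          · exact absurd (htri u v y huS hvS hrS huv.ne huy hvy) not_false
          · rfl
        exact hpq' ((hforce p' hpS' hap').trans (hforce q' hqS' haq').symm)
      · obtain ⟨p', q', hpq', hpS', hqS', hap', haq'⟩ := P1 _ huS
        have hforce : ∀ r, r ∈ S → (onePlus G u v x y).Adj (Sum.inl u) r →
            r = Sum.inr 0 := by
          intro r hrS hadj
          rcases op_adj_inl_any hadj with ⟨b, rfl, hGab, hnuv, hnxy⟩ | ⟨rfl, _⟩ | ⟨rfl, _⟩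
          · exact absurd (htri u v b huS hvS hrS huv.ne hGab.ne
              (fun hc => hnuv (by rw [← hc]))) not_false
          · rfl
          · exact absurd hrS hz1
        exact hpq' ((hforce p' hpS' hap').trans (hforce q' hqS' haq').symm)
    have mixed_case : ∀ w₀ : V, (w₀ = u ∨ w₀ = v) → Sum.inl w₀ ∈ S →
        Sum.inr 1 ∈ S → False := by
      intro w₀ hw₀ hw₀S hz1
      obtain ⟨p', q', hpq', hpS', hqS', hap', haq'⟩ := P1 _ hz1
      rw [op_adj_z1] at hap' haq'
      have hw0nx : w₀ ≠ x := by rcases hw₀ with rfl | rfl <;> assumption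
      have hw0ny : w₀ ≠ y := by rcases hw₀ with rfl | rfl <;> assumption
      have inner : ∀ w₁ : V, (w₁ = x ∨ w₁ = y) → Sum.inl w₁ ∈ S → False := by
        intro w₁ hw₁ hw₁S
        have hw0w1 : w₀ ≠ w₁ := by
          rcases hw₁ with rfl | rfl <;> assumption
        obtain ⟨p'', q'', hpq'', hpS'', hqS'', hap'', haq''⟩ := P1 _ hw₀S
        have hforce : ∀ r, r ∈ S → (onePlus G u v x y).Adj (Sum.inl w₀) r →
            r = Sum.inr 0 := by
          intro r hrS hadj
          rcases op_adj_inl_any hadj with ⟨b, rfl, hGab, hnuv, hnxy⟩ | ⟨rfl, _⟩ | ⟨rfl, hc⟩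
          · have hbw1 : b ≠ w₁ := by
              intro hbe
              subst hbe
              refine hnoadj w₀ b hGab hnuv hnxy ⟨?_, ?_⟩
              · rcases hw₀ with rfl | rfl
                · exact Or.inl rfl
                · exact Or.inr (Or.inl rfl)
              · rcases hw₁ with rfl | rfl
                · exact Or.inr (Or.inr (Or.inl rfl))
                · exact Or.inr (Or.inr (Or.inr rfl))
            exact absurd (htri w₀ w₁ b hw₀S hw₁S hrS hw0w1 hGab.ne hbw1.symm) not_false
          · rfl
          · rcases hc with hc | hc
            · exact absurd hc hw0nx
            · exact absurd hc hw0ny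
        exact hpq'' ((hforce p'' hpS'' hap'').trans (hforce q'' hqS'' haq'').symm)
      have hforce' : ∀ r, r ∈ S → r = Sum.inl x ∨ r = Sum.inl y ∨ r = Sum.inr 0 →
          r = Sum.inr 0 := by
        rintro r hrS (rfl | rfl | rfl)
        · exact absurd (inner x (Or.inl rfl) hrS) not_false
        · exact absurd (inner y (Or.inr rfl) hrS) not_false
        · rfl
      exact hpq' ((hforce' p' hpS' hap').trans (hforce' q' hqS' haq').symm)
    rcases hap with rfl | rfl | rfl <;> rcases haq with rfl | rfl | rfl
    · exact hpq rfl
    · exact inluv_case hpS hqS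
    · exact mixed_case u (Or.inl rfl) hpS hqS
    · exact inluv_case hqS hpS
    · exact hpq rfl
    · exact mixed_case v (Or.inr rfl) hpS hqS
    · exact mixed_case u (Or.inl rfl) hqS hpS
    · exact mixed_case v (Or.inr rfl) hqS hpS
    · exact hpq rfl
  · by_cases hz1 : Sum.inr 1 ∈ S
    · obtain ⟨p, q, hpq, hpS, hqS, hap, haq⟩ := P1 _ hz1
      rw [op_adj_z1] at hap haq
      have hxyS : Sum.inl x ∈ S ∧ Sum.inl y ∈ S := by
        rcases hap with rfl | rfl | rfl <;> rcases haq with rfl | rfl | rfl <;>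
          first
            | exact absurd rfl hpq
            | exact absurd hpS hz0
            | exact absurd hqS hz0
            | exact ⟨hpS, hqS⟩
            | exact ⟨hqS, hpS⟩
      obtain ⟨hxS, hyS⟩ := hxyS
      obtain ⟨p', q', hpq', hpS', hqS', hap', haq'⟩ := P1 _ hxS
      have hforce : ∀ r, r ∈ S → (onePlus G u v x y).Adj (Sum.inl x) r →
          r = Sum.inr 1 := by
        intro r hrS hadj
        rcases op_adj_inl_any hadj with ⟨b, rfl, hGab, hnuv, hnxy⟩ | ⟨rfl, _⟩ | ⟨rfl, _⟩
        · exact absurd (htri x y b hxS hyS hrS hxy.ne hGab.ne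
            (fun hc => hnxy (by rw [← hc]))) not_false
        · exact absurd hrS hz0
        · rfl
      exact hpq' ((hforce p' hpS' hap').trans (hforce q' hqS' haq').symm)
    · obtain ⟨t₁, t₂, t₃, h12, h13, h23, ht1, ht2, ht3⟩ := cycle_three_distinct hw
      have hmem : ∀ t : ↥A, t ∈ w.support → ∃ a : V, (t : V ⊕ Fin 2) = Sum.inl a ∧
          Sum.inl a ∈ S := by
        intro t ht
        rcases hrt : (t : V ⊕ Fin 2) with a | i
        · exact ⟨a, rfl, by rw [← hrt]; exact ⟨t, ht, rfl⟩⟩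
        · exfalso
          have : Sum.inr i ∈ S := by rw [← hrt]; exact ⟨t, ht, rfl⟩
          rcases fin2_cases i with rfl | rfl
          · exact hz0 this
          · exact hz1 this
      obtain ⟨a₁, he1, ha1⟩ := hmem _ ht1
      obtain ⟨a₂, he2, ha2⟩ := hmem _ ht2
      obtain ⟨a₃, he3, ha3⟩ := hmem _ ht3
      refine htri a₁ a₂ a₃ ha1 ha2 ha3 ?_ ?_ ?_
      · intro hc; apply h12; apply Subtype.ext; rw [he1, he2, hc]
      · intro hc; apply h13; apply Subtype.ext; rw [he1, he3, hc]
      · intro hc; apply h23; apply Subtype.ext; rw [he2, he3, hc]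

lemma cut_transfer [Fintype V] (hef : s(u, v) ≠ s(x, y)) (A : Set (V ⊕ Fin 2)) :
    (cutEdges G {a : V | Sum.inl a ∈ A}).ncard ≤ (cutEdges (onePlus G u v x y) A).ncard := by
  classical
  set B : Set V := {a : V | Sum.inl a ∈ A} with hB
  set φ : Sym2 V → Sym2 (V ⊕ Fin 2) := fun e =>
    if e = s(u, v) then
      (if Sum.inr 0 ∈ A then s(Sum.inr (0 : Fin 2), Sum.inl (if Sum.inl u ∈ A then v else u))
       else s(Sum.inr (0 : Fin 2), Sum.inl (if Sum.inl u ∈ A then u else v)))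
    else if e = s(x, y) then
      (if Sum.inr 1 ∈ A then s(Sum.inr (1 : Fin 2), Sum.inl (if Sum.inl x ∈ A then y else x))
       else s(Sum.inr (1 : Fin 2), Sum.inl (if Sum.inl x ∈ A then x else y)))
    else Sym2.map Sum.inl e with hφ
  have hmaps : ∀ e ∈ cutEdges G B, φ e ∈ cutEdges (onePlus G u v x y) A := by
    rintro e ⟨a, b, haB, hbB, hadj, rfl⟩
    have haA : Sum.inl a ∈ A := haB
    have hbA : Sum.inl b ∉ A := hbB
    by_cases h1 : s(a, b) = s(u, v)
    · simp only [hφ, if_pos h1]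
      rcases Sym2.eq_iff.mp h1 with ⟨rfl, rfl⟩ | ⟨rfl, rfl⟩
      · -- a = u, b = v; u ∈ B, v ∉ B
        by_cases hz : Sum.inr 0 ∈ A
        · rw [if_pos hz, if_pos haA]
          exact ⟨Sum.inr 0, Sum.inl b, hz, hbB, op_adj_z0.mpr (Or.inr (Or.inl rfl)), rfl⟩
        · rw [if_neg hz, if_pos haA]
          exact ⟨Sum.inl a, Sum.inr 0, haB, hz,
            (op_adj_z0.mpr (Or.inl rfl)).symm, Sym2.eq_swap⟩
      · -- a = v, b = u; v ∈ B, u ∉ B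
        by_cases hz : Sum.inr 0 ∈ A
        · rw [if_pos hz, if_neg hbA]
          exact ⟨Sum.inr 0, Sum.inl b, hz, hbB, op_adj_z0.mpr (Or.inl rfl), rfl⟩
        · rw [if_neg hz, if_neg hbA]
          exact ⟨Sum.inl a, Sum.inr 0, haB, hz,
            (op_adj_z0.mpr (Or.inr (Or.inl rfl))).symm, Sym2.eq_swap⟩
    · by_cases h2 : s(a, b) = s(x, y)
      · simp only [hφ, if_neg h1, if_pos h2]
        rcases Sym2.eq_iff.mp h2 with ⟨rfl, rfl⟩ | ⟨rfl, rfl⟩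
        · by_cases hz : Sum.inr 1 ∈ A
          · rw [if_pos hz, if_pos haA]
            exact ⟨Sum.inr 1, Sum.inl b, hz, hbB, op_adj_z1.mpr (Or.inr (Or.inl rfl)), rfl⟩
          · rw [if_neg hz, if_pos haA]
            exact ⟨Sum.inl a, Sum.inr 1, haB, hz,
              (op_adj_z1.mpr (Or.inl rfl)).symm, Sym2.eq_swap⟩
        · by_cases hz : Sum.inr 1 ∈ A
          · rw [if_pos hz, if_neg hbA]
            exact ⟨Sum.inr 1, Sum.inl b, hz, hbB, op_adj_z1.mpr (Or.inl rfl), rfl⟩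
          · rw [if_neg hz, if_neg hbA]
            exact ⟨Sum.inl a, Sum.inr 1, haB, hz,
              (op_adj_z1.mpr (Or.inr (Or.inl rfl))).symm, Sym2.eq_swap⟩
      · simp only [hφ, if_neg h1, if_neg h2, Sym2.map_pair_eq]
        exact ⟨Sum.inl a, Sum.inl b, haB, hbB, op_adj_inl_inl.mpr ⟨hadj, h1, h2⟩, rfl⟩
  have hshape0 : ∀ e, e = s(u, v) → Sum.inr (0 : Fin 2) ∈ φ e := by
    intro e he
    simp only [hφ, if_pos he]
    split_ifs <;> simp [Sym2.mem_iff]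
  have hshape1 : ∀ e, e ≠ s(u, v) → e = s(x, y) → Sum.inr (1 : Fin 2) ∈ φ e := by
    intro e hne he
    simp only [hφ, if_neg hne, if_pos he]
    split_ifs <;> simp [Sym2.mem_iff]
  have hshapeL : ∀ e, e ≠ s(u, v) → e ≠ s(x, y) → ∀ z ∈ φ e, ∃ c, z = Sum.inl c := by
    intro e h1 h2 z hz
    simp only [hφ, if_neg h1, if_neg h2] at hz
    obtain ⟨c, _, rfl⟩ := Sym2.mem_map.mp hz
    exact ⟨c, rfl⟩
  have hnoInr0 : ∀ e, e ≠ s(u, v) → Sum.inr (0 : Fin 2) ∉ φ e := by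
    intro e h1 hc
    by_cases h2 : e = s(x, y)
    · simp only [hφ, if_neg h1, if_pos h2] at hc
      split_ifs at hc <;> rw [Sym2.mem_iff] at hc <;>
        rcases hc with hc | hc <;> simp_all
    · obtain ⟨c, hcc⟩ := hshapeL e h1 h2 _ hc
      exact absurd hcc (by simp)
  have hnoInr1 : ∀ e, e = s(u, v) → Sum.inr (1 : Fin 2) ∉ φ e := by
    intro e h1 hc
    simp only [hφ, if_pos h1] at hc
    split_ifs at hc <;> rw [Sym2.mem_iff] at hc <;>
      rcases hc with hc | hc <;> simp_all
  have hinj : Set.InjOn φ (cutEdges G B) := by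
    intro e1 he1 e2 he2 heq
    by_cases h11 : e1 = s(u, v) <;> by_cases h21 : e2 = s(u, v)
    · rw [h11, h21]
    · exact absurd (heq ▸ hshape0 e1 h11) (hnoInr0 e2 h21)
    · exact absurd (heq.symm ▸ hshape0 e2 h21) (hnoInr0 e1 h11)
    · by_cases h12 : e1 = s(x, y) <;> by_cases h22 : e2 = s(x, y)
      · rw [h12, h22]
      · obtain ⟨c, hcc⟩ := hshapeL e2 h21 h22 _ (heq ▸ hshape1 e1 h11 h12)
        exact absurd hcc (by simp)
      · obtain ⟨c, hcc⟩ := hshapeL e1 h11 h12 _ (heq.symm ▸ hshape1 e2 h21 h22)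
        exact absurd hcc (by simp)
      · have : Sym2.map (Sum.inl : V → V ⊕ Fin 2) e1 = Sym2.map (Sum.inl : V → V ⊕ Fin 2) e2 := by
          simpa only [hφ, if_neg h11, if_neg h12, if_neg h21, if_neg h22] using heq
        exact Sym2.map.injective Sum.inl_injective this
  calc (cutEdges G B).ncard = (φ '' cutEdges G B).ncard :=
        (Set.ncard_image_of_injOn hinj).symm
    _ ≤ (cutEdges (onePlus G u v x y) A).ncard := by
        apply Set.ncard_le_ncard _ (Set.toFinite _)
        rintro e' ⟨e, he, rfl⟩
        exact hmaps e he

end HandleExpansionAux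

section HandleExpansionAux2

lemma acyclic_side_small {V : Type} [Fintype V] {G : SimpleGraph V} (hcub : IsCubic G)
    {B : Set V} (hBne : B.Nonempty) (hcut : (cutEdges G B).ncard ≤ 4)
    (hnc : ¬ HasCircuit (G.induce B)) : B.ncard ≤ 2 := by
  classical
  set Bf := B.toFinset with hBf
  set H := G.induce B with hH
  have hac : H.IsAcyclic := by
    intro c w hw
    exact hnc ⟨c, w, hw⟩
  haveI : Nonempty ↥B := hBne.to_subtype
  have hfb : H.edgeFinset.card + 1 ≤ Fintype.card ↥B := forest_edge_bound hac
  have hdeg3 : ∀ a : V, (Finset.univ.filter (fun b => G.Adj a b)).card = 3 := by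
    intro a
    rw [← SimpleGraph.neighborFinset_eq_filter]
    have h1 : (G.neighborSet a).ncard = (G.neighborFinset a).card := by
      rw [SimpleGraph.neighborFinset_def, Set.ncard_eq_toFinset_card']
    rw [← h1]
    exact hcub a
  set nin : V → ℕ := fun a => (Bf.filter (fun b => G.Adj a b)).card with hnin
  set nout : V → ℕ := fun a => (Bfᶜ.filter (fun b => G.Adj a b)).card with hnout
  have claim3 : ∀ a : V, nin a + nout a = 3 := by
    intro a
    rw [hnin, hnout]
    simp only
    rw [← Finset.card_union_of_disjoint
      (Finset.disjoint_filter_filter disjoint_compl_right), ← Finset.filter_union,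
      Finset.union_compl]
    exact hdeg3 a
  have claim1 : ∑ a ∈ Bf, nin a = 2 * H.edgeFinset.card := by
    rw [← SimpleGraph.sum_degrees_eq_twice_card_edges]
    rw [Finset.sum_subtype Bf (fun b => Set.mem_toFinset) (fun a => nin a)]
    apply Finset.sum_congr rfl
    intro t _
    show nin ↑t = H.degree t
    rw [hnin]
    simp only
    refine Eq.symm ?_
    unfold SimpleGraph.degree
    apply Finset.card_bij (fun (s : ↥B) (_ : s ∈ H.neighborFinset t) => (s : V))
    · intro s hs
      rw [SimpleGraph.mem_neighborFinset] at hs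
      rw [Finset.mem_filter]
      exact ⟨Set.mem_toFinset.mpr s.2, hs⟩
    · intro s1 _ s2 _ h
      exact Subtype.ext h
    · intro b hb
      rw [Finset.mem_filter] at hb
      refine ⟨⟨b, Set.mem_toFinset.mp hb.1⟩, ?_, rfl⟩
      rw [SimpleGraph.mem_neighborFinset]
      exact hb.2
  have claim2 : ∑ a ∈ Bf, nout a = (cutEdges G B).ncard := by
    set P := (Bf ×ˢ Bfᶜ).filter (fun p => G.Adj p.1 p.2) with hP
    have h1 : P.card = ∑ a ∈ Bf, nout a := by
      rw [Finset.card_eq_sum_card_fiberwise (f := Prod.fst) (t := Bf) ?side]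
      case side =>
        intro p hp
        rw [hP, Finset.mem_coe, Finset.mem_filter, Finset.mem_product] at hp
        exact hp.1.1
      apply Finset.sum_congr rfl
      intro a ha
      rw [hnout]
      simp only
      apply Finset.card_bij (fun p (_ : p ∈ P.filter (fun q => q.1 = a)) => p.2)
      · intro p hp
        rw [Finset.mem_filter, hP, Finset.mem_filter, Finset.mem_product] at hp
        rw [Finset.mem_filter]
        refine ⟨hp.1.1.2, ?_⟩
        rw [← hp.2]
        exact hp.1.2
      · intro p hp q hq hpq
        rw [Finset.mem_filter] at hp hq
        exact Prod.ext (hp.2.trans hq.2.symm) hpq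
      · intro b hb
        rw [Finset.mem_filter] at hb
        refine ⟨(a, b), ?_, rfl⟩
        rw [Finset.mem_filter, hP, Finset.mem_filter, Finset.mem_product]
        exact ⟨⟨⟨ha, hb.1⟩, hb.2⟩, rfl⟩
    have hfin : (cutEdges G B).Finite := Set.toFinite _
    have h2 : P.card = hfin.toFinset.card := by
      apply Finset.card_bij (fun p (_ : p ∈ P) => s(p.1, p.2))
      · intro p hp
        rw [hP, Finset.mem_filter, Finset.mem_product] at hp
        rw [Set.Finite.mem_toFinset]
        exact ⟨p.1, p.2, Set.mem_toFinset.mp hp.1.1,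
          fun hc => (Finset.mem_compl.mp hp.1.2) (Set.mem_toFinset.mpr hc), hp.2, rfl⟩
      · intro p hp q hq hpq
        rw [hP, Finset.mem_filter, Finset.mem_product] at hp hq
        rcases Sym2.eq_iff.mp hpq with ⟨h1, h2⟩ | ⟨h1, h2⟩
        · exact Prod.ext h1 h2
        · exfalso
          apply Finset.mem_compl.mp hq.1.2
          rw [← h1]
          exact hp.1.1
      · intro e he
        rw [Set.Finite.mem_toFinset] at he
        obtain ⟨a, b, ha, hb, hadj, hee⟩ := he
        refine ⟨(a, b), ?_, hee.symm⟩
        rw [hP, Finset.mem_filter, Finset.mem_product]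
        exact ⟨⟨Set.mem_toFinset.mpr ha, Finset.mem_compl.mpr
          (fun hc => hb (Set.mem_toFinset.mp hc))⟩, hadj⟩
    rw [← h1, h2, Set.ncard_eq_toFinset_card']
    congr 1
    ext e
    rw [Set.Finite.mem_toFinset, Set.mem_toFinset]
  -- final count
  have hsum : ∑ a ∈ Bf, (nin a + nout a) = 3 * Bf.card := by
    rw [Finset.sum_congr rfl (fun a _ => claim3 a), Finset.sum_const, smul_eq_mul,
      Nat.mul_comm]
  rw [Finset.sum_add_distrib, claim1, claim2] at hsum
  have hcardB : Bf.card = Fintype.card ↥B := Set.toFinset_card B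
  have hncard : B.ncard = Bf.card := Set.ncard_eq_toFinset_card' B
  omega

lemma cutEdges_compl {V : Type} (G : SimpleGraph V) (B : Set V) :
    cutEdges G Bᶜ = cutEdges G B := by
  ext e
  constructor
  · rintro ⟨a, b, ha, hb, hadj, rfl⟩
    exact ⟨b, a, Set.not_notMem.mp hb, ha, hadj.symm, Sym2.eq_swap⟩
  · rintro ⟨a, b, ha, hb, hadj, rfl⟩
    exact ⟨b, a, hb, fun hc => hc ha, hadj.symm, Sym2.eq_swap⟩

end HandleExpansionAux2

/-- a handle expansion of a cyclically 5-connected cubic graph is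
cyclically 5-connected. -/
theorem handleExpansion_cyclically5Connected
    {V : Type} [Fintype V] (G : SimpleGraph V) (hcub : IsCubic G)
    (h5 : CyclicallyKConnected G 5) (u v x y : V)
    (huv : G.Adj u v) (hxy : G.Adj x y) (hef : s(u, v) ≠ s(x, y))
    (hux : u ≠ x) (huy : u ≠ y) (hvx : v ≠ x) (hvy : v ≠ y)
    (hnoadj : ∀ a b : V, G.Adj a b → s(a, b) ≠ s(u, v) → s(a, b) ≠ s(x, y) →
      ¬ ((a = u ∨ a = v ∨ b = u ∨ b = v) ∧ (a = x ∨ a = y ∨ b = x ∨ b = y))) :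
    CyclicallyKConnected (onePlus G u v x y) 5 := by
  classical
  obtain ⟨hG3, hcard10, hcutG⟩ := h5
  have hcV : 10 ≤ Fintype.card V := by omega
  refine ⟨⟨?_, ?_⟩, ?_, ?_⟩
  · rw [Fintype.card_sum]
    simp only [Fintype.card_fin]
    omega
  · intro S hS
    exact op_connectivity hcub hG3 hcV huv hxy hux huy hvx hvy hnoadj S hS
  · rw [Fintype.card_sum]
    simp only [Fintype.card_fin]
    omega
  · intro A hAne hAcne hcutlt
    by_contra hcon
    push_neg at hcon
    obtain ⟨hC1, hC2⟩ := hcon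
    set B : Set V := {a : V | Sum.inl a ∈ A} with hB
    -- both sides have at least three inl vertices
    have h3B : 3 ≤ B.ncard := by
      obtain ⟨a₁, a₂, a₃, h12, h13, h23, m1, m2, m3⟩ :=
        circuit_three_inl huv hxy hux huy hvx hvy hnoadj hC1
      apply triple_ncard_le (Set.toFinite B) h12 h13 h23
      intro r hr
      rcases hr with rfl | rfl | rfl
      · exact m1
      · exact m2
      · exact m3
    have h3Bc : 3 ≤ Bᶜ.ncard := by
      obtain ⟨a₁, a₂, a₃, h12, h13, h23, m1, m2, m3⟩ :=
        circuit_three_inl huv hxy hux huy hvx hvy hnoadj hC2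
      apply triple_ncard_le (Set.toFinite Bᶜ) h12 h13 h23
      intro r hr
      have hBc : ∀ a : V, Sum.inl a ∈ Aᶜ → a ∈ Bᶜ := fun a ha hc => ha hc
      rcases hr with rfl | rfl | rfl
      · exact hBc _ m1
      · exact hBc _ m2
      · exact hBc _ m3
    have hBne : B.Nonempty := Set.nonempty_of_ncard_ne_zero (by omega)
    have hBcne : Bᶜ.Nonempty := Set.nonempty_of_ncard_ne_zero (by omega)
    have hcutB : (cutEdges G B).ncard ≤ 4 := by
      have hct := cut_transfer (G := G) (u := u) (v := v) (x := x) (y := y) hef A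
      rw [← hB] at hct
      omega
    rcases hcutG B hBne hBcne (by omega) with hnc | hnc
    · have := acyclic_side_small hcub hBne hcutB hnc
      omega
    · have hcutBc : (cutEdges G Bᶜ).ncard ≤ 4 := by
        rw [cutEdges_compl]
        exact hcutB
      have := acyclic_side_small hcub hBcne hcutBc hnc
      omega
end
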